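/- arXiv:1709.04161 — 14 statements merged into one kernel-verified Lean document; each statement's English description precedes it below -/
import Mathlib

section
/- Let m ≥ 1, let x : Fin m → ℕ satisfy x j ≥ 1 for all j, and let z : ℕ satisfy ∑ j, x j = 2·z. Consider the m+1 jobs indexed by Fin m ⊕ Unit with processing times p (inl j) = x j and p (inr) = 1. Then there exists a subset S ⊆ Fin m with ∑_{j ∈ S} x j = z if and only if there exists a schedule σ of these m+1 jobs such that ∑ j, x j · C (inl j) ≤ z + ∑ i, ∑_{j ≤ i} x i · x j and C (inr) ≤ z + 1. -/
/-- The completion time of job `i` in the schedule `σ` (a bijection from jobs to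
positions) with processing times `p`: the sum of processing times of all jobs
scheduled at position at most the position of `i`. -/
def completionTime {ι : Type*} [Fintype ι] (p : ι → ℕ)
    (σ : ι ≃ Fin (Fintype.card ι)) (i : ι) : ℕ :=
  ∑ j ∈ Finset.univ.filter (fun j => σ j ≤ σ i), p j

lemma two_mul_sym {m : ℕ} (x : Fin m → ℕ) {α : Type*} [LinearOrder α]
    (f : Fin m → α) (hf : Function.Injective f) :
    2 * ∑ i, ∑ j ∈ Finset.univ.filter (fun j => f j ≤ f i), x i * x j
      = (∑ i, x i)^2 + ∑ i, (x i)^2 := by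
  have h1 : ∑ i, ∑ j ∈ Finset.univ.filter (fun j => f j ≤ f i), x i * x j
      = ∑ i, ∑ j, if f j ≤ f i then x i * x j else 0 := by
    simp [Finset.sum_filter]
  have h2 : ∑ i, ∑ j ∈ Finset.univ.filter (fun j => f j ≤ f i), x i * x j
      = ∑ i : Fin m, ∑ j : Fin m, if f i ≤ f j then x j * x i else 0 := by
    rw [h1, Finset.sum_comm]
  have key : ∀ i j : Fin m,
      (if f j ≤ f i then x i * x j else 0) + (if f i ≤ f j then x j * x i else 0)
        = x i * x j + (if i = j then x i * x j else 0) := by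
    intro i j
    rcases lt_trichotomy (f i) (f j) with h | h | h
    · have hij : i ≠ j := fun e => absurd (congrArg f e) (ne_of_lt h)
      simp [not_le.2 h, le_of_lt h, hij, mul_comm]
    · have hij : i = j := hf h
      subst hij; simp
    · have hij : i ≠ j := fun e => absurd (congrArg f e) (ne_of_gt h)
      simp [not_le.2 h, le_of_lt h, hij]
  calc 2 * ∑ i, ∑ j ∈ Finset.univ.filter (fun j => f j ≤ f i), x i * x j
      = (∑ i, ∑ j, if f j ≤ f i then x i * x j else 0)
        + (∑ i : Fin m, ∑ j : Fin m, if f i ≤ f j then x j * x i else 0) := by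
        rw [two_mul]; rw [← h1, ← h2]
    _ = ∑ i : Fin m, ∑ j : Fin m,
        ((if f j ≤ f i then x i * x j else 0) + (if f i ≤ f j then x j * x i else 0)) := by
        rw [← Finset.sum_add_distrib]
        exact Finset.sum_congr rfl fun i _ => by rw [← Finset.sum_add_distrib]
    _ = ∑ i : Fin m, ∑ j : Fin m, (x i * x j + if i = j then x i * x j else 0) := by
        exact Finset.sum_congr rfl fun i _ => Finset.sum_congr rfl fun j _ => key i j
    _ = (∑ i, x i)^2 + ∑ i, (x i)^2 := by
        simp only [Finset.sum_add_distrib]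
        congr 1
        · rw [sq, Finset.sum_mul_sum]
        · exact Finset.sum_congr rfl fun i _ => by simp [sq, Finset.sum_ite_eq]

lemma sym_indep {m : ℕ} (x : Fin m → ℕ) {α : Type*} [LinearOrder α]
    (f : Fin m → α) (hf : Function.Injective f) :
    ∑ i, ∑ j ∈ Finset.univ.filter (fun j => f j ≤ f i), x i * x j
      = ∑ i, ∑ j ∈ Finset.Iic i, x i * x j := by
  have h3 : ∀ i : Fin m, Finset.Iic i = Finset.univ.filter (fun j => j ≤ i) := by
    intro i; ext j; simp
  have h1 := two_mul_sym x f hf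
  have h2 := two_mul_sym x (id : Fin m → Fin m) Function.injective_id
  simp only [id] at h2
  have := h1.trans h2.symm
  have h4 : ∑ i, ∑ j ∈ Finset.Iic i, x i * x j
      = ∑ i : Fin m, ∑ j ∈ Finset.univ.filter (fun j => j ≤ i), x i * x j := by
    exact Finset.sum_congr rfl fun i _ => by rw [h3]
  omega

lemma completion_formula {m : ℕ} (x : Fin m → ℕ)
    (σ : (Fin m ⊕ Unit) ≃ Fin (Fintype.card (Fin m ⊕ Unit))) (t : Fin m ⊕ Unit) :
    completionTime (Sum.elim x fun _ => 1) σ t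
      = (∑ j ∈ Finset.univ.filter (fun j => σ (Sum.inl j) ≤ σ t), x j)
        + (if σ (Sum.inr ()) ≤ σ t then 1 else 0) := by
  unfold completionTime
  rw [Finset.sum_filter, Fintype.sum_sum_type]
  simp [Finset.sum_filter]
  by_cases h : σ (Sum.inr ()) ≤ σ t <;> simp [h, Finset.filter_singleton]

lemma unit_completion {m : ℕ} (x : Fin m → ℕ)
    (σ : (Fin m ⊕ Unit) ≃ Fin (Fintype.card (Fin m ⊕ Unit))) :
    completionTime (Sum.elim x fun _ => 1) σ (Sum.inr ())
      = 1 + ∑ i ∈ Finset.univ.filter (fun i => σ (Sum.inl i) < σ (Sum.inr ())), x i := by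
  rw [completion_formula]
  have h : ∀ j : Fin m, σ (Sum.inl j) ≤ σ (Sum.inr ()) ↔ σ (Sum.inl j) < σ (Sum.inr ()) := by
    intro j
    constructor
    · intro h
      exact lt_of_le_of_ne h (fun e => by simpa using σ.injective e)
    · exact le_of_lt
  rw [if_pos le_rfl, Finset.filter_congr (fun j _ => h j)]
  omega

lemma weighted_sum_eq {m : ℕ} (x : Fin m → ℕ)
    (σ : (Fin m ⊕ Unit) ≃ Fin (Fintype.card (Fin m ⊕ Unit))) :
    ∑ i, x i * completionTime (Sum.elim x fun _ => 1) σ (Sum.inl i)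
      = (∑ i, ∑ j ∈ Finset.Iic i, x i * x j)
        + ∑ i ∈ Finset.univ.filter (fun i => ¬ σ (Sum.inl i) < σ (Sum.inr ())), x i := by
  have hinj : Function.Injective (fun j : Fin m => σ (Sum.inl j)) :=
    fun a b h => by simpa using σ.injective h
  calc ∑ i, x i * completionTime (Sum.elim x fun _ => 1) σ (Sum.inl i)
      = ∑ i : Fin m, ((∑ j ∈ Finset.univ.filter
            (fun j => σ (Sum.inl j) ≤ σ (Sum.inl i)), x i * x j)
          + (if σ (Sum.inr ()) ≤ σ (Sum.inl i) then x i else 0)) := by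
        refine Finset.sum_congr rfl fun i _ => ?_
        rw [completion_formula, Nat.mul_add, Finset.mul_sum]
        by_cases h : σ (Sum.inr ()) ≤ σ (Sum.inl i) <;> simp [h]
    _ = (∑ i, ∑ j ∈ Finset.Iic i, x i * x j)
        + ∑ i ∈ Finset.univ.filter (fun i => ¬ σ (Sum.inl i) < σ (Sum.inr ())), x i := by
        rw [Finset.sum_add_distrib]
        congr 1
        · exact sym_indep x (fun j : Fin m => σ (Sum.inl j)) hinj
        · rw [← Finset.sum_filter]
          refine Finset.sum_congr (Finset.filter_congr fun i _ => ?_) fun _ _ => rfl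
          simp [not_lt]

lemma exists_schedule {m : ℕ} (S : Finset (Fin m)) :
    ∃ σ : (Fin m ⊕ Unit) ≃ Fin (Fintype.card (Fin m ⊕ Unit)),
      ∀ i : Fin m, (σ (Sum.inl i) < σ (Sum.inr ()) ↔ i ∈ S) := by
  classical
  let eS := Fintype.equivFin {a : Fin m // a ∈ S}
  let eC := Fintype.equivFin {a : Fin m // a ∉ S}
  let eU := Fintype.equivFin Unit
  let e1 : (Fin m ⊕ Unit) ≃ (({a : Fin m // a ∈ S} ⊕ {a : Fin m // a ∉ S}) ⊕ Unit) :=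
    Equiv.sumCongr (Equiv.sumCompl (· ∈ S)).symm (Equiv.refl Unit)
  let e2 := (Equiv.sumAssoc {a : Fin m // a ∈ S} {a : Fin m // a ∉ S} Unit).trans
    (Equiv.sumCongr (Equiv.refl _) (Equiv.sumComm _ _))
  let e3 := Equiv.sumCongr eS (Equiv.sumCongr eU eC)
  let e4 : (Fin (Fintype.card {a : Fin m // a ∈ S}) ⊕
      (Fin (Fintype.card Unit) ⊕ Fin (Fintype.card {a : Fin m // a ∉ S})))
      ≃ Fin (Fintype.card {a : Fin m // a ∈ S} +
        (Fintype.card Unit + Fintype.card {a : Fin m // a ∉ S})) :=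
    (Equiv.sumCongr (Equiv.refl _) finSumFinEquiv).trans finSumFinEquiv
  let e := ((e1.trans e2).trans e3).trans e4
  have hcard : Fintype.card {a : Fin m // a ∈ S} +
      (Fintype.card Unit + Fintype.card {a : Fin m // a ∉ S})
        = Fintype.card (Fin m ⊕ Unit) := by
    have := Fintype.card_congr e
    simpa using this.symm
  refine ⟨e.trans (finCongr hcard), ?_⟩
  intro i
  have hu : ((e.trans (finCongr hcard)) (Sum.inr ())).val
      = Fintype.card {a : Fin m // a ∈ S} := by
    simp only [e, e1, e2, e3, e4, Equiv.trans_apply, Equiv.sumCongr_apply, Equiv.sumAssoc_apply_inl_inl, Equiv.sumAssoc_apply_inl_inr, Equiv.sumAssoc_apply_inr, Equiv.sumComm_apply, Sum.swap_inl, Sum.swap_inr, Sum.map_inl, Sum.map_inr, Equiv.refl_apply, finSumFinEquiv_apply_left, finSumFinEquiv_apply_right, finCongr_apply_coe, Fin.val_natAdd, Fin.val_castAdd]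
    simp [Equiv.sumCompl_symm_apply_of_pos, Equiv.sumCompl_symm_apply_of_neg, *]
  by_cases hi : i ∈ S
  · have hl : ((e.trans (finCongr hcard)) (Sum.inl i)).val
        = (eS ⟨i, hi⟩).val := by
      simp only [e, e1, e2, e3, e4, Equiv.sumCompl_symm_apply_of_pos hi, Equiv.trans_apply, Equiv.sumCongr_apply, Equiv.sumAssoc_apply_inl_inl, Equiv.sumAssoc_apply_inl_inr, Equiv.sumAssoc_apply_inr, Equiv.sumComm_apply, Sum.swap_inl, Sum.swap_inr, Sum.map_inl, Sum.map_inr, Equiv.refl_apply, finSumFinEquiv_apply_left, finSumFinEquiv_apply_right, finCongr_apply_coe, Fin.val_natAdd, Fin.val_castAdd]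
    rw [Fin.lt_def, hu, hl]
    simpa [hi] using (eS ⟨i, hi⟩).isLt
  · have hl : ((e.trans (finCongr hcard)) (Sum.inl i)).val
        = Fintype.card {a : Fin m // a ∈ S} + (1 + (eC ⟨i, hi⟩).val) := by
      simp only [e, e1, e2, e3, e4, Equiv.sumCompl_symm_apply_of_neg hi, Equiv.trans_apply, Equiv.sumCongr_apply, Equiv.sumAssoc_apply_inl_inl, Equiv.sumAssoc_apply_inl_inr, Equiv.sumAssoc_apply_inr, Equiv.sumComm_apply, Sum.swap_inl, Sum.swap_inr, Sum.map_inl, Sum.map_inr, Equiv.refl_apply, finSumFinEquiv_apply_left, finSumFinEquiv_apply_right, finCongr_apply_coe, Fin.val_natAdd, Fin.val_castAdd]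
      simp [Equiv.sumCompl_symm_apply_of_pos, Equiv.sumCompl_symm_apply_of_neg, *, Equiv.sumCongr_apply, finSumFinEquiv_apply_left, finSumFinEquiv_apply_right, Fin.val_natAdd, Fin.val_castAdd]
    rw [Fin.lt_def, hu, hl]
    simp [hi]

/-- Correctness of the Partition reduction for
`1 | ∑ w_j C_j^{(1)} ≤ A₁, ∑ C_j^{(2)} ≤ A₂ |` with a single agent-2 job. -/
theorem partition_reduction_sum_completion
    (m : ℕ) (hm : 1 ≤ m) (x : Fin m → ℕ) (hx : ∀ j, 1 ≤ x j)
    (z : ℕ) (hsum : ∑ j, x j = 2 * z) :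
    (∃ S : Finset (Fin m), ∑ j ∈ S, x j = z) ↔
    (∃ σ : (Fin m ⊕ Unit) ≃ Fin (Fintype.card (Fin m ⊕ Unit)),
      (∑ i, x i * completionTime (Sum.elim x fun _ => 1) σ (Sum.inl i)
          ≤ z + ∑ i, ∑ j ∈ Finset.Iic i, x i * x j) ∧
      completionTime (Sum.elim x fun _ => 1) σ (Sum.inr ()) ≤ z + 1) := by
  classical
  constructor
  · rintro ⟨S, hS⟩
    obtain ⟨σ, hσ⟩ := exists_schedule S
    have hfS : Finset.univ.filter (fun i => σ (Sum.inl i) < σ (Sum.inr ())) = S := by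
      ext i; simp [hσ i]
    have hsplit := Finset.sum_filter_add_sum_filter_not Finset.univ
      (fun i => σ (Sum.inl i) < σ (Sum.inr ())) x
    rw [hfS, hS, hsum] at hsplit
    refine ⟨σ, ?_, ?_⟩
    · rw [weighted_sum_eq]
      omega
    · rw [unit_completion, hfS, hS]; omega
  · rintro ⟨σ, h1, h2⟩
    refine ⟨Finset.univ.filter (fun i => σ (Sum.inl i) < σ (Sum.inr ())), ?_⟩
    rw [unit_completion] at h2
    rw [weighted_sum_eq] at h1
    have hsplit := Finset.sum_filter_add_sum_filter_not Finset.univ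
      (fun i => σ (Sum.inl i) < σ (Sum.inr ())) x
    rw [hsum] at hsplit
    omega
end

section
/- Let p : Fin n ⊕ Fin k → ℕ be processing times, w₂ : Fin k → ℕ weights for the agent-2 jobs, and A₁, A₂ : ℕ. If there exists a schedule σ of the jobs Fin n ⊕ Fin k with ∑ i, C (inl i) ≤ A₁ and ∑ j, w₂ j · C (inr j) ≤ A₂, then there exists such a schedule σ' (satisfying both bounds) in which the agent-1 jobs are processed in nondecreasing order of processing time, i.e., for all agent-1 jobs i, i', if σ' (inl i) < σ' (inl i') then p (inl i) ≤ p (inl i'). -/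
section aux

variable {ι : Type*} [Fintype ι] [DecidableEq ι] (p : ι → ℕ)
  (σ : ι ≃ Fin (Fintype.card ι)) (a b : ι)

lemma ct_swap (x : ι) :
    completionTime p ((Equiv.swap a b).trans σ) x
      = ∑ j ∈ Finset.univ.filter (fun j => σ j ≤ σ (Equiv.swap a b x)),
          p (Equiv.swap a b j) := by
  unfold completionTime
  refine Finset.sum_bijective (Equiv.swap a b) (Equiv.bijective _)
    (fun i => ?_) (fun i _ => ?_)
  · rw [Finset.mem_filter, Finset.mem_filter]; simp [Equiv.trans_apply]
  · simp

lemma sum_swap_eq {T : Finset ι} (h : a ∈ T ↔ b ∈ T) :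
    ∑ j ∈ T, p (Equiv.swap a b j) = ∑ j ∈ T, p j := by
  refine Finset.sum_equiv (Equiv.swap a b) (fun j => ?_) (fun j hj => rfl)
  rcases eq_or_ne j a with rfl | hja
  · simpa [Equiv.swap_apply_left] using h
  rcases eq_or_ne j b with rfl | hjb
  · simpa [Equiv.swap_apply_right] using h.symm
  · rw [Equiv.swap_apply_of_ne_of_ne hja hjb]

lemma ct_swap_le (hab : σ a < σ b) (hp : p b ≤ p a)
    (x : ι) (hxa : x ≠ a) (hxb : x ≠ b) :
    completionTime p ((Equiv.swap a b).trans σ) x ≤ completionTime p σ x := by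
  rw [ct_swap, Equiv.swap_apply_of_ne_of_ne hxa hxb]
  unfold completionTime
  set T := Finset.univ.filter (fun j => σ j ≤ σ x) with hT
  have hba : b ∈ T → a ∈ T := by
    intro hb
    simp only [hT, Finset.mem_filter, Finset.mem_univ, true_and] at hb ⊢
    exact le_of_lt (lt_of_lt_of_le hab hb)
  by_cases hb : b ∈ T
  · exact le_of_eq (sum_swap_eq p a b ⟨fun _ => hb, fun _ => hba hb⟩)
  by_cases ha : a ∈ T
  · have h1 : ∑ j ∈ T.erase a, p (Equiv.swap a b j) + p (Equiv.swap a b a)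
        = ∑ j ∈ T, p (Equiv.swap a b j) := Finset.sum_erase_add T _ ha
    have h2 : ∑ j ∈ T.erase a, p j + p a = ∑ j ∈ T, p j :=
      Finset.sum_erase_add T _ ha
    have h3 : ∀ j ∈ T.erase a, p (Equiv.swap a b j) = p j := by
      intro j hj
      have hja : j ≠ a := Finset.ne_of_mem_erase hj
      have hjb : j ≠ b := fun hjb => hb (hjb ▸ Finset.mem_of_mem_erase hj)
      rw [Equiv.swap_apply_of_ne_of_ne hja hjb]
    rw [← h1, ← h2, Finset.sum_congr rfl h3, Equiv.swap_apply_left]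
    exact Nat.add_le_add_left hp _
  · refine le_of_eq (Finset.sum_congr rfl (fun j hj => ?_))
    have hja : j ≠ a := fun hja => ha (hja ▸ hj)
    have hjb : j ≠ b := fun hjb => hb (hjb ▸ hj)
    rw [Equiv.swap_apply_of_ne_of_ne hja hjb]

lemma ct_swap_a (hab : σ a < σ b) :
    completionTime p ((Equiv.swap a b).trans σ) a = completionTime p σ b := by
  rw [ct_swap, Equiv.swap_apply_left]
  unfold completionTime
  refine sum_swap_eq p a b ?_
  simp only [Finset.mem_filter, Finset.mem_univ, true_and]
  exact ⟨fun _ => le_refl _, fun _ => le_of_lt hab⟩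

lemma ct_swap_b (hab : σ a < σ b) :
    completionTime p ((Equiv.swap a b).trans σ) b + p a
      = completionTime p σ a + p b := by
  rw [ct_swap, Equiv.swap_apply_right]
  unfold completionTime
  set T := Finset.univ.filter (fun j => σ j ≤ σ a) with hT
  have ha : a ∈ T := by simp [hT]
  have hb : b ∉ T := by
    simp only [hT, Finset.mem_filter, Finset.mem_univ, true_and]
    exact not_le.mpr hab
  have h1 : ∑ j ∈ T.erase a, p (Equiv.swap a b j) + p (Equiv.swap a b a)
      = ∑ j ∈ T, p (Equiv.swap a b j) := Finset.sum_erase_add T _ ha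
  have h2 : ∑ j ∈ T.erase a, p j + p a = ∑ j ∈ T, p j :=
    Finset.sum_erase_add T _ ha
  have h3 : ∀ j ∈ T.erase a, p (Equiv.swap a b j) = p j := by
    intro j hj
    have hja : j ≠ a := Finset.ne_of_mem_erase hj
    have hjb : j ≠ b := fun hjb => hb (hjb ▸ Finset.mem_of_mem_erase hj)
    rw [Equiv.swap_apply_of_ne_of_ne hja hjb]
  rw [← h1, Finset.sum_congr rfl h3, Equiv.swap_apply_left, ← h2]
  ring

end aux

/-- SPT-rule exchange lemma for `1 | ∑ C_j^{(1)} ≤ A₁, ∑ w_j^{(2)} C_j^{(2)} ≤ A₂ |`: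
if a feasible schedule exists, then one exists in which the agent-1 jobs are
processed in nondecreasing order of processing time. -/
theorem spt_exchange
    (n k : ℕ) (p : Fin n ⊕ Fin k → ℕ) (w₂ : Fin k → ℕ) (A₁ A₂ : ℕ)
    (h : ∃ σ : (Fin n ⊕ Fin k) ≃ Fin (Fintype.card (Fin n ⊕ Fin k)),
      (∑ i, completionTime p σ (Sum.inl i) ≤ A₁) ∧
      (∑ j, w₂ j * completionTime p σ (Sum.inr j) ≤ A₂)) :
    ∃ σ' : (Fin n ⊕ Fin k) ≃ Fin (Fintype.card (Fin n ⊕ Fin k)),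
      (∑ i, completionTime p σ' (Sum.inl i) ≤ A₁) ∧
      (∑ j, w₂ j * completionTime p σ' (Sum.inr j) ≤ A₂) ∧
      (∀ i i' : Fin n, σ' (Sum.inl i) < σ' (Sum.inl i') →
        p (Sum.inl i) ≤ p (Sum.inl i')) := by
  classical
  obtain ⟨σ, hσF, hmin⟩ := Finset.exists_min_image
    (Finset.univ.filter (fun σ : (Fin n ⊕ Fin k) ≃ Fin (Fintype.card (Fin n ⊕ Fin k)) =>
      (∑ i, completionTime p σ (Sum.inl i) ≤ A₁) ∧
      (∑ j, w₂ j * completionTime p σ (Sum.inr j) ≤ A₂)))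
    (fun σ => ∑ i, completionTime p σ (Sum.inl i))
    (by obtain ⟨σ, hσ⟩ := h; exact ⟨σ, by simp [hσ.1, hσ.2]⟩)
  simp only [Finset.mem_filter, Finset.mem_univ, true_and] at hσF
  refine ⟨σ, hσF.1, hσF.2, ?_⟩
  intro i i' hlt
  by_contra hpp
  push_neg at hpp
  have hp : p (Sum.inl i') < p (Sum.inl i) := hpp
  have hb' := ct_swap_b p σ (Sum.inl i) (Sum.inl i') hlt
  have ha' := ct_swap_a p σ (Sum.inl i) (Sum.inl i') hlt
  -- agent-2 sum does not increase
  have h2 : ∑ j, w₂ j * completionTime p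
        ((Equiv.swap (Sum.inl i) (Sum.inl i')).trans σ) (Sum.inr j)
      ≤ ∑ j, w₂ j * completionTime p σ (Sum.inr j) := by
    refine Finset.sum_le_sum (fun j _ => Nat.mul_le_mul_left _ ?_)
    exact ct_swap_le p σ _ _ hlt (le_of_lt hp) (Sum.inr j) (by simp) (by simp)
  -- agent-1 sum strictly decreases
  have h1 : ∑ m, completionTime p
        ((Equiv.swap (Sum.inl i) (Sum.inl i')).trans σ) (Sum.inl m)
      < ∑ m, completionTime p σ (Sum.inl m) := by
    have hre : ∑ m, completionTime p
          ((Equiv.swap (Sum.inl i) (Sum.inl i')).trans σ) (Sum.inl m)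
        = ∑ m, completionTime p
          ((Equiv.swap (Sum.inl i) (Sum.inl i')).trans σ)
          (Sum.inl (Equiv.swap i i' m)) :=
      (Equiv.sum_comp (Equiv.swap i i') _).symm
    rw [hre]
    refine Finset.sum_lt_sum (fun m _ => ?_) ⟨i, Finset.mem_univ i, ?_⟩
    · rcases eq_or_ne m i with rfl | hmi
      · rw [Equiv.swap_apply_left]; omega
      rcases eq_or_ne m i' with rfl | hmi'
      · rw [Equiv.swap_apply_right]; omega
      · rw [Equiv.swap_apply_of_ne_of_ne hmi hmi']
        exact ct_swap_le p σ _ _ hlt (le_of_lt hp) (Sum.inl m)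
          (fun hc => hmi (Sum.inl_injective hc))
          (fun hc => hmi' (Sum.inl_injective hc))
    · rw [Equiv.swap_apply_left]; omega
  -- the swapped schedule is feasible, contradicting minimality
  have hmem : (Equiv.swap (Sum.inl i) (Sum.inl i')).trans σ ∈
      Finset.univ.filter (fun σ : (Fin n ⊕ Fin k) ≃ Fin (Fintype.card (Fin n ⊕ Fin k)) =>
        (∑ i, completionTime p σ (Sum.inl i) ≤ A₁) ∧
        (∑ j, w₂ j * completionTime p σ (Sum.inr j) ≤ A₂)) := by
    simp only [Finset.mem_filter, Finset.mem_univ, true_and]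
    exact ⟨le_trans (le_of_lt h1) hσF.1, le_trans h2 hσF.2⟩
  have := hmin _ hmem
  omega
end

section
/- Let p₁ : Fin n → ℕ and p₂ : Fin k → ℕ be processing times and let x : Fin k → ℕ satisfy x j ≤ n for all j. In any schedule σ of the jobs Fin n ⊕ Fin k in which the agent-1 jobs appear in index order, the agent-2 jobs appear in index order, and for each j exactly x j agent-1 jobs are scheduled before agent-2 job j, the total completion time of the agent-1 jobs satisfies ∑ i, C (inl i) = ∑_{j=1}^{n} (n − j + 1) · p₁ j + ∑_{j=1}^{k} (n − x j) · p₂ j. -/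
/-- Lemma 3: in any schedule where the agent-1 jobs (processing times `p₁`) appear
in index order, the agent-2 jobs (processing times `p₂`) appear in index order,
and exactly `x j` agent-1 jobs precede agent-2 job `j`, the total completion
time of the agent-1 jobs equals
`∑_j (n - j + 1)·p₁ j + ∑_j (n - x j)·p₂ j` (indices of `Fin n` are 0-based, so
the coefficient of `p₁ j` is `n - j`). -/
theorem agent1_total_completion_formula
    (n k : ℕ) (p₁ : Fin n → ℕ) (p₂ : Fin k → ℕ) (x : Fin k → ℕ)
    (hx : ∀ j, x j ≤ n)
    (σ : (Fin n ⊕ Fin k) ≃ Fin (Fintype.card (Fin n ⊕ Fin k)))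
    (h1 : ∀ i i' : Fin n, i < i' → σ (Sum.inl i) < σ (Sum.inl i'))
    (h2 : ∀ j j' : Fin k, j < j' → σ (Sum.inr j) < σ (Sum.inr j'))
    (h3 : ∀ j : Fin k,
      (Finset.univ.filter (fun i : Fin n => σ (Sum.inl i) < σ (Sum.inr j))).card
        = x j) :
    ∑ i, completionTime (Sum.elim p₁ p₂) σ (Sum.inl i)
      = (∑ j : Fin n, (n - (j : ℕ)) * p₁ j) + ∑ j : Fin k, (n - x j) * p₂ j := by
  have hmono : StrictMono (fun i : Fin n => σ (Sum.inl i)) := fun a b h => h1 a b h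
  have key : ∑ i, completionTime (Sum.elim p₁ p₂) σ (Sum.inl i)
      = ∑ j : Fin n ⊕ Fin k,
          (Finset.univ.filter (fun i : Fin n => σ j ≤ σ (Sum.inl i))).card
            * Sum.elim p₁ p₂ j := by
    simp only [completionTime, Finset.sum_filter]
    rw [Finset.sum_comm]
    refine Finset.sum_congr rfl fun j _ => ?_
    rw [← Finset.sum_filter, Finset.sum_const, smul_eq_mul]
  rw [key, Fintype.sum_sum_type]
  congr 1
  · refine Finset.sum_congr rfl fun j _ => ?_
    have : (Finset.univ.filter (fun i : Fin n => σ (Sum.inl j) ≤ σ (Sum.inl i)))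
        = Finset.Ici j := by
      ext i
      simp [hmono.le_iff_le]
    simp [this, Fin.card_Ici]
  · refine Finset.sum_congr rfl fun j _ => ?_
    have : (Finset.univ.filter (fun i : Fin n => σ (Sum.inr j) ≤ σ (Sum.inl i)))
        = Finset.univ \ Finset.univ.filter (fun i : Fin n => σ (Sum.inl i) < σ (Sum.inr j)) := by
      rw [← Finset.filter_not]
      simp [not_lt]
    rw [this, Finset.card_sdiff_of_subset (Finset.filter_subset _ _), h3 j]
    simp
end

section
/- Let n, x : ℕ with x ≤ n, let p : ℕ → ℝ satisfy p 0 = 0 and p (i−1) ≤ p i for all 1 ≤ i ≤ n, and let y : ℕ → ℝ satisfy, for every i with 1 ≤ i ≤ n, both y i ≥ 0 and y i ≥ ((x : ℝ) − i + 1) · (p i − p (i−1)). Then ∑_{i=1}^{n} y i ≥ ∑_{i=1}^{x} p i. -/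
lemma telescope_aux (p : ℕ → ℝ) :
    ∀ m : ℕ, ∑ i ∈ Finset.Icc 1 m, (p i - p (i - 1)) = p m - p 0 := by
  intro m
  induction m with
  | zero => simp
  | succ k ih =>
      rw [Finset.sum_Icc_succ_top (Nat.one_le_iff_ne_zero.mpr (Nat.succ_ne_zero k)), ih]
      simp

lemma abel_aux (p : ℕ → ℝ) (hp0 : p 0 = 0) :
    ∀ m : ℕ, ∑ i ∈ Finset.Icc 1 m, ((m : ℝ) - i + 1) * (p i - p (i - 1))
        = ∑ i ∈ Finset.Icc 1 m, p i := by
  intro m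
  induction m with
  | zero => simp
  | succ k ih =>
      have h1 : ∀ i : ℕ, ((k + 1 : ℕ) : ℝ) - i + 1 = ((k : ℝ) - i + 1) + 1 := by
        intro i; push_cast; ring
      have expand : ∑ i ∈ Finset.Icc 1 (k + 1), (((k + 1 : ℕ) : ℝ) - i + 1) * (p i - p (i - 1))
          = ∑ i ∈ Finset.Icc 1 (k + 1), ((k : ℝ) - i + 1) * (p i - p (i - 1))
            + ∑ i ∈ Finset.Icc 1 (k + 1), (p i - p (i - 1)) := by
        rw [← Finset.sum_add_distrib]
        apply Finset.sum_congr rfl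
        intro i _
        rw [h1 i]; ring
      rw [expand, telescope_aux, Finset.sum_Icc_succ_top (Nat.one_le_iff_ne_zero.mpr (Nat.succ_ne_zero k)), ih,
        Finset.sum_Icc_succ_top (Nat.one_le_iff_ne_zero.mpr (Nat.succ_ne_zero k))]
      have : ((k : ℝ) - ((k + 1 : ℕ) : ℝ) + 1) = 0 := by push_cast; ring
      rw [this, hp0]
      simp

/-- Core of Lemma 4: if `p 0 = 0`, `p 1 ≤ ⋯ ≤ p n`, `x ≤ n`, and for every
`1 ≤ i ≤ n` we have `y i ≥ 0` and `y i ≥ (x - i + 1)·(p i - p (i-1))`, then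
`∑_{i=1}^{n} y i ≥ ∑_{i=1}^{x} p i`. -/
theorem milp_steps_lower_bound
    (n x : ℕ) (hx : x ≤ n) (p : ℕ → ℝ) (hp0 : p 0 = 0)
    (hmono : ∀ i, 1 ≤ i → i ≤ n → p (i - 1) ≤ p i)
    (y : ℕ → ℝ)
    (hy0 : ∀ i, 1 ≤ i → i ≤ n → 0 ≤ y i)
    (hy : ∀ i, 1 ≤ i → i ≤ n → ((x : ℝ) - i + 1) * (p i - p (i - 1)) ≤ y i) :
    ∑ i ∈ Finset.Icc 1 x, p i ≤ ∑ i ∈ Finset.Icc 1 n, y i := by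
  have step1 : ∑ i ∈ Finset.Icc 1 x, p i
      ≤ ∑ i ∈ Finset.Icc 1 x, y i := by
    rw [← abel_aux p hp0 x]
    apply Finset.sum_le_sum
    intro i hi
    simp only [Finset.mem_Icc] at hi
    exact hy i hi.1 (hi.2.trans hx)
  have step2 : ∑ i ∈ Finset.Icc 1 x, y i ≤ ∑ i ∈ Finset.Icc 1 n, y i := by
    apply Finset.sum_le_sum_of_subset_of_nonneg
    · exact Finset.Icc_subset_Icc_right hx
    · intro i hi _
      simp only [Finset.mem_Icc] at hi
      exact hy0 i hi.1 hi.2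
  linarith
end

section
/- Let p : Fin n ⊕ Fin k → ℕ be processing times with p (inl i) = 1 for every agent-1 job i, let w₁ : Fin n → ℕ and w₂ : Fin k → ℕ be weights, and let A₁, A₂ : ℕ. If there exists a schedule σ with ∑ i, w₁ i · C (inl i) ≤ A₁ and ∑ j, w₂ j · C (inr j) ≤ A₂, then there exists such a schedule σ' (satisfying both bounds) in which the agent-1 jobs are processed in nonincreasing weight order, i.e., for all agent-1 jobs i, i', if σ' (inl i) < σ' (inl i') then w₁ i ≥ w₁ i'. -/
/-- Weight-order exchange lemma (Lemma 5) for
`1 | p_j^{(1)} = 1, ∑ w_j^{(1)} C_j^{(1)} ≤ A₁, ∑ w_j^{(2)} C_j^{(2)} ≤ A₂ |`: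
if all agent-1 jobs have unit processing time and a feasible schedule exists,
then one exists in which the agent-1 jobs are processed in nonincreasing
weight order. -/
theorem weight_order_exchange
    (n k : ℕ) (p : Fin n ⊕ Fin k → ℕ) (hp : ∀ i : Fin n, p (Sum.inl i) = 1)
    (w₁ : Fin n → ℕ) (w₂ : Fin k → ℕ) (A₁ A₂ : ℕ)
    (h : ∃ σ : (Fin n ⊕ Fin k) ≃ Fin (Fintype.card (Fin n ⊕ Fin k)),
      (∑ i, w₁ i * completionTime p σ (Sum.inl i) ≤ A₁) ∧
      (∑ j, w₂ j * completionTime p σ (Sum.inr j) ≤ A₂)) :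
    ∃ σ' : (Fin n ⊕ Fin k) ≃ Fin (Fintype.card (Fin n ⊕ Fin k)),
      (∑ i, w₁ i * completionTime p σ' (Sum.inl i) ≤ A₁) ∧
      (∑ j, w₂ j * completionTime p σ' (Sum.inr j) ≤ A₂) ∧
      (∀ i i' : Fin n, σ' (Sum.inl i) < σ' (Sum.inl i') → w₁ i' ≤ w₁ i) := by
  obtain ⟨σ, h1, h2⟩ := h
  set s₁ : Equiv.Perm (Fin n) := Tuple.sort (fun i => σ (Sum.inl i)) with hs₁def
  set s₂ : Equiv.Perm (Fin n) := Tuple.sort w₁ with hs₂def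
  set τ : Equiv.Perm (Fin n) := s₁ * (Fin.revPerm : Equiv.Perm (Fin n)) * s₂⁻¹ with hτdef
  have hτinv : ∀ x, τ⁻¹ x = s₂ ((s₁⁻¹ x).rev) := by
    intro x
    rw [hτdef]
    simp only [mul_inv_rev, inv_inv, Equiv.Perm.mul_apply]
    rw [show (Fin.revPerm : Equiv.Perm (Fin n))⁻¹ = Fin.revPerm from Fin.revPerm_symm]
    simp
  have hs₁mono : Monotone ((fun i => σ (Sum.inl i)) ∘ s₁) := Tuple.monotone_sort _
  have hs₂mono : Monotone (w₁ ∘ s₂) := Tuple.monotone_sort _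
  have hkey : ∀ a b : Fin n, σ (Sum.inl a) < σ (Sum.inl b) → w₁ (τ⁻¹ b) ≤ w₁ (τ⁻¹ a) := by
    intro a b hab
    have hr : s₁⁻¹ a < s₁⁻¹ b := by
      by_contra hle
      push_neg at hle
      have := hs₁mono hle
      simp only [Function.comp_apply, Equiv.Perm.inv_def, Equiv.apply_symm_apply] at this
      exact absurd hab (not_lt.2 this)
    rw [hτinv, hτinv]
    exact hs₂mono (Fin.rev_le_rev.2 hr.le)
  set e : Equiv.Perm (Fin n ⊕ Fin k) := Equiv.sumCongr τ (Equiv.refl _) with hedef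
  have hpe : ∀ m, p (e m) = p m := by
    rintro (i | j) <;> simp [hedef, hp]
  have hC : ∀ m, completionTime p (e.trans σ) m = completionTime p σ (e m) := by
    intro m
    unfold completionTime
    refine Finset.sum_equiv e ?_ ?_
    · intro j
      rw [Finset.mem_filter, Finset.mem_filter]
      exact ⟨fun h => ⟨Finset.mem_univ _, h.2⟩, fun h => ⟨Finset.mem_univ _, h.2⟩⟩
    · intro j _
      exact (hpe j).symm
  refine ⟨e.trans σ, ?_, ?_, ?_⟩
  · set c : Fin n → ℕ := fun i => completionTime p σ (Sum.inl i) with hcdef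
    have hcτ : ∀ i, completionTime p (e.trans σ) (Sum.inl i) = c (τ i) := by
      intro i
      rw [hC]
      simp [hedef, hcdef]
    have hmono : ∀ a b : Fin n, σ (Sum.inl a) ≤ σ (Sum.inl b) → c a ≤ c b := by
      intro a b hab
      apply Finset.sum_le_sum_of_subset
      intro j hj
      simp only [Finset.mem_filter, Finset.mem_univ, true_and] at *
      exact hj.trans hab
    set f : Fin n → ℕ := fun i => w₁ (τ⁻¹ i) with hfdef
    have hanti : Antivary f c := by
      intro a b hab
      have hlt : σ (Sum.inl a) < σ (Sum.inl b) := by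
        by_contra hle
        push_neg at hle
        exact absurd hab (not_lt.2 (hmono _ _ hle))
      exact hkey a b hlt
    calc ∑ i, w₁ i * completionTime p (e.trans σ) (Sum.inl i)
        = ∑ i, w₁ i * c (τ i) := by
          exact Finset.sum_congr rfl fun i _ => by rw [hcτ]
      _ = ∑ i, f (τ i) * c (τ i) := by
          exact Finset.sum_congr rfl fun i _ => by simp [hfdef]
      _ = ∑ i, f i * c i := Equiv.sum_comp τ (fun i => f i * c i)
      _ ≤ ∑ i, f i * c (τ⁻¹ i) := hanti.sum_mul_le_sum_mul_comp_perm
      _ = ∑ i, f (τ i) * c (τ⁻¹ (τ i)) := (Equiv.sum_comp τ (fun i => f i * c (τ⁻¹ i))).symm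
      _ = ∑ i, w₁ i * c i := by
          exact Finset.sum_congr rfl fun i _ => by simp [hfdef]
      _ ≤ A₁ := h1
  · refine le_trans (le_of_eq ?_) h2
    refine Finset.sum_congr rfl fun j _ => ?_
    rw [hC]
    simp [hedef]
  · intro i i' hlt
    have : σ (Sum.inl (τ i)) < σ (Sum.inl (τ i')) := by
      simpa [hedef, Equiv.trans_apply] using hlt
    have := hkey (τ i) (τ i') this
    simpa using this
end

section
/- Let p₂ : Fin k → ℕ and w₂ : Fin k → ℕ, and let x : Fin k → ℕ satisfy x j ≤ n for all j. In any schedule σ of the jobs Fin n ⊕ Fin k in which every agent-1 job has processing time 1, the agent-2 jobs appear in index order, and for each j exactly x j agent-1 jobs are scheduled after agent-2 job j, the total weighted completion time of the agent-2 jobs satisfies ∑ j, w₂ j · C (inr j) = ∑_{i=1}^{k} w₂ i · (∑_{j=1}^{i} p₂ j) + ∑_{j=1}^{k} w₂ j · (n − x j). -/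
/-- Correctness of constraint (8): in any schedule where each agent-1 job has
unit processing time, the agent-2 jobs (processing times `p₂`, weights `w₂`)
appear in index order, and exactly `x j` agent-1 jobs are scheduled after
agent-2 job `j`, the total weighted completion time of the agent-2 jobs equals
`∑_i w₂ i · (∑_{j ≤ i} p₂ j) + ∑_j w₂ j · (n - x j)`. -/
theorem agent2_weighted_completion_formula
    (n k : ℕ) (p₂ w₂ : Fin k → ℕ) (x : Fin k → ℕ) (hx : ∀ j, x j ≤ n)
    (σ : (Fin n ⊕ Fin k) ≃ Fin (Fintype.card (Fin n ⊕ Fin k)))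
    (h2 : ∀ j j' : Fin k, j < j' → σ (Sum.inr j) < σ (Sum.inr j'))
    (h3 : ∀ j : Fin k,
      (Finset.univ.filter (fun i : Fin n => σ (Sum.inr j) < σ (Sum.inl i))).card
        = x j) :
    ∑ j, w₂ j * completionTime (Sum.elim (fun _ => 1) p₂) σ (Sum.inr j)
      = (∑ i : Fin k, w₂ i * ∑ j ∈ Finset.Iic i, p₂ j)
        + ∑ j : Fin k, w₂ j * (n - x j) := by
  have hmono : StrictMono (fun j : Fin k => σ (Sum.inr j)) := fun a b h => h2 a b h
  have key : ∀ j : Fin k,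
      completionTime (Sum.elim (fun _ => 1) p₂) σ (Sum.inr j)
        = (∑ j' ∈ Finset.Iic j, p₂ j') + (n - x j) := by
    intro j
    unfold completionTime
    rw [Finset.sum_filter, Fintype.sum_sum_type]
    have h1 : (∑ i : Fin n,
        if σ (Sum.inl i) ≤ σ (Sum.inr j) then Sum.elim (fun _ => (1:ℕ)) p₂ (Sum.inl i) else 0)
        = n - x j := by
      simp only [Sum.elim_inl]
      rw [← Finset.sum_filter]
      simp only [Finset.sum_const, smul_eq_mul, mul_one]
      have : (Finset.univ.filter (fun i : Fin n => σ (Sum.inl i) ≤ σ (Sum.inr j)))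
          = (Finset.univ.filter (fun i : Fin n => σ (Sum.inr j) < σ (Sum.inl i)))ᶜ := by
        ext i
        simp only [Finset.mem_filter, Finset.mem_compl, Finset.mem_univ, true_and, not_lt]
      rw [this, Finset.card_compl, h3, Fintype.card_fin]
    have h2' : (∑ j' : Fin k,
        if σ (Sum.inr j') ≤ σ (Sum.inr j) then Sum.elim (fun _ => (1:ℕ)) p₂ (Sum.inr j' : Fin n ⊕ Fin k) else 0)
        = ∑ j' ∈ Finset.Iic j, p₂ j' := by
      simp only [Sum.elim_inr]
      rw [← Finset.sum_filter]
      congr 1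
      ext j'
      simp [hmono.le_iff_le]
    rw [h1, h2', Nat.add_comm]
  calc ∑ j, w₂ j * completionTime (Sum.elim (fun _ => 1) p₂) σ (Sum.inr j)
      = ∑ j : Fin k, (w₂ j * ∑ j' ∈ Finset.Iic j, p₂ j' + w₂ j * (n - x j)) := by
        refine Finset.sum_congr rfl fun j _ => ?_
        rw [key j, mul_add]
    _ = _ := by rw [Finset.sum_add_distrib]
end

section
/- Let n, x : ℕ with x ≤ n, let w : ℕ → ℝ satisfy w (n+1) = 0 and w i ≥ w (i+1) for all 1 ≤ i ≤ n, and let y : ℕ → ℝ satisfy, for every i with 1 ≤ i ≤ n, both y i ≥ 0 and y i ≥ ((x : ℝ) − n + i) · (w i − w (i+1)). Then ∑_{i=1}^{n} y i ≥ ∑_{i=n−x+1}^{n} w i. -/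
lemma abel_tele (w : ℕ → ℝ) (k : ℕ) :
    ∀ m, k ≤ m →
      ∑ i ∈ Finset.Icc (k + 1) m, ((i : ℝ) - k) * (w i - w (i + 1)) =
        (∑ i ∈ Finset.Icc (k + 1) m, w i) - ((m : ℝ) - k) * w (m + 1) := by
  intro m
  induction m with
  | zero =>
      intro hk
      interval_cases k
      simp
  | succ m ih =>
      intro hk
      rcases Nat.lt_or_ge k (m + 1) with h | h
      · have hkm : k ≤ m := Nat.lt_succ_iff.mp h
        rw [Finset.sum_Icc_succ_top (by omega : k + 1 ≤ m + 1),
            Finset.sum_Icc_succ_top (by omega : k + 1 ≤ m + 1), ih hkm]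
        push_cast
        ring
      · have : k = m + 1 := le_antisymm hk h
        subst this
        simp

/-- Correctness of constraints (9)–(10): if `w (n+1) = 0`, `w 1 ≥ ⋯ ≥ w n`,
`x ≤ n`, and for every `1 ≤ i ≤ n` we have `y i ≥ 0` and
`y i ≥ (x - n + i)·(w i - w (i+1))`, then
`∑_{i=1}^{n} y i ≥ ∑_{i=n-x+1}^{n} w i`. -/
theorem milp_weight_steps_lower_bound
    (n x : ℕ) (hx : x ≤ n) (w : ℕ → ℝ) (hw0 : w (n + 1) = 0)
    (hmono : ∀ i, 1 ≤ i → i ≤ n → w (i + 1) ≤ w i)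
    (y : ℕ → ℝ)
    (hy0 : ∀ i, 1 ≤ i → i ≤ n → 0 ≤ y i)
    (hy : ∀ i, 1 ≤ i → i ≤ n → ((x : ℝ) - n + i) * (w i - w (i + 1)) ≤ y i) :
    ∑ i ∈ Finset.Icc (n - x + 1) n, w i ≤ ∑ i ∈ Finset.Icc 1 n, y i := by
  set k := n - x with hk
  have hkn : k ≤ n := Nat.sub_le _ _
  have hkc : (k : ℝ) = (n : ℝ) - x := by
    rw [hk]; push_cast [Nat.cast_sub hx]; ring
  have h1 : ∑ i ∈ Finset.Icc (k + 1) n, ((i : ℝ) - k) * (w i - w (i + 1)) =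
      ∑ i ∈ Finset.Icc (k + 1) n, w i := by
    rw [abel_tele w k n hkn, hw0]; ring
  have h2 : ∑ i ∈ Finset.Icc (k + 1) n, w i ≤ ∑ i ∈ Finset.Icc (k + 1) n, y i := by
    rw [← h1]
    apply Finset.sum_le_sum
    intro i hi
    rw [Finset.mem_Icc] at hi
    have := hy i (by omega) hi.2
    have heq : ((x : ℝ) - n + i) = (i : ℝ) - k := by rw [hkc]; ring
    linarith [heq ▸ this]
  have h3 : ∑ i ∈ Finset.Icc (k + 1) n, y i ≤ ∑ i ∈ Finset.Icc 1 n, y i := by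
    apply Finset.sum_le_sum_of_subset_of_nonneg
    · intro i hi; rw [Finset.mem_Icc] at *; omega
    · intro i hi _
      rw [Finset.mem_Icc] at hi
      exact hy0 i hi.1 hi.2
  linarith
end

section
/- Let p₁ : Fin n → ℕ be agent-1 processing times, and let the agent-2 jobs have processing times p₂ : Fin k → ℕ, due dates d₂ : Fin k → ℕ, and weights w₂ : Fin k → ℕ; let A₁, A₂ : ℕ. If there exists a schedule σ with ∑ i, C (inl i) ≤ A₁ and ∑ over tardy agent-2 jobs j of w₂ j ≤ A₂, then there exists a schedule σ' satisfying both bounds in which additionally: (i) for all agent-1 jobs i, i', if σ' (inl i) < σ' (inl i') then p₁ i ≤ p₁ i'; (ii) for all early agent-2 jobs j, j', if σ' (inr j) < σ' (inr j') then d₂ j ≤ d₂ j'; and (iii) every tardy agent-2 job is scheduled after every agent-1 job and after every early agent-2 job. -/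
open Finset

namespace SLaux

def cycF {N : ℕ} (q r t : Fin N) : Fin N :=
  if q ≤ r then
    (if t = q then r else if q < t ∧ t ≤ r then ⟨t.val - 1, by omega⟩ else t)
  else t

def cycG {N : ℕ} (q r t : Fin N) : Fin N :=
  if q ≤ r then
    (if t = r then q else if h : q ≤ t ∧ t < r then
      ⟨t.val + 1, by have := Fin.lt_def.mp h.2; have := r.isLt; omega⟩ else t)
  else t

lemma cycF_val {N : ℕ} (q r t : Fin N) (hqr : q ≤ r) :
    (cycF q r t).val =
      if t.val = q.val then r.val
      else if q.val < t.val ∧ t.val ≤ r.val then t.val - 1 else t.val := by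
  unfold cycF
  rw [if_pos hqr]
  split_ifs with h1 h2 h3 h4 h5 <;>
    first
      | rfl
      | (exfalso; simp only [Fin.lt_def, Fin.le_def, Fin.ext_iff] at *; omega)

lemma cycG_val {N : ℕ} (q r t : Fin N) (hqr : q ≤ r) :
    (cycG q r t).val =
      if t.val = r.val then q.val
      else if q.val ≤ t.val ∧ t.val < r.val then t.val + 1 else t.val := by
  unfold cycG
  rw [if_pos hqr]
  split_ifs with h1 h2 h3 h4 h5 <;>
    first
      | rfl
      | (exfalso; simp only [Fin.lt_def, Fin.le_def, Fin.ext_iff] at *; omega)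

/-- cycle permutation: position `q` goes to `r`, positions in `(q, r]` shift down by one. -/
def cyc {N : ℕ} (q r : Fin N) : Fin N ≃ Fin N where
  toFun := cycF q r
  invFun := cycG q r
  left_inv := by
    intro t
    rcases le_or_gt q r with hqr | hqr
    · apply Fin.ext
      rw [cycG_val _ _ _ hqr, cycF_val _ _ _ hqr]
      have := t.isLt; have := q.isLt; have := r.isLt
      have hq := Fin.le_def.mp hqr
      split_ifs <;> omega
    · unfold cycF cycG
      rw [if_neg (not_le.mpr hqr), if_neg (not_le.mpr hqr)]
  right_inv := by
    intro t
    rcases le_or_gt q r with hqr | hqr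
    · apply Fin.ext
      rw [cycF_val _ _ _ hqr, cycG_val _ _ _ hqr]
      have := t.isLt; have := q.isLt; have := r.isLt
      have hq := Fin.le_def.mp hqr
      split_ifs <;> omega
    · unfold cycF cycG
      rw [if_neg (not_le.mpr hqr), if_neg (not_le.mpr hqr)]

lemma cyc_val {N : ℕ} (q r t : Fin N) (hqr : q ≤ r) :
    ((cyc q r) t).val =
      if t.val = q.val then r.val
      else if q.val < t.val ∧ t.val ≤ r.val then t.val - 1 else t.val :=
  cycF_val q r t hqr

end SLaux

section CTlemmas

open Finset SLaux

variable {ι : Type*} [Fintype ι] [DecidableEq ι] (p : ι → ℕ) (σ : ι ≃ Fin (Fintype.card ι))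

lemma ct_trans (c : Fin (Fintype.card ι) ≃ Fin (Fintype.card ι)) (x : ι) :
    completionTime p (σ.trans c) x
      = ∑ j ∈ univ.filter (fun j => c (σ j) ≤ c (σ x)), p j := by
  simp [completionTime, Equiv.trans_apply]
  rfl

lemma ct_apply_symm (a : Fin (Fintype.card ι)) :
    completionTime p σ (σ.symm a) = ∑ j ∈ univ.filter (fun j => σ j ≤ a), p j := by
  simp [completionTime]

lemma W_mono {a b : Fin (Fintype.card ι)} (hab : a ≤ b) :
    completionTime p σ (σ.symm a) ≤ completionTime p σ (σ.symm b) := by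
  rw [ct_apply_symm, ct_apply_symm]
  apply Finset.sum_le_sum_of_subset
  intro j hj
  simp only [mem_filter, mem_univ, true_and] at *
  exact le_trans hj hab

lemma ct_le_total (x : ι) : completionTime p σ x ≤ ∑ j, p j :=
  Finset.sum_le_sum_of_subset (Finset.filter_subset _ _)

variable {q r : Fin (Fintype.card ι)}

lemma ct_cyc_out (hqr : q ≤ r) (x : ι) (hx : σ x < q ∨ r < σ x) :
    completionTime p (σ.trans (cyc q r)) x = completionTime p σ x := by
  rw [ct_trans]
  have hset : univ.filter (fun j => cyc q r (σ j) ≤ cyc q r (σ x))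
      = univ.filter (fun j => σ j ≤ σ x) := by
    apply Finset.filter_congr
    intro j _
    have hq := Fin.le_def.mp hqr
    have hx' : (σ x).val < q.val ∨ r.val < (σ x).val := by
      rcases hx with h | h
      · exact Or.inl (Fin.lt_def.mp h)
      · exact Or.inr (Fin.lt_def.mp h)
    simp only [Fin.le_def, cyc_val _ _ _ hqr]
    split_ifs <;> omega
  rw [hset]; rfl

lemma ct_cyc_moved (hqr : q ≤ r) :
    completionTime p (σ.trans (cyc q r)) (σ.symm q) = completionTime p σ (σ.symm r) := by
  rw [ct_trans, ct_apply_symm]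
  apply Finset.sum_congr _ (fun _ _ => rfl)
  apply Finset.filter_congr
  intro j _
  rw [Equiv.apply_symm_apply]
  have hq := Fin.le_def.mp hqr
  simp only [Fin.le_def, cyc_val _ _ _ hqr]
  split_ifs <;> omega

lemma ct_cyc_mid (hqr : q ≤ r) (x : ι) (h1 : q < σ x) (h2 : σ x ≤ r) :
    completionTime p (σ.trans (cyc q r)) x + p (σ.symm q) = completionTime p σ x := by
  rw [ct_trans]
  have hset : univ.filter (fun j => cyc q r (σ j) ≤ cyc q r (σ x))
      = (univ.filter (fun j => σ j ≤ σ x)).erase (σ.symm q) := by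
    ext j
    simp only [mem_filter, mem_erase, mem_univ, true_and]
    have hj : (j ≠ σ.symm q) ↔ ¬ (σ j).val = q.val := by
      rw [Ne, Equiv.eq_symm_apply, Fin.ext_iff]
    rw [hj]
    have hq := Fin.le_def.mp hqr
    have h1' := Fin.lt_def.mp h1
    have h2' := Fin.le_def.mp h2
    simp only [Fin.le_def, cyc_val _ _ _ hqr]
    split_ifs <;> omega
  rw [hset]
  have hmem : σ.symm q ∈ univ.filter (fun j => σ j ≤ σ x) := by
    simp only [mem_filter, mem_univ, true_and, Equiv.apply_symm_apply]
    exact le_of_lt h1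
  exact Finset.sum_erase_add _ _ hmem

lemma ct_cyc_le (hqr : q ≤ r) (x : ι) (hx : σ x ≠ q) :
    completionTime p (σ.trans (cyc q r)) x ≤ completionTime p σ x := by
  have hv : (σ x).val ≠ q.val := fun h => hx (Fin.ext h)
  have hq := Fin.le_def.mp hqr
  rcases lt_trichotomy (σ x).val q.val with h | h | h
  · exact le_of_eq (ct_cyc_out p σ hqr x (Or.inl (Fin.lt_def.mpr h)))
  · exact absurd h hv
  · rcases le_or_gt (σ x).val r.val with h2 | h2
    · exact Nat.le.intro (ct_cyc_mid p σ hqr x (Fin.lt_def.mpr h) (Fin.le_def.mpr h2))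
    · exact le_of_eq (ct_cyc_out p σ hqr x (Or.inr (Fin.lt_def.mpr h2)))

end CTlemmas

section SwapLemmas

open Finset SLaux

set_option linter.unusedSectionVars false

lemma swap_val {N : ℕ} (q r t : Fin N) :
    ((Equiv.swap q r) t).val =
      if t.val = q.val then r.val else if t.val = r.val then q.val else t.val := by
  rw [Equiv.swap_apply_def]
  split_ifs <;> simp_all [Fin.ext_iff]

lemma cyc_lt_iff {N : ℕ} {q r a b : Fin N} (hqr : q ≤ r) (ha : a ≠ q) (hb : b ≠ q) :
    cyc q r a < cyc q r b ↔ a < b := by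
  have hav : a.val ≠ q.val := fun h => ha (Fin.ext h)
  have hbv : b.val ≠ q.val := fun h => hb (Fin.ext h)
  have hq := Fin.le_def.mp hqr
  simp only [Fin.lt_def, cyc_val _ _ _ hqr]
  split_ifs <;> omega

lemma cyc_gt {N : ℕ} {q r t : Fin N} (hqr : q ≤ r) (ht : r < t) : cyc q r t = t := by
  apply Fin.ext
  rw [cyc_val _ _ _ hqr]
  have := Fin.le_def.mp hqr
  have := Fin.lt_def.mp ht
  split_ifs <;> omega

lemma cyc_le_r {N : ℕ} {q r t : Fin N} (hqr : q ≤ r) (ht : t ≤ r) : cyc q r t ≤ r := by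
  rw [Fin.le_def, cyc_val _ _ _ hqr]
  have := Fin.le_def.mp hqr
  have := Fin.le_def.mp ht
  split_ifs <;> omega

lemma cyc_apply_q {N : ℕ} {q r : Fin N} (hqr : q ≤ r) : cyc q r q = r := by
  apply Fin.ext
  rw [cyc_val _ _ _ hqr]
  simp

variable {ι : Type*} [Fintype ι] [DecidableEq ι] (p : ι → ℕ) (σ : ι ≃ Fin (Fintype.card ι))
variable {q r : Fin (Fintype.card ι)}

lemma ct_swap_out (hqr : q ≤ r) (x : ι) (hx : σ x < q ∨ r < σ x) :
    completionTime p (σ.trans (Equiv.swap q r)) x = completionTime p σ x := by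
  rw [ct_trans]
  have hset : univ.filter (fun j => Equiv.swap q r (σ j) ≤ Equiv.swap q r (σ x))
      = univ.filter (fun j => σ j ≤ σ x) := by
    apply Finset.filter_congr
    intro j _
    have hq := Fin.le_def.mp hqr
    have hx' : (σ x).val < q.val ∨ r.val < (σ x).val := by
      rcases hx with h | h
      · exact Or.inl (Fin.lt_def.mp h)
      · exact Or.inr (Fin.lt_def.mp h)
    simp only [Fin.le_def, swap_val]
    split_ifs <;> omega
  rw [hset]; rfl

lemma ct_swap_q (hqr : q ≤ r) :
    completionTime p (σ.trans (Equiv.swap q r)) (σ.symm q) = completionTime p σ (σ.symm r) := by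
  rw [ct_trans, ct_apply_symm]
  apply Finset.sum_congr _ (fun _ _ => rfl)
  apply Finset.filter_congr
  intro j _
  rw [Equiv.apply_symm_apply]
  have hq := Fin.le_def.mp hqr
  simp only [Fin.le_def, swap_val]
  split_ifs <;> omega

lemma ct_swap_r (hqr : q < r) :
    completionTime p (σ.trans (Equiv.swap q r)) (σ.symm r) + p (σ.symm q)
      = completionTime p σ (σ.symm q) + p (σ.symm r) := by
  have hq := Fin.lt_def.mp hqr
  have e1 : completionTime p (σ.trans (Equiv.swap q r)) (σ.symm r)
      = p (σ.symm r) + ∑ j ∈ univ.filter (fun j => σ j < q), p j := by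
    rw [ct_trans]
    have hset : univ.filter (fun j => Equiv.swap q r (σ j) ≤ Equiv.swap q r (σ (σ.symm r)))
        = insert (σ.symm r) (univ.filter (fun j => σ j < q)) := by
      ext j
      simp only [mem_filter, mem_insert, mem_univ, true_and, Equiv.apply_symm_apply]
      rw [show (j = σ.symm r) ↔ (σ j).val = r.val by
        rw [Equiv.eq_symm_apply, Fin.ext_iff]]
      simp only [Fin.le_def, Fin.lt_def, swap_val]
      split_ifs <;> omega
    rw [hset, Finset.sum_insert (by
      simp only [mem_filter, mem_univ, true_and, Equiv.apply_symm_apply]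
      exact not_lt.mpr hqr.le)]
  have e2 : completionTime p σ (σ.symm q)
      = p (σ.symm q) + ∑ j ∈ univ.filter (fun j => σ j < q), p j := by
    rw [ct_apply_symm]
    have hset : univ.filter (fun j => σ j ≤ q)
        = insert (σ.symm q) (univ.filter (fun j => σ j < q)) := by
      ext j
      simp only [mem_filter, mem_insert, mem_univ, true_and]
      rw [show (j = σ.symm q) ↔ (σ j).val = q.val by
        rw [Equiv.eq_symm_apply, Fin.ext_iff]]
      simp only [Fin.le_def, Fin.lt_def]
      omega
    rw [hset, Finset.sum_insert (by
      simp only [mem_filter, mem_univ, true_and, Equiv.apply_symm_apply]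
      exact lt_irrefl q)]
  rw [e1, e2]
  ring

lemma ct_swap_mid (hqr : q < r) (x : ι) (h1 : q < σ x) (h2 : σ x < r) :
    completionTime p (σ.trans (Equiv.swap q r)) x + p (σ.symm q)
      = completionTime p σ x + p (σ.symm r) := by
  have hq := Fin.lt_def.mp hqr
  have h1' := Fin.lt_def.mp h1
  have h2' := Fin.lt_def.mp h2
  have e1 : completionTime p (σ.trans (Equiv.swap q r)) x
      = p (σ.symm r) + ∑ j ∈ (univ.filter (fun j => σ j ≤ σ x)).erase (σ.symm q), p j := by
    rw [ct_trans]
    have hset : univ.filter (fun j => Equiv.swap q r (σ j) ≤ Equiv.swap q r (σ x))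
        = insert (σ.symm r) ((univ.filter (fun j => σ j ≤ σ x)).erase (σ.symm q)) := by
      ext j
      simp only [mem_filter, mem_insert, mem_erase, mem_univ, true_and]
      rw [show (j = σ.symm r) ↔ (σ j).val = r.val by
        rw [Equiv.eq_symm_apply, Fin.ext_iff]]
      rw [show (j ≠ σ.symm q) ↔ ¬ (σ j).val = q.val by
        rw [Ne, Equiv.eq_symm_apply, Fin.ext_iff]]
      simp only [Fin.le_def, swap_val]
      split_ifs <;> omega
    rw [hset, Finset.sum_insert (by
      simp only [mem_erase, mem_filter, mem_univ, true_and, Equiv.apply_symm_apply, not_and]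
      intro _
      rw [Fin.le_def]
      omega)]
  have e2 : ∑ j ∈ (univ.filter (fun j => σ j ≤ σ x)).erase (σ.symm q), p j + p (σ.symm q)
      = completionTime p σ x := by
    apply Finset.sum_erase_add
    simp only [mem_filter, mem_univ, true_and, Equiv.apply_symm_apply]
    exact le_of_lt h1
  rw [e1]
  rw [completionTime] at e2 ⊢
  omega

lemma ct_swap_le_s9 (hqr : q < r) (hp : p (σ.symm r) ≤ p (σ.symm q)) (x : ι)
    (hx1 : σ x ≠ q) (hx2 : σ x ≠ r) :
    completionTime p (σ.trans (Equiv.swap q r)) x ≤ completionTime p σ x := by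
  have hv1 : (σ x).val ≠ q.val := fun h => hx1 (Fin.ext h)
  have hv2 : (σ x).val ≠ r.val := fun h => hx2 (Fin.ext h)
  have hq := Fin.lt_def.mp hqr
  rcases lt_trichotomy (σ x).val q.val with h | h | h
  · exact le_of_eq (ct_swap_out p σ (le_of_lt hqr) x (Or.inl (Fin.lt_def.mpr h)))
  · exact absurd h hv1
  · rcases lt_trichotomy (σ x).val r.val with h2 | h2 | h2
    · have := ct_swap_mid p σ hqr x (Fin.lt_def.mpr h) (Fin.lt_def.mpr h2)
      omega
    · exact absurd h2 hv2
    · exact le_of_eq (ct_swap_out p σ (le_of_lt hqr) x (Or.inr (Fin.lt_def.mpr h2)))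

end SwapLemmas

namespace SLmain

open Finset SLaux

variable {n k : ℕ} (p₁ : Fin n → ℕ) (p₂ d₂ w₂ : Fin k → ℕ)

def tardySet (σ : (Fin n ⊕ Fin k) ≃ Fin (Fintype.card (Fin n ⊕ Fin k))) : Finset (Fin k) :=
  univ.filter fun j => d₂ j < completionTime (Sum.elim p₁ p₂) σ (Sum.inr j)

def sumC1 (σ : (Fin n ⊕ Fin k) ≃ Fin (Fintype.card (Fin n ⊕ Fin k))) : ℕ :=
  ∑ i, completionTime (Sum.elim p₁ p₂) σ (Sum.inl i)

def tardyW (σ : (Fin n ⊕ Fin k) ≃ Fin (Fintype.card (Fin n ⊕ Fin k))) : ℕ :=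
  ∑ j ∈ tardySet p₁ p₂ d₂ σ, w₂ j

def bp1 (σ : (Fin n ⊕ Fin k) ≃ Fin (Fintype.card (Fin n ⊕ Fin k))) : ℕ :=
  (univ.filter fun z : Fin k × Fin n =>
    z.1 ∈ tardySet p₁ p₂ d₂ σ ∧ σ (Sum.inr z.1) < σ (Sum.inl z.2)).card

def bp2 (σ : (Fin n ⊕ Fin k) ≃ Fin (Fintype.card (Fin n ⊕ Fin k))) : ℕ :=
  (univ.filter fun z : Fin k × Fin k =>
    z.1 ∈ tardySet p₁ p₂ d₂ σ ∧ z.2 ∉ tardySet p₁ p₂ d₂ σ ∧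
      σ (Sum.inr z.1) < σ (Sum.inr z.2)).card

def inv2 (σ : (Fin n ⊕ Fin k) ≃ Fin (Fintype.card (Fin n ⊕ Fin k))) : ℕ :=
  (univ.filter fun z : Fin k × Fin k =>
    z.1 ∉ tardySet p₁ p₂ d₂ σ ∧ z.2 ∉ tardySet p₁ p₂ d₂ σ ∧
      σ (Sum.inr z.1) < σ (Sum.inr z.2) ∧ d₂ z.2 < d₂ z.1).card

def PP : ℕ := ∑ x : Fin n ⊕ Fin k, Sum.elim p₁ p₂ x

def Phi (σ : (Fin n ⊕ Fin k) ≃ Fin (Fintype.card (Fin n ⊕ Fin k))) : ℕ :=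
  ((((tardySet p₁ p₂ d₂ σ).card * (k * n + 1) + bp1 p₁ p₂ d₂ σ) * (k * k + 1)
      + bp2 p₁ p₂ d₂ σ) * (n * PP p₁ p₂ + 1) + sumC1 p₁ p₂ σ) * (k * k + 1)
    + inv2 p₁ p₂ d₂ σ

lemma mem_tardySet {σ} {a : Fin k} : a ∈ tardySet p₁ p₂ d₂ σ ↔
    d₂ a < completionTime (Sum.elim p₁ p₂) σ (Sum.inr a) := by
  simp [tardySet]

lemma bp1_lt (σ) : bp1 p₁ p₂ d₂ σ < k * n + 1 := by
  unfold bp1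
  exact Nat.lt_succ_of_le (le_trans (Finset.card_filter_le _ _) (le_of_eq (by simp [mul_comm])))

lemma bp2_lt (σ) : bp2 p₁ p₂ d₂ σ < k * k + 1 := by
  unfold bp2
  exact Nat.lt_succ_of_le (le_trans (Finset.card_filter_le _ _) (le_of_eq (by simp)))

lemma inv2_lt (σ) : inv2 p₁ p₂ d₂ σ < k * k + 1 := by
  unfold inv2
  exact Nat.lt_succ_of_le (le_trans (Finset.card_filter_le _ _) (le_of_eq (by simp)))

lemma sumC1_lt (σ) : sumC1 p₁ p₂ σ < n * PP p₁ p₂ + 1 := by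
  apply Nat.lt_succ_of_le
  unfold sumC1 PP
  calc (∑ i, completionTime (Sum.elim p₁ p₂) σ (Sum.inl i))
        ≤ ∑ _i : Fin n, ∑ x : Fin n ⊕ Fin k, Sum.elim p₁ p₂ x :=
        Finset.sum_le_sum (fun i _ => ct_le_total _ σ _)
    _ = n * ∑ x : Fin n ⊕ Fin k, Sum.elim p₁ p₂ x := by simp [mul_comm]

lemma lex2 {a a' b b' B : ℕ} (hb : b < B) (h : a < a') : a * B + b < a' * B + b' := by
  have h1 : (a + 1) * B ≤ a' * B := Nat.mul_le_mul_right B h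
  have : a * B + b < (a + 1) * B := by ring_nf; omega
  omega

lemma lexEqLt {a a' b b' B : ℕ} (h : a = a') (hb : b < b') : a * B + b < a' * B + b' := by
  subst h; omega

lemma improve (σ'' σ : (Fin n ⊕ Fin k) ≃ Fin (Fintype.card (Fin n ⊕ Fin k)))
    (h : (tardySet p₁ p₂ d₂ σ'').card < (tardySet p₁ p₂ d₂ σ).card ∨
      ((tardySet p₁ p₂ d₂ σ'').card = (tardySet p₁ p₂ d₂ σ).card ∧
        (bp1 p₁ p₂ d₂ σ'' < bp1 p₁ p₂ d₂ σ ∨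
          (bp1 p₁ p₂ d₂ σ'' = bp1 p₁ p₂ d₂ σ ∧
            (bp2 p₁ p₂ d₂ σ'' < bp2 p₁ p₂ d₂ σ ∨
              (bp2 p₁ p₂ d₂ σ'' = bp2 p₁ p₂ d₂ σ ∧
                (sumC1 p₁ p₂ σ'' < sumC1 p₁ p₂ σ ∨
                  (sumC1 p₁ p₂ σ'' = sumC1 p₁ p₂ σ ∧
                    inv2 p₁ p₂ d₂ σ'' < inv2 p₁ p₂ d₂ σ)))))))) :
    Phi p₁ p₂ d₂ σ'' < Phi p₁ p₂ d₂ σ := by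
  have hb1 := bp1_lt p₁ p₂ d₂ σ''
  have hb2 := bp2_lt p₁ p₂ d₂ σ''
  have hin := inv2_lt p₁ p₂ d₂ σ''
  have hsc := sumC1_lt p₁ p₂ σ''
  unfold Phi
  rcases h with h | ⟨h1, h⟩
  · exact lex2 hin (lex2 hsc (lex2 hb2 (lex2 hb1 h)))
  rcases h with h | ⟨h2, h⟩
  · exact lex2 hin (lex2 hsc (lex2 hb2 (lexEqLt h1 h)))
  rcases h with h | ⟨h3, h⟩
  · exact lex2 hin (lex2 hsc (lexEqLt (by rw [h1, h2]) h))
  rcases h with h | ⟨h4, h⟩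
  · exact lex2 hin (lexEqLt (by rw [h1, h2, h3]) h)
  · exact lexEqLt (by rw [h1, h2, h3, h4]) h

end SLmain

namespace SLmain

open Finset SLaux

variable {n k : ℕ} (p₁ : Fin n → ℕ) (p₂ d₂ w₂ : Fin k → ℕ)

lemma exchangeA (σ : (Fin n ⊕ Fin k) ≃ Fin (Fintype.card (Fin n ⊕ Fin k)))
    (j : Fin k) (hj : j ∈ tardySet p₁ p₂ d₂ σ) (x : Fin n ⊕ Fin k)
    (hx : (∃ i, x = Sum.inl i) ∨ (∃ b, x = Sum.inr b ∧ b ∉ tardySet p₁ p₂ d₂ σ))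
    (hpos : σ (Sum.inr j) < σ x) :
    ∃ σ'', sumC1 p₁ p₂ σ'' ≤ sumC1 p₁ p₂ σ ∧
      tardyW p₁ p₂ d₂ w₂ σ'' ≤ tardyW p₁ p₂ d₂ w₂ σ ∧
      Phi p₁ p₂ d₂ σ'' < Phi p₁ p₂ d₂ σ := by
  classical
  have hN : 0 < Fintype.card (Fin n ⊕ Fin k) := Fintype.card_pos_iff.mpr ⟨Sum.inr j⟩
  set q := σ (Sum.inr j) with hq
  set r : Fin (Fintype.card (Fin n ⊕ Fin k)) := ⟨Fintype.card (Fin n ⊕ Fin k) - 1, by omega⟩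
    with hr
  have hqr : q ≤ r := by
    rw [Fin.le_def]
    have := q.isLt
    simp only [hr]
    omega
  set σ'' := σ.trans (cyc q r) with hσ''
  have hne : ∀ y : Fin n ⊕ Fin k, y ≠ Sum.inr j → σ y ≠ q := by
    intro y hy h
    exact hy (σ.injective (h.trans hq))
  have F1 : ∀ y, y ≠ Sum.inr j →
      completionTime (Sum.elim p₁ p₂) σ'' y ≤ completionTime (Sum.elim p₁ p₂) σ y :=
    fun y hy => ct_cyc_le _ σ hqr y (hne y hy)
  have F3 : tardySet p₁ p₂ d₂ σ'' ⊆ tardySet p₁ p₂ d₂ σ := by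
    intro a ha
    simp only [tardySet, mem_filter, mem_univ, true_and] at ha ⊢
    by_cases haj : a = j
    · subst haj
      simpa only [tardySet, mem_filter, mem_univ, true_and] using hj
    · exact lt_of_lt_of_le ha (F1 (Sum.inr a) (by simp [haj]))
  have feasA : sumC1 p₁ p₂ σ'' ≤ sumC1 p₁ p₂ σ := by
    unfold sumC1
    exact Finset.sum_le_sum (fun i _ => F1 (Sum.inl i) (by simp))
  have feasB : tardyW p₁ p₂ d₂ w₂ σ'' ≤ tardyW p₁ p₂ d₂ w₂ σ := by
    unfold tardyW
    exact Finset.sum_le_sum_of_subset F3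
  refine ⟨σ'', feasA, feasB, ?_⟩
  have hcard : (tardySet p₁ p₂ d₂ σ'').card ≤ (tardySet p₁ p₂ d₂ σ).card :=
    Finset.card_le_card F3
  rcases lt_or_eq_of_le hcard with hlt | heq
  · exact improve p₁ p₂ d₂ σ'' σ (Or.inl hlt)
  have hset : tardySet p₁ p₂ d₂ σ'' = tardySet p₁ p₂ d₂ σ :=
    Finset.eq_of_subset_of_card_le F3 (le_of_eq heq.symm)
  -- the moved job sits at the last position under σ''
  have htop : ∀ y : Fin n ⊕ Fin k, ¬ (σ'' (Sum.inr j) < σ'' y) := by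
    intro y
    have h1 : σ'' (Sum.inr j) = r := by
      rw [hσ'', Equiv.trans_apply, ← hq, cyc_apply_q hqr]
    rw [h1, Fin.lt_def]
    have := (σ'' y).isLt
    simp only [hr]
    omega
  have hord : ∀ y z : Fin n ⊕ Fin k, y ≠ Sum.inr j → z ≠ Sum.inr j →
      (σ'' y < σ'' z ↔ σ y < σ z) := by
    intro y z hy hz
    exact cyc_lt_iff hqr (hne y hy) (hne z hz)
  have hjmem'' : j ∈ tardySet p₁ p₂ d₂ σ'' := hset ▸ hj
  -- bp1 subset
  have bp1sub : (univ.filter fun z : Fin k × Fin n =>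
      z.1 ∈ tardySet p₁ p₂ d₂ σ'' ∧ σ'' (Sum.inr z.1) < σ'' (Sum.inl z.2)) ⊆
      (univ.filter fun z : Fin k × Fin n =>
      z.1 ∈ tardySet p₁ p₂ d₂ σ ∧ σ (Sum.inr z.1) < σ (Sum.inl z.2)) := by
    intro z hz
    simp only [mem_filter, mem_univ, true_and] at hz ⊢
    obtain ⟨hz1, hz2⟩ := hz
    have hz1j : z.1 ≠ j := by
      intro h
      exact htop (Sum.inl z.2) (h ▸ hz2)
    exact ⟨hset ▸ hz1, (hord _ _ (by simp [hz1j]) (by simp)).mp hz2⟩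
  have bp2sub : (univ.filter fun z : Fin k × Fin k =>
      z.1 ∈ tardySet p₁ p₂ d₂ σ'' ∧ z.2 ∉ tardySet p₁ p₂ d₂ σ'' ∧
        σ'' (Sum.inr z.1) < σ'' (Sum.inr z.2)) ⊆
      (univ.filter fun z : Fin k × Fin k =>
      z.1 ∈ tardySet p₁ p₂ d₂ σ ∧ z.2 ∉ tardySet p₁ p₂ d₂ σ ∧
        σ (Sum.inr z.1) < σ (Sum.inr z.2)) := by
    intro z hz
    simp only [mem_filter, mem_univ, true_and] at hz ⊢
    obtain ⟨hz1, hz2, hz3⟩ := hz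
    have hz1j : z.1 ≠ j := by
      intro h
      exact htop (Sum.inr z.2) (h ▸ hz3)
    refine ⟨hset ▸ hz1, fun hc => hz2 (hset ▸ hc), ?_⟩
    have hz2j : z.2 ≠ j := by
      intro h
      exact hz2 (h ▸ hjmem'')
    exact (hord _ _ (by simp [hz1j]) (by simp [hz2j])).mp hz3
  have hbp1le : bp1 p₁ p₂ d₂ σ'' ≤ bp1 p₁ p₂ d₂ σ := by
    unfold bp1
    exact Finset.card_le_card bp1sub
  rcases hx with ⟨i, rfl⟩ | ⟨b, rfl, hb⟩
  · -- strict decrease in bp1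
    have hmem : (j, i) ∈ (univ.filter fun z : Fin k × Fin n =>
        z.1 ∈ tardySet p₁ p₂ d₂ σ ∧ σ (Sum.inr z.1) < σ (Sum.inl z.2)) := by
      simp only [mem_filter, mem_univ, true_and]
      exact ⟨hj, hpos⟩
    have hnotmem : (j, i) ∉ (univ.filter fun z : Fin k × Fin n =>
        z.1 ∈ tardySet p₁ p₂ d₂ σ'' ∧ σ'' (Sum.inr z.1) < σ'' (Sum.inl z.2)) := by
      simp only [mem_filter, mem_univ, true_and, not_and]
      intro _
      exact htop (Sum.inl i)
    have : bp1 p₁ p₂ d₂ σ'' < bp1 p₁ p₂ d₂ σ := by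
      unfold bp1
      exact Finset.card_lt_card ((Finset.ssubset_iff_of_subset bp1sub).mpr ⟨(j, i), hmem, hnotmem⟩)
    exact improve p₁ p₂ d₂ σ'' σ (Or.inr ⟨by rw [hset], Or.inl this⟩)
  · -- strict decrease in bp2
    have hmem : (j, b) ∈ (univ.filter fun z : Fin k × Fin k =>
        z.1 ∈ tardySet p₁ p₂ d₂ σ ∧ z.2 ∉ tardySet p₁ p₂ d₂ σ ∧
          σ (Sum.inr z.1) < σ (Sum.inr z.2)) := by
      simp only [mem_filter, mem_univ, true_and]
      exact ⟨hj, hb, hpos⟩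
    have hnotmem : (j, b) ∉ (univ.filter fun z : Fin k × Fin k =>
        z.1 ∈ tardySet p₁ p₂ d₂ σ'' ∧ z.2 ∉ tardySet p₁ p₂ d₂ σ'' ∧
          σ'' (Sum.inr z.1) < σ'' (Sum.inr z.2)) := by
      simp only [mem_filter, mem_univ, true_and, not_and]
      intro _ _
      exact htop (Sum.inr b)
    have hb2 : bp2 p₁ p₂ d₂ σ'' < bp2 p₁ p₂ d₂ σ := by
      unfold bp2
      exact Finset.card_lt_card ((Finset.ssubset_iff_of_subset bp2sub).mpr ⟨(j, b), hmem, hnotmem⟩)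
    rcases lt_or_eq_of_le hbp1le with h1 | h1
    · exact improve p₁ p₂ d₂ σ'' σ (Or.inr ⟨by rw [hset], Or.inl h1⟩)
    · exact improve p₁ p₂ d₂ σ'' σ (Or.inr ⟨by rw [hset], Or.inr ⟨h1, Or.inl hb2⟩⟩)

end SLmain

namespace SLmain

open Finset SLaux

variable {n k : ℕ} (p₁ : Fin n → ℕ) (p₂ d₂ w₂ : Fin k → ℕ)

lemma exchangeB (σ : (Fin n ⊕ Fin k) ≃ Fin (Fintype.card (Fin n ⊕ Fin k)))
    (i i' : Fin n) (hlt : σ (Sum.inl i) < σ (Sum.inl i')) (hp : p₁ i' < p₁ i) :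
    ∃ σ'', sumC1 p₁ p₂ σ'' ≤ sumC1 p₁ p₂ σ ∧
      tardyW p₁ p₂ d₂ w₂ σ'' ≤ tardyW p₁ p₂ d₂ w₂ σ ∧
      Phi p₁ p₂ d₂ σ'' < Phi p₁ p₂ d₂ σ := by
  classical
  set q := σ (Sum.inl i) with hq
  set r := σ (Sum.inl i') with hr
  have hqr : q < r := hlt
  set σ'' := σ.trans (Equiv.swap q r) with hσ''
  have hii : i ≠ i' := by
    intro h
    subst h
    exact lt_irrefl _ hlt
  have hsymmq : σ.symm q = Sum.inl i := by rw [hq, Equiv.symm_apply_apply]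
  have hsymmr : σ.symm r = Sum.inl i' := by rw [hr, Equiv.symm_apply_apply]
  have hp' : Sum.elim p₁ p₂ (σ.symm r) ≤ Sum.elim p₁ p₂ (σ.symm q) := by
    rw [hsymmq, hsymmr]
    exact le_of_lt hp
  have hneq : ∀ y : Fin n ⊕ Fin k, y ≠ Sum.inl i → σ y ≠ q := by
    intro y hy h
    exact hy (σ.injective (h.trans hq))
  have hner : ∀ y : Fin n ⊕ Fin k, y ≠ Sum.inl i' → σ y ≠ r := by
    intro y hy h
    exact hy (σ.injective (h.trans hr))
  have G1 : ∀ y, y ≠ Sum.inl i → y ≠ Sum.inl i' →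
      completionTime (Sum.elim p₁ p₂) σ'' y ≤ completionTime (Sum.elim p₁ p₂) σ y :=
    fun y h1 h2 => ct_swap_le_s9 _ σ hqr hp' y (hneq y h1) (hner y h2)
  have Ginr : ∀ b, completionTime (Sum.elim p₁ p₂) σ'' (Sum.inr b)
      ≤ completionTime (Sum.elim p₁ p₂) σ (Sum.inr b) :=
    fun b => G1 (Sum.inr b) (by simp) (by simp)
  have F3 : tardySet p₁ p₂ d₂ σ'' ⊆ tardySet p₁ p₂ d₂ σ := by
    intro a ha
    rw [mem_tardySet] at ha ⊢
    exact lt_of_lt_of_le ha (Ginr a)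
  have feasB : tardyW p₁ p₂ d₂ w₂ σ'' ≤ tardyW p₁ p₂ d₂ w₂ σ := by
    unfold tardyW
    exact Finset.sum_le_sum_of_subset F3
  -- strict decrease of sumC1
  have e1 : completionTime (Sum.elim p₁ p₂) σ'' (Sum.inl i)
      = completionTime (Sum.elim p₁ p₂) σ (Sum.inl i') := by
    have := ct_swap_q (Sum.elim p₁ p₂) σ (le_of_lt hqr) (q := q) (r := r)
    rwa [hsymmq, hsymmr] at this
  have e2 : completionTime (Sum.elim p₁ p₂) σ'' (Sum.inl i') + p₁ i
      = completionTime (Sum.elim p₁ p₂) σ (Sum.inl i) + p₁ i' := by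
    have := ct_swap_r (Sum.elim p₁ p₂) σ hqr (q := q) (r := r)
    rwa [hsymmq, hsymmr, Sum.elim_inl, Sum.elim_inl] at this
  have e3 : ∀ x : Fin n, x ≠ i → x ≠ i' →
      completionTime (Sum.elim p₁ p₂) σ'' (Sum.inl x)
        ≤ completionTime (Sum.elim p₁ p₂) σ (Sum.inl x) := by
    intro x h1 h2
    exact G1 (Sum.inl x) (by simp [h1]) (by simp [h2])
  have hmem2 : i' ∈ univ.erase i :=
    Finset.mem_erase.mpr ⟨fun h => hii h.symm, mem_univ i'⟩
  have feasA : sumC1 p₁ p₂ σ'' < sumC1 p₁ p₂ σ := by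
    unfold sumC1
    have sA := (Finset.add_sum_erase univ
      (fun x => completionTime (Sum.elim p₁ p₂) σ'' (Sum.inl x)) (mem_univ i)).symm
    have sA2 := (Finset.add_sum_erase (univ.erase i)
      (fun x => completionTime (Sum.elim p₁ p₂) σ'' (Sum.inl x)) hmem2).symm
    have sB := (Finset.add_sum_erase univ
      (fun x => completionTime (Sum.elim p₁ p₂) σ (Sum.inl x)) (mem_univ i)).symm
    have sB2 := (Finset.add_sum_erase (univ.erase i)
      (fun x => completionTime (Sum.elim p₁ p₂) σ (Sum.inl x)) hmem2).symm
    have hrest : ∑ x ∈ (univ.erase i).erase i',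
        completionTime (Sum.elim p₁ p₂) σ'' (Sum.inl x)
        ≤ ∑ x ∈ (univ.erase i).erase i',
        completionTime (Sum.elim p₁ p₂) σ (Sum.inl x) := by
      apply Finset.sum_le_sum
      intro x hx
      simp only [mem_erase, mem_univ] at hx
      exact e3 x hx.2.1 hx.1
    omega
  refine ⟨σ'', le_of_lt feasA, feasB, ?_⟩
  have hcard : (tardySet p₁ p₂ d₂ σ'').card ≤ (tardySet p₁ p₂ d₂ σ).card :=
    Finset.card_le_card F3
  rcases lt_or_eq_of_le hcard with hltc | heq
  · exact improve p₁ p₂ d₂ σ'' σ (Or.inl hltc)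
  have hset : tardySet p₁ p₂ d₂ σ'' = tardySet p₁ p₂ d₂ σ :=
    Finset.eq_of_subset_of_card_le F3 (le_of_eq heq.symm)
  have posr : ∀ y : Fin n ⊕ Fin k, y ≠ Sum.inl i → y ≠ Sum.inl i' → σ'' y = σ y := by
    intro y h1 h2
    rw [hσ'', Equiv.trans_apply]
    exact Equiv.swap_apply_of_ne_of_ne (hneq y h1) (hner y h2)
  have poseq : ∀ x : Fin n, σ'' (Sum.inl x) = σ (Sum.inl (Equiv.swap i i' x)) := by
    intro x
    by_cases h1 : x = i
    · subst h1
      rw [hσ'', Equiv.trans_apply, ← hq, Equiv.swap_apply_left, Equiv.swap_apply_left, ← hr]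
    by_cases h2 : x = i'
    · subst h2
      rw [hσ'', Equiv.trans_apply, ← hr, Equiv.swap_apply_right, Equiv.swap_apply_right, ← hq]
    · rw [posr (Sum.inl x) (by simp [h1]) (by simp [h2]),
        Equiv.swap_apply_of_ne_of_ne h1 h2]
  have bp1eq : bp1 p₁ p₂ d₂ σ'' = bp1 p₁ p₂ d₂ σ := by
    unfold bp1
    refine Finset.card_bij' (fun z _ => (z.1, Equiv.swap i i' z.2))
      (fun z _ => (z.1, Equiv.swap i i' z.2)) ?_ ?_ ?_ ?_
    · intro z hz
      simp only [mem_filter, mem_univ, true_and] at hz ⊢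
      refine ⟨hset ▸ hz.1, ?_⟩
      have := hz.2
      rwa [posr (Sum.inr z.1) (by simp) (by simp), poseq] at this
    · intro z hz
      simp only [mem_filter, mem_univ, true_and] at hz ⊢
      refine ⟨hset ▸ hz.1, ?_⟩
      rw [posr (Sum.inr z.1) (by simp) (by simp), poseq, Equiv.swap_apply_self]
      exact hz.2
    · intro z hz
      simp [Equiv.swap_apply_self]
    · intro z hz
      simp [Equiv.swap_apply_self]
  have bp2eq : bp2 p₁ p₂ d₂ σ'' = bp2 p₁ p₂ d₂ σ := by
    unfold bp2
    congr 1
    apply Finset.filter_congr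
    intro z _
    rw [hset, posr (Sum.inr z.1) (by simp) (by simp), posr (Sum.inr z.2) (by simp) (by simp)]
  exact improve p₁ p₂ d₂ σ'' σ
    (Or.inr ⟨by rw [hset], Or.inr ⟨bp1eq, Or.inr ⟨bp2eq, Or.inl feasA⟩⟩⟩)

end SLmain

namespace SLmain

open Finset SLaux

variable {n k : ℕ} (p₁ : Fin n → ℕ) (p₂ d₂ w₂ : Fin k → ℕ)

lemma exchangeC (σ : (Fin n ⊕ Fin k) ≃ Fin (Fintype.card (Fin n ⊕ Fin k)))
    (j j' : Fin k) (hj : j ∉ tardySet p₁ p₂ d₂ σ) (hj' : j' ∉ tardySet p₁ p₂ d₂ σ)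
    (hqlt : σ (Sum.inr j) < σ (Sum.inr j')) (hd : d₂ j' < d₂ j)
    (hadj : ∀ b, b ∉ tardySet p₁ p₂ d₂ σ →
      ¬(σ (Sum.inr j) < σ (Sum.inr b) ∧ σ (Sum.inr b) < σ (Sum.inr j')))
    (hIII : ∀ a ∈ tardySet p₁ p₂ d₂ σ, ∀ b, b ∉ tardySet p₁ p₂ d₂ σ →
      σ (Sum.inr b) < σ (Sum.inr a)) :
    ∃ σ'', sumC1 p₁ p₂ σ'' ≤ sumC1 p₁ p₂ σ ∧
      tardyW p₁ p₂ d₂ w₂ σ'' ≤ tardyW p₁ p₂ d₂ w₂ σ ∧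
      Phi p₁ p₂ d₂ σ'' < Phi p₁ p₂ d₂ σ := by
  classical
  set q := σ (Sum.inr j) with hq
  set r := σ (Sum.inr j') with hr
  have hqr : q ≤ r := le_of_lt hqlt
  set σ'' := σ.trans (cyc q r) with hσ''
  have hsymmq : σ.symm q = Sum.inr j := by rw [hq, Equiv.symm_apply_apply]
  have hsymmr : σ.symm r = Sum.inr j' := by rw [hr, Equiv.symm_apply_apply]
  have hne : ∀ y : Fin n ⊕ Fin k, y ≠ Sum.inr j → σ y ≠ q := by
    intro y hy h
    exact hy (σ.injective (h.trans hq))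
  have Fmoved : completionTime (Sum.elim p₁ p₂) σ'' (Sum.inr j)
      = completionTime (Sum.elim p₁ p₂) σ (Sum.inr j') := by
    have := ct_cyc_moved (Sum.elim p₁ p₂) σ hqr (q := q) (r := r)
    rwa [hsymmq, hsymmr] at this
  have hjearly : j ∉ tardySet p₁ p₂ d₂ σ'' := by
    rw [mem_tardySet, Fmoved]
    rw [mem_tardySet, not_lt] at hj'
    omega
  have F1 : ∀ y, y ≠ Sum.inr j →
      completionTime (Sum.elim p₁ p₂) σ'' y ≤ completionTime (Sum.elim p₁ p₂) σ y :=
    fun y hy => ct_cyc_le _ σ hqr y (hne y hy)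
  have F3 : tardySet p₁ p₂ d₂ σ'' ⊆ tardySet p₁ p₂ d₂ σ := by
    intro a ha
    have haj : a ≠ j := fun h => hjearly (h ▸ ha)
    rw [mem_tardySet] at ha ⊢
    exact lt_of_lt_of_le ha (F1 (Sum.inr a) (by simp [haj]))
  have feasA : sumC1 p₁ p₂ σ'' ≤ sumC1 p₁ p₂ σ := by
    unfold sumC1
    exact Finset.sum_le_sum (fun i _ => F1 (Sum.inl i) (by simp))
  have feasB : tardyW p₁ p₂ d₂ w₂ σ'' ≤ tardyW p₁ p₂ d₂ w₂ σ := by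
    unfold tardyW
    exact Finset.sum_le_sum_of_subset F3
  refine ⟨σ'', feasA, feasB, ?_⟩
  have hcard : (tardySet p₁ p₂ d₂ σ'').card ≤ (tardySet p₁ p₂ d₂ σ).card :=
    Finset.card_le_card F3
  rcases lt_or_eq_of_le hcard with hltc | heq
  · exact improve p₁ p₂ d₂ σ'' σ (Or.inl hltc)
  have hset : tardySet p₁ p₂ d₂ σ'' = tardySet p₁ p₂ d₂ σ :=
    Finset.eq_of_subset_of_card_le F3 (le_of_eq heq.symm)
  have vc : ∀ y : Fin n ⊕ Fin k, (σ'' y).val =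
      if (σ y).val = q.val then r.val
      else if q.val < (σ y).val ∧ (σ y).val ≤ r.val then (σ y).val - 1
      else (σ y).val := by
    intro y
    rw [hσ'', Equiv.trans_apply]
    exact cyc_val _ _ _ hqr
  have postardy : ∀ a ∈ tardySet p₁ p₂ d₂ σ, σ'' (Sum.inr a) = σ (Sum.inr a) := by
    intro a ha
    rw [hσ'', Equiv.trans_apply]
    exact cyc_gt hqr (hIII a ha j' hj')
  have hthresh : ∀ (y : Fin n ⊕ Fin k) (t : Fin (Fintype.card (Fin n ⊕ Fin k))),
      r < t → (t < σ'' y ↔ t < σ y) := by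
    intro y t ht
    rw [Fin.lt_def, Fin.lt_def, vc y]
    have h1 := Fin.lt_def.mp ht
    have h2 := Fin.le_def.mp hqr
    split_ifs <;> omega
  have bp1eq : bp1 p₁ p₂ d₂ σ'' = bp1 p₁ p₂ d₂ σ := by
    unfold bp1
    congr 1
    apply Finset.filter_congr
    intro z _
    rw [hset]
    apply and_congr_right
    intro hz1
    rw [postardy z.1 hz1]
    exact hthresh (Sum.inl z.2) (σ (Sum.inr z.1)) (hIII z.1 hz1 j' hj')
  have bp2eq : bp2 p₁ p₂ d₂ σ'' = bp2 p₁ p₂ d₂ σ := by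
    unfold bp2
    congr 1
    apply Finset.filter_congr
    intro z _
    rw [hset]
    apply and_congr_right
    intro hz1
    apply and_congr_right
    intro _
    rw [postardy z.1 hz1]
    exact hthresh (Sum.inr z.2) (σ (Sum.inr z.1)) (hIII z.1 hz1 j' hj')
  -- the key order lemma for early jobs
  have hclass : ∀ a, a ∉ tardySet p₁ p₂ d₂ σ →
      ¬(q.val < (σ (Sum.inr a)).val ∧ (σ (Sum.inr a)).val < r.val) := by
    intro a ha hc
    exact hadj a ha ⟨Fin.lt_def.mpr hc.1, Fin.lt_def.mpr hc.2⟩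
  have heqiff : ∀ (a b : Fin k), (a = b) ↔ (σ (Sum.inr a)).val = (σ (Sum.inr b)).val := by
    intro a b
    constructor
    · intro h; rw [h]
    · intro h
      have := σ.injective (Fin.ext h)
      exact Sum.inr_injective this
  have key : ∀ a b : Fin k, a ∉ tardySet p₁ p₂ d₂ σ → b ∉ tardySet p₁ p₂ d₂ σ →
      a ≠ b → ¬(a = j' ∧ b = j) →
      (σ'' (Sum.inr a) < σ'' (Sum.inr b) ↔
        (¬(a = j ∧ b = j') ∧ σ (Sum.inr a) < σ (Sum.inr b))) := by
    intro a b ha hb hab hex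
    have hA := hclass a ha
    have hB := hclass b hb
    have hne' : (σ (Sum.inr a)).val ≠ (σ (Sum.inr b)).val :=
      fun h => hab ((heqiff a b).mpr h)
    have hq' : q.val < r.val := Fin.lt_def.mp hqlt
    rw [Fin.lt_def, Fin.lt_def, vc (Sum.inr a), vc (Sum.inr b)]
    rw [heqiff a j, heqiff b j'] at *
    rw [heqiff a j', heqiff b j] at hex
    rw [hq, hr] at *
    split_ifs <;> omega
  have hjj' : j ≠ j' := fun h => absurd hd (by rw [h]; exact lt_irrefl _)
  have hmemjj' : (j, j') ∈ (univ.filter fun z : Fin k × Fin k =>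
      z.1 ∉ tardySet p₁ p₂ d₂ σ ∧ z.2 ∉ tardySet p₁ p₂ d₂ σ ∧
        σ (Sum.inr z.1) < σ (Sum.inr z.2) ∧ d₂ z.2 < d₂ z.1) := by
    simp only [mem_filter, mem_univ, true_and]
    exact ⟨hj, hj', hqlt, hd⟩
  have hinv : inv2 p₁ p₂ d₂ σ'' < inv2 p₁ p₂ d₂ σ := by
    unfold inv2
    have hfil : (univ.filter fun z : Fin k × Fin k =>
        z.1 ∉ tardySet p₁ p₂ d₂ σ'' ∧ z.2 ∉ tardySet p₁ p₂ d₂ σ'' ∧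
          σ'' (Sum.inr z.1) < σ'' (Sum.inr z.2) ∧ d₂ z.2 < d₂ z.1)
        = (univ.filter fun z : Fin k × Fin k =>
        z.1 ∉ tardySet p₁ p₂ d₂ σ ∧ z.2 ∉ tardySet p₁ p₂ d₂ σ ∧
          σ (Sum.inr z.1) < σ (Sum.inr z.2) ∧ d₂ z.2 < d₂ z.1).erase (j, j') := by
      ext z
      obtain ⟨a, b⟩ := z
      simp only [mem_filter, mem_erase, mem_univ, true_and, hset]
      constructor
      · rintro ⟨ha, hb, hord, hdc⟩
        have hab : a ≠ b := fun h => absurd hdc (by rw [h]; exact lt_irrefl _)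
        have hex : ¬(a = j' ∧ b = j) := by
          rintro ⟨rfl, rfl⟩
          omega
        obtain ⟨hnp, hlt'⟩ := (key a b ha hb hab hex).mp hord
        refine ⟨?_, ha, hb, hlt', hdc⟩
        intro hcontra
        rw [Prod.mk.injEq] at hcontra
        exact hnp ⟨hcontra.1, hcontra.2⟩
      · rintro ⟨hnejj, ha, hb, hlt', hdc⟩
        have hab : a ≠ b := fun h => absurd hdc (by rw [h]; exact lt_irrefl _)
        have hex : ¬(a = j' ∧ b = j) := by
          rintro ⟨rfl, rfl⟩
          omega
        refine ⟨ha, hb, ?_, hdc⟩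
        apply (key a b ha hb hab hex).mpr
        refine ⟨?_, hlt'⟩
        rintro ⟨rfl, rfl⟩
        exact hnejj rfl
    rw [hfil, Finset.card_erase_of_mem hmemjj']
    have hpos : 0 < (univ.filter fun z : Fin k × Fin k =>
        z.1 ∉ tardySet p₁ p₂ d₂ σ ∧ z.2 ∉ tardySet p₁ p₂ d₂ σ ∧
          σ (Sum.inr z.1) < σ (Sum.inr z.2) ∧ d₂ z.2 < d₂ z.1).card :=
      Finset.card_pos.mpr ⟨(j, j'), hmemjj'⟩
    omega
  rcases lt_or_eq_of_le feasA with hA | hA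
  · exact improve p₁ p₂ d₂ σ'' σ
      (Or.inr ⟨by rw [hset], Or.inr ⟨bp1eq, Or.inr ⟨bp2eq, Or.inl hA⟩⟩⟩)
  · exact improve p₁ p₂ d₂ σ'' σ
      (Or.inr ⟨by rw [hset], Or.inr ⟨bp1eq, Or.inr ⟨bp2eq, Or.inr ⟨hA, hinv⟩⟩⟩⟩)

end SLmain


open Finset SLmain in
/-- Lemma 6 (structural lemma) for
`1 | ∑ C_j^{(1)} ≤ A₁, ∑ w_j^{(2)} U_j^{(2)} ≤ A₂ |`:
if a feasible schedule exists, then one exists in which (i) the agent-1 jobs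
follow the SPT rule, (ii) the early agent-2 jobs follow the EDD rule, and
(iii) every tardy agent-2 job is scheduled after every agent-1 job and after
every early agent-2 job. -/
theorem structural_lemma_sumC_weightedU
    (n k : ℕ) (p₁ : Fin n → ℕ) (p₂ d₂ w₂ : Fin k → ℕ) (A₁ A₂ : ℕ)
    (h : ∃ σ : (Fin n ⊕ Fin k) ≃ Fin (Fintype.card (Fin n ⊕ Fin k)),
      (∑ i, completionTime (Sum.elim p₁ p₂) σ (Sum.inl i) ≤ A₁) ∧
      (∑ j ∈ Finset.univ.filter
          (fun j : Fin k => d₂ j < completionTime (Sum.elim p₁ p₂) σ (Sum.inr j)),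
        w₂ j) ≤ A₂) :
    ∃ σ' : (Fin n ⊕ Fin k) ≃ Fin (Fintype.card (Fin n ⊕ Fin k)),
      (∑ i, completionTime (Sum.elim p₁ p₂) σ' (Sum.inl i) ≤ A₁) ∧
      ((∑ j ∈ Finset.univ.filter
          (fun j : Fin k => d₂ j < completionTime (Sum.elim p₁ p₂) σ' (Sum.inr j)),
        w₂ j) ≤ A₂) ∧
      -- (i) agent-1 jobs in SPT order
      (∀ i i' : Fin n, σ' (Sum.inl i) < σ' (Sum.inl i') → p₁ i ≤ p₁ i') ∧
      -- (ii) early agent-2 jobs in EDD order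
      (∀ j j' : Fin k,
        completionTime (Sum.elim p₁ p₂) σ' (Sum.inr j) ≤ d₂ j →
        completionTime (Sum.elim p₁ p₂) σ' (Sum.inr j') ≤ d₂ j' →
        σ' (Sum.inr j) < σ' (Sum.inr j') → d₂ j ≤ d₂ j') ∧
      -- (iii) tardy agent-2 jobs are scheduled last
      (∀ j : Fin k, d₂ j < completionTime (Sum.elim p₁ p₂) σ' (Sum.inr j) →
        (∀ i : Fin n, σ' (Sum.inl i) < σ' (Sum.inr j)) ∧
        (∀ j' : Fin k, completionTime (Sum.elim p₁ p₂) σ' (Sum.inr j') ≤ d₂ j' →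
          σ' (Sum.inr j') < σ' (Sum.inr j))) := by
  classical
  obtain ⟨σ₀, h1, h2⟩ := h
  set S : Finset ((Fin n ⊕ Fin k) ≃ Fin (Fintype.card (Fin n ⊕ Fin k))) :=
    univ.filter (fun σ => sumC1 p₁ p₂ σ ≤ A₁ ∧ tardyW p₁ p₂ d₂ w₂ σ ≤ A₂) with hSdef
  have hS0 : σ₀ ∈ S := by
    rw [hSdef, mem_filter]
    exact ⟨mem_univ _, h1, h2⟩
  obtain ⟨σ', hmemS, hmin⟩ := Finset.exists_min_image S (Phi p₁ p₂ d₂) ⟨σ₀, hS0⟩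
  have hfeas : sumC1 p₁ p₂ σ' ≤ A₁ ∧ tardyW p₁ p₂ d₂ w₂ σ' ≤ A₂ := by
    rw [hSdef, mem_filter] at hmemS
    exact hmemS.2
  have hcontra : ∀ σ'', sumC1 p₁ p₂ σ'' ≤ sumC1 p₁ p₂ σ' →
      tardyW p₁ p₂ d₂ w₂ σ'' ≤ tardyW p₁ p₂ d₂ w₂ σ' →
      Phi p₁ p₂ d₂ σ'' < Phi p₁ p₂ d₂ σ' → False := by
    intro σ'' hA hB hC
    have hmem : σ'' ∈ S := by
      rw [hSdef, mem_filter]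
      exact ⟨mem_univ _, le_trans hA hfeas.1, le_trans hB hfeas.2⟩
    exact absurd (hmin σ'' hmem) (not_le.mpr hC)
  -- property (iii)
  have P3 : ∀ a ∈ tardySet p₁ p₂ d₂ σ',
      (∀ i : Fin n, σ' (Sum.inl i) < σ' (Sum.inr a)) ∧
      (∀ b, b ∉ tardySet p₁ p₂ d₂ σ' → σ' (Sum.inr b) < σ' (Sum.inr a)) := by
    intro a ha
    constructor
    · intro i
      by_contra hcon
      have hlt : σ' (Sum.inr a) < σ' (Sum.inl i) := by
        apply lt_of_le_of_ne (not_lt.mp hcon)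
        intro hcontra2
        exact absurd (σ'.injective hcontra2) (by simp)
      obtain ⟨σ'', hA, hB, hC⟩ :=
        exchangeA p₁ p₂ d₂ w₂ σ' a ha (Sum.inl i) (Or.inl ⟨i, rfl⟩) hlt
      exact hcontra σ'' hA hB hC
    · intro b hb
      by_contra hcon
      have hlt : σ' (Sum.inr a) < σ' (Sum.inr b) := by
        apply lt_of_le_of_ne (not_lt.mp hcon)
        intro hcontra2
        have := Sum.inr_injective (σ'.injective hcontra2)
        exact hb (this ▸ ha)
      obtain ⟨σ'', hA, hB, hC⟩ :=
        exchangeA p₁ p₂ d₂ w₂ σ' a ha (Sum.inr b) (Or.inr ⟨b, rfl, hb⟩) hlt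
      exact hcontra σ'' hA hB hC
  -- property (i)
  have P1 : ∀ i i' : Fin n, σ' (Sum.inl i) < σ' (Sum.inl i') → p₁ i ≤ p₁ i' := by
    intro i i' hlt
    by_contra hcon
    obtain ⟨σ'', hA, hB, hC⟩ :=
      exchangeB p₁ p₂ d₂ w₂ σ' i i' hlt (not_le.mp hcon)
    exact hcontra σ'' hA hB hC
  -- property (ii)
  have P2 : ∀ j j' : Fin k, j ∉ tardySet p₁ p₂ d₂ σ' → j' ∉ tardySet p₁ p₂ d₂ σ' →
      σ' (Sum.inr j) < σ' (Sum.inr j') → d₂ j ≤ d₂ j' := by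
    intro j j' hj hj' hlt
    by_contra hcon
    have hd : d₂ j' < d₂ j := not_le.mp hcon
    set Pairs := univ.filter (fun z : Fin k × Fin k =>
      z.1 ∉ tardySet p₁ p₂ d₂ σ' ∧ z.2 ∉ tardySet p₁ p₂ d₂ σ' ∧
        σ' (Sum.inr z.1) < σ' (Sum.inr z.2) ∧ d₂ z.2 < d₂ z.1) with hPdef
    have hPne : Pairs.Nonempty := by
      refine ⟨(j, j'), ?_⟩
      rw [hPdef, mem_filter]
      exact ⟨mem_univ _, hj, hj', hlt, hd⟩
    obtain ⟨zmin, hzmem, hzmin⟩ := Finset.exists_min_image Pairs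
      (fun z => (σ' (Sum.inr z.2)).val - (σ' (Sum.inr z.1)).val) hPne
    rw [hPdef, mem_filter] at hzmem
    obtain ⟨-, ha, hb, hord, hdc⟩ := hzmem
    have hadj : ∀ c, c ∉ tardySet p₁ p₂ d₂ σ' →
        ¬(σ' (Sum.inr zmin.1) < σ' (Sum.inr c) ∧ σ' (Sum.inr c) < σ' (Sum.inr zmin.2)) := by
      rintro c hc ⟨hc1, hc2⟩
      have v1 := Fin.lt_def.mp hc1
      have v2 := Fin.lt_def.mp hc2
      have v3 := Fin.lt_def.mp hord
      rcases le_or_gt (d₂ zmin.1) (d₂ c) with hdc2 | hdc2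
      · have hmem2 : (c, zmin.2) ∈ Pairs := by
          rw [hPdef, mem_filter]
          exact ⟨mem_univ _, hc, hb, hc2, lt_of_lt_of_le hdc hdc2⟩
        have := hzmin (c, zmin.2) hmem2
        simp only at this
        omega
      · have hmem2 : (zmin.1, c) ∈ Pairs := by
          rw [hPdef, mem_filter]
          exact ⟨mem_univ _, ha, hc, hc1, hdc2⟩
        have := hzmin (zmin.1, c) hmem2
        simp only at this
        omega
    obtain ⟨σ'', hA, hB, hC⟩ :=
      exchangeC p₁ p₂ d₂ w₂ σ' zmin.1 zmin.2 ha hb hord hdc hadj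
        (fun t ht b' hb' => (P3 t ht).2 b' hb')
    exact hcontra σ'' hA hB hC
  refine ⟨σ', hfeas.1, hfeas.2, P1, ?_, ?_⟩
  · intro j j' hje hj'e hlt
    exact P2 j j'
      (fun hmem => absurd ((mem_tardySet p₁ p₂ d₂).mp hmem) (not_lt.mpr hje))
      (fun hmem => absurd ((mem_tardySet p₁ p₂ d₂).mp hmem) (not_lt.mpr hj'e)) hlt
  · intro j htardy
    obtain ⟨g1, g2⟩ := P3 j ((mem_tardySet p₁ p₂ d₂).mpr htardy)
    exact ⟨g1, fun j' hj'e => g2 j'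
      (fun hmem => absurd ((mem_tardySet p₁ p₂ d₂).mp hmem) (not_lt.mpr hj'e))⟩
end

section
/- Let the agent-1 jobs have processing times p₁ : Fin n → ℕ and due dates d₁ : Fin n → ℕ, and let the agent-2 jobs have processing times p₂ : Fin k → ℕ and weights w₂ : Fin k → ℕ; let A₁, A₂ : ℕ. If there exists a schedule σ with at most A₁ tardy agent-1 jobs and ∑ j, w₂ j · C (inr j) ≤ A₂, then there exists a schedule σ' with at most A₁ tardy agent-1 jobs and ∑ j, w₂ j · C (inr j) ≤ A₂ in which additionally: (i) every tardy agent-1 job is scheduled after every early agent-1 job and after every agent-2 job; and (ii) for all early agent-1 jobs i, i', if σ' (inl i) < σ' (inl i') then d₁ i ≤ d₁ i'. -/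
namespace SL7
open Finset

def cycF (q r v : ℕ) : ℕ := if v = q then r else if q < v ∧ v ≤ r then v - 1 else v
def cycG (q r v : ℕ) : ℕ := if v = r then q else if q ≤ v ∧ v < r then v + 1 else v

def cyc {M : ℕ} (q r : Fin M) (hqr : q.val ≤ r.val) : Equiv.Perm (Fin M) where
  toFun x := ⟨cycF q.val r.val x.val, by
    have := x.isLt; have := q.isLt; have := r.isLt; unfold cycF; split_ifs <;> omega⟩
  invFun x := ⟨cycG q.val r.val x.val, by
    have := x.isLt; have := q.isLt; have := r.isLt; unfold cycG; split_ifs <;> omega⟩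
  left_inv x := by
    have := x.isLt; have := q.isLt; have := r.isLt
    apply Fin.ext; show cycG _ _ (cycF _ _ _) = x.val
    unfold cycF cycG; split_ifs <;> omega
  right_inv x := by
    have := x.isLt; have := q.isLt; have := r.isLt
    apply Fin.ext; show cycF _ _ (cycG _ _ _) = x.val
    unfold cycF cycG; split_ifs <;> omega

lemma cyc_val {M : ℕ} (q r : Fin M) (hqr : q.val ≤ r.val) (x : Fin M) :
    (cyc q r hqr x).val =
      if x.val = q.val then r.val else
      if q.val < x.val ∧ x.val ≤ r.val then x.val - 1 else x.val := rfl

section CT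
variable {ι : Type*} [Fintype ι] (p : ι → ℕ) (σ : ι ≃ Fin (Fintype.card ι))
  (q r : Fin (Fintype.card ι)) (hqr : q.val ≤ r.val)

lemma C_unmoved (i : ι) (hi : (σ i).val < q.val ∨ r.val < (σ i).val) :
    completionTime p (σ.trans (cyc q r hqr)) i = completionTime p σ i := by
  unfold completionTime
  apply Finset.sum_congr _ (fun _ _ => rfl)
  ext j
  simp only [mem_filter, mem_univ, true_and, Equiv.trans_apply, Fin.le_def, cyc_val]
  split_ifs <;> omega

lemma C_moved (i : ι) (hi : σ i = q) :
    completionTime p (σ.trans (cyc q r hqr)) i = completionTime p σ (σ.symm r) := by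
  unfold completionTime
  apply Finset.sum_congr _ (fun _ _ => rfl)
  ext j
  simp only [mem_filter, mem_univ, true_and, Equiv.trans_apply, Fin.le_def, cyc_val,
    Equiv.apply_symm_apply, hi]
  split_ifs <;> omega

lemma C_mid (i : ι) (h1 : q.val < (σ i).val) (h2 : (σ i).val ≤ r.val) :
    completionTime p (σ.trans (cyc q r hqr)) i ≤ completionTime p σ i := by
  unfold completionTime
  apply Finset.sum_le_sum_of_subset
  intro j hj
  simp only [mem_filter, mem_univ, true_and, Equiv.trans_apply, Fin.le_def, cyc_val] at *
  split_ifs at hj <;> omega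

end CT

section Main
variable {n k : ℕ} (p₁ d₁ : Fin n → ℕ) (p₂ w₂ : Fin k → ℕ)

local notation "M" => Fintype.card (Fin n ⊕ Fin k)
local notation "Sch" => (Fin n ⊕ Fin k) ≃ Fin M

def Cj (σ : Sch) (x : Fin n ⊕ Fin k) : ℕ := completionTime (Sum.elim p₁ p₂) σ x

def T (σ : Sch) : Finset (Fin n) :=
  univ.filter (fun i => d₁ i < Cj p₁ p₂ σ (Sum.inl i))

def Phi (σ : Sch) : ℕ := ∑ i ∈ T p₁ d₁ p₂ σ, (M - (σ (Sum.inl i)).val)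

def Psi (σ : Sch) : ℕ :=
  (univ.filter (fun ab : Fin n × Fin n =>
    Cj p₁ p₂ σ (Sum.inl ab.1) ≤ d₁ ab.1 ∧ Cj p₁ p₂ σ (Sum.inl ab.2) ≤ d₁ ab.2 ∧
    σ (Sum.inl ab.1) < σ (Sum.inl ab.2) ∧ d₁ ab.2 < d₁ ab.1)).card

def F (σ : Sch) : ℕ := Phi p₁ d₁ p₂ σ * (n * n + 1) + Psi p₁ d₁ p₂ σ

lemma Psi_lt (σ : Sch) : Psi p₁ d₁ p₂ σ < n * n + 1 := by
  have : Psi p₁ d₁ p₂ σ ≤ n * n := by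
    refine le_trans (Finset.card_filter_le _ _) ?_
    simp
  omega

lemma F_lt_F (σ σ' : Sch)
    (h1 : Phi p₁ d₁ p₂ σ < Phi p₁ d₁ p₂ σ') : F p₁ d₁ p₂ σ < F p₁ d₁ p₂ σ' := by
  have h2 := Psi_lt p₁ d₁ p₂ σ
  unfold F
  calc Phi p₁ d₁ p₂ σ * (n*n+1) + Psi p₁ d₁ p₂ σ
      < (Phi p₁ d₁ p₂ σ + 1) * (n*n+1) := by rw [add_mul, one_mul]; omega
    _ ≤ Phi p₁ d₁ p₂ σ' * (n*n+1) := Nat.mul_le_mul_right _ h1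
    _ ≤ _ := Nat.le_add_right _ _

/-- Move 1: a tardy job at position q with a non-tardy job right after it at q+1;
swapping them preserves feasibility and strictly decreases F. -/
lemma move1 (σ : Sch) (q : Fin M) (hq1 : q.val + 1 < M)
    (i : Fin n) (hiq : σ (Sum.inl i) = q) (hit : d₁ i < Cj p₁ p₂ σ (Sum.inl i))
    (hx : ∀ t : Fin n, σ.symm ⟨q.val + 1, hq1⟩ = Sum.inl t →
      Cj p₁ p₂ σ (Sum.inl t) ≤ d₁ t) :
    ∃ σ'' : Sch, (T p₁ d₁ p₂ σ'').card ≤ (T p₁ d₁ p₂ σ).card ∧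
      (∀ j : Fin k, Cj p₁ p₂ σ'' (Sum.inr j) ≤ Cj p₁ p₂ σ (Sum.inr j)) ∧
      F p₁ d₁ p₂ σ'' < F p₁ d₁ p₂ σ := by
  set r : Fin M := ⟨q.val + 1, hq1⟩ with hr
  have hqr : q.val ≤ r.val := by simp [hr]
  have hqM := q.isLt
  set σ'' : Sch := σ.trans (cyc q r hqr) with hσ''
  -- completion times weakly decrease for every job other than `inl i`
  have hC : ∀ x : Fin n ⊕ Fin k, x ≠ Sum.inl i →
      Cj p₁ p₂ σ'' x ≤ Cj p₁ p₂ σ x := by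
    intro x hx'
    have hne : (σ x).val ≠ q.val := by
      intro hc
      exact hx' (σ.injective (by rw [hiq]; exact Fin.ext hc))
    by_cases hmid : (σ x).val = q.val + 1
    · exact C_mid _ σ q r hqr x (by omega) (by simp [hr]; omega)
    · exact le_of_eq (C_unmoved _ σ q r hqr x (by simp [hr]; omega))
  -- tardy set shrinks
  have hT : T p₁ d₁ p₂ σ'' ⊆ T p₁ d₁ p₂ σ := by
    intro a ha
    simp only [T, mem_filter, mem_univ, true_and] at *
    by_cases hai : a = i
    · subst hai; exact hit
    · exact lt_of_lt_of_le ha (hC _ (by simp [hai]))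
  refine ⟨σ'', Finset.card_le_card hT, fun j => hC (Sum.inr j) (by simp), ?_⟩
  apply F_lt_F
  -- position facts
  have hposi : (σ'' (Sum.inl i)).val = q.val + 1 := by
    simp only [hσ'', Equiv.trans_apply, cyc_val, hiq, if_pos rfl, hr]
    simp
  have hpos : ∀ t : Fin n, t ≠ i → t ∈ T p₁ d₁ p₂ σ'' →
      (σ'' (Sum.inl t)).val = (σ (Sum.inl t)).val := by
    intro t hti htT
    have hne : (σ (Sum.inl t)).val ≠ q.val := by
      intro hc
      exact hti (Sum.inl.injEq .. ▸ (σ.injective (by rw [hiq]; exact Fin.ext hc)) : _)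
    have hne2 : (σ (Sum.inl t)).val ≠ q.val + 1 := by
      intro hc
      have hft : σ (Sum.inl t) = (⟨q.val+1, hq1⟩ : Fin M) := Fin.ext hc
      have : σ.symm ⟨q.val+1, hq1⟩ = Sum.inl t := by
        rw [← hft, Equiv.symm_apply_apply]
      have := hx t this
      have htT' := hT htT
      simp only [T, mem_filter, mem_univ, true_and] at htT'
      omega
    simp only [hσ'', Equiv.trans_apply, cyc_val]
    split_ifs <;> simp [hr] at * <;> omega
  have hiT : i ∈ T p₁ d₁ p₂ σ := by
    simp only [T, mem_filter, mem_univ, true_and]; exact hit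
  -- Phi decreases
  unfold Phi
  have key : ∑ t ∈ (T p₁ d₁ p₂ σ'').erase i, (M - (σ'' (Sum.inl t)).val)
      ≤ ∑ t ∈ (T p₁ d₁ p₂ σ).erase i, (M - (σ (Sum.inl t)).val) := by
    rw [Finset.sum_congr rfl (fun t ht => by
      rw [hpos t (Finset.ne_of_mem_erase ht) (Finset.mem_of_mem_erase ht)])]
    exact Finset.sum_le_sum_of_subset (Finset.erase_subset_erase _ hT)
  have hsplit : ∑ t ∈ T p₁ d₁ p₂ σ, (M - (σ (Sum.inl t)).val)
      = ∑ t ∈ (T p₁ d₁ p₂ σ).erase i, (M - (σ (Sum.inl t)).val) + (M - q.val) := by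
    rw [← hiq, Finset.sum_erase_add _ _ hiT]
  rw [hsplit]
  by_cases hi'' : i ∈ T p₁ d₁ p₂ σ''
  · rw [← Finset.sum_erase_add _ _ hi'', hposi]
    omega
  · rw [Finset.erase_eq_of_notMem hi''] at key
    omega


/-- Move 2: insertion move fixing an adjacent EDD violation among early jobs,
assuming all tardy jobs are already after all early jobs. -/
lemma move2 (σ : Sch)
    (htl : ∀ t : Fin n, d₁ t < Cj p₁ p₂ σ (Sum.inl t) →
      ∀ a : Fin n, Cj p₁ p₂ σ (Sum.inl a) ≤ d₁ a → σ (Sum.inl a) < σ (Sum.inl t))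
    (e e' : Fin n)
    (he : Cj p₁ p₂ σ (Sum.inl e) ≤ d₁ e) (he' : Cj p₁ p₂ σ (Sum.inl e') ≤ d₁ e')
    (hd : d₁ e' < d₁ e) (hlt : σ (Sum.inl e) < σ (Sum.inl e'))
    (hnb : ∀ c : Fin n, Cj p₁ p₂ σ (Sum.inl c) ≤ d₁ c →
      ¬(σ (Sum.inl e) < σ (Sum.inl c) ∧ σ (Sum.inl c) < σ (Sum.inl e'))) :
    ∃ σ'' : Sch, (T p₁ d₁ p₂ σ'').card ≤ (T p₁ d₁ p₂ σ).card ∧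
      (∀ j : Fin k, Cj p₁ p₂ σ'' (Sum.inr j) ≤ Cj p₁ p₂ σ (Sum.inr j)) ∧
      F p₁ d₁ p₂ σ'' < F p₁ d₁ p₂ σ := by
  set q : Fin M := σ (Sum.inl e) with hq
  set r : Fin M := σ (Sum.inl e') with hrr
  have hqrv : q.val < r.val := hlt
  have hqr : q.val ≤ r.val := le_of_lt hqrv
  set σ'' : Sch := σ.trans (cyc q r hqr) with hσ''
  have hee' : e ≠ e' := by intro hc; subst hc; omega
  -- tardy jobs are strictly after r
  have htpos : ∀ t : Fin n, d₁ t < Cj p₁ p₂ σ (Sum.inl t) → r.val < (σ (Sum.inl t)).val := by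
    intro t ht
    exact htl t ht e' he'
  -- agent-1 jobs other than e, e' are outside [q, r]
  have hcls : ∀ c : Fin n, c ≠ e → c ≠ e' →
      (σ (Sum.inl c)).val < q.val ∨ r.val < (σ (Sum.inl c)).val := by
    intro c hce hce'
    have h1 : (σ (Sum.inl c)).val ≠ q.val := fun hc =>
      hce (Sum.inl.inj (σ.injective (Fin.ext hc)))
    have h2 : (σ (Sum.inl c)).val ≠ r.val := fun hc =>
      hce' (Sum.inl.inj (σ.injective (Fin.ext hc)))
    by_cases hec : Cj p₁ p₂ σ (Sum.inl c) ≤ d₁ c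
    · have := hnb c hec
      simp only [Fin.lt_def] at this
      omega
    · have := htpos c (by omega)
      omega
  -- completion times
  have hsymr : σ.symm r = Sum.inl e' := by rw [hrr, Equiv.symm_apply_apply]
  have hCe : Cj p₁ p₂ σ'' (Sum.inl e) = Cj p₁ p₂ σ (Sum.inl e') := by
    have := C_moved (Sum.elim p₁ p₂) σ q r hqr (Sum.inl e) rfl
    rw [hsymr] at this
    exact this
  have hCle : ∀ x : Fin n ⊕ Fin k, x ≠ Sum.inl e →
      Cj p₁ p₂ σ'' x ≤ Cj p₁ p₂ σ x := by
    intro x hx'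
    have hne : (σ x).val ≠ q.val := fun hc => hx' (σ.injective (Fin.ext hc))
    by_cases hmid : q.val < (σ x).val ∧ (σ x).val ≤ r.val
    · exact C_mid _ σ q r hqr x hmid.1 hmid.2
    · exact le_of_eq (C_unmoved _ σ q r hqr x (by omega))
  have hCother : ∀ c : Fin n, c ≠ e → c ≠ e' →
      Cj p₁ p₂ σ'' (Sum.inl c) = Cj p₁ p₂ σ (Sum.inl c) :=
    fun c h1 h2 => C_unmoved _ σ q r hqr _ (hcls c h1 h2)
  -- earliness is preserved
  have hearly : ∀ c : Fin n,
      (Cj p₁ p₂ σ'' (Sum.inl c) ≤ d₁ c ↔ Cj p₁ p₂ σ (Sum.inl c) ≤ d₁ c) := by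
    intro c
    rcases eq_or_ne c e with rfl | h1
    · rw [hCe]; constructor <;> intro <;> omega
    rcases eq_or_ne c e' with rfl | h2
    · have := hCle (Sum.inl c) (by simpa using h1)
      constructor <;> intro <;> omega
    · rw [hCother c h1 h2]
  have hTeq : T p₁ d₁ p₂ σ'' = T p₁ d₁ p₂ σ := by
    ext a
    simp only [T, mem_filter, mem_univ, true_and]
    have := hearly a
    omega
  -- positions
  have hp_e : (σ'' (Sum.inl e)).val = r.val := by
    simp only [hσ'', Equiv.trans_apply, cyc_val, ← hq, if_pos rfl]
    simp
  have hp_e' : (σ'' (Sum.inl e')).val = r.val - 1 := by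
    simp only [hσ'', Equiv.trans_apply, cyc_val, ← hrr]
    have : r.val ≠ q.val := by omega
    rw [if_neg this, if_pos ⟨hqrv, le_refl _⟩]
  have hp_other : ∀ c : Fin n, c ≠ e → c ≠ e' →
      (σ'' (Sum.inl c)).val = (σ (Sum.inl c)).val := by
    intro c h1 h2
    have := hcls c h1 h2
    simp only [hσ'', Equiv.trans_apply, cyc_val]
    split_ifs <;> omega
  -- Phi is unchanged
  have hPhi : Phi p₁ d₁ p₂ σ'' = Phi p₁ d₁ p₂ σ := by
    unfold Phi
    rw [hTeq]
    apply Finset.sum_congr rfl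
    intro t ht
    simp only [T, mem_filter, mem_univ, true_and] at ht
    have h3 := htpos t ht
    have h1 : t ≠ e := by intro hc; subst hc; omega
    have h2 : t ≠ e' := by intro hc; subst hc; omega
    rw [hp_other t h1 h2]
  -- Psi strictly decreases
  have hmemS : (e, e') ∈ (univ.filter (fun ab : Fin n × Fin n =>
      Cj p₁ p₂ σ (Sum.inl ab.1) ≤ d₁ ab.1 ∧ Cj p₁ p₂ σ (Sum.inl ab.2) ≤ d₁ ab.2 ∧
      σ (Sum.inl ab.1) < σ (Sum.inl ab.2) ∧ d₁ ab.2 < d₁ ab.1)) := by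
    simp only [mem_filter, mem_univ, true_and]
    exact ⟨he, he', hlt, hd⟩
  have hPsi : Psi p₁ d₁ p₂ σ'' < Psi p₁ d₁ p₂ σ := by
    unfold Psi
    have hsub : (univ.filter (fun ab : Fin n × Fin n =>
        Cj p₁ p₂ σ'' (Sum.inl ab.1) ≤ d₁ ab.1 ∧ Cj p₁ p₂ σ'' (Sum.inl ab.2) ≤ d₁ ab.2 ∧
        σ'' (Sum.inl ab.1) < σ'' (Sum.inl ab.2) ∧ d₁ ab.2 < d₁ ab.1)) ⊆
        (univ.filter (fun ab : Fin n × Fin n =>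
        Cj p₁ p₂ σ (Sum.inl ab.1) ≤ d₁ ab.1 ∧ Cj p₁ p₂ σ (Sum.inl ab.2) ≤ d₁ ab.2 ∧
        σ (Sum.inl ab.1) < σ (Sum.inl ab.2) ∧ d₁ ab.2 < d₁ ab.1)).erase (e, e') := by
      rintro ⟨a, b⟩ hab
      simp only [mem_filter, mem_univ, true_and, Fin.lt_def] at hab
      obtain ⟨hEa, hEb, hord, hdba⟩ := hab
      rw [hearly a] at hEa
      rw [hearly b] at hEb
      rw [Finset.mem_erase]
      simp only [mem_filter, mem_univ, true_and, Fin.lt_def]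
      rcases eq_or_ne a e with rfl | ha1
      · rcases eq_or_ne b e' with rfl | hb2
        · exfalso; rw [hp_e, hp_e'] at hord; omega
        · have hb1 : b ≠ a := by
            intro hc; subst hc; omega
          rw [hp_e, hp_other b hb1 hb2] at hord
          have := hcls b hb1 hb2
          exact ⟨by intro hc; rw [Prod.mk.injEq] at hc; exact hb2 hc.2,
            hEa, hEb, by omega, hdba⟩
      rcases eq_or_ne a e' with rfl | ha2
      · rcases eq_or_ne b e with rfl | hb1
        · exfalso; omega
        · have hb2 : b ≠ a := by intro hc; subst hc; omega
          rw [hp_e', hp_other b hb1 hb2] at hord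
          have := hcls b hb1 hb2
          refine ⟨by intro hc; rw [Prod.mk.injEq] at hc; exact hee' hc.1.symm,
            hEa, hEb, by omega, hdba⟩
      · have hane : (a, b) ≠ (e, e') := by
          intro hc; rw [Prod.mk.injEq] at hc; exact ha1 hc.1
        rcases eq_or_ne b e with rfl | hb1
        · rw [hp_other a ha1 ha2, hp_e] at hord
          have := hcls a ha1 ha2
          exact ⟨hane, hEa, hEb, by omega, hdba⟩
        rcases eq_or_ne b e' with rfl | hb2
        · rw [hp_other a ha1 ha2, hp_e'] at hord
          have := hcls a ha1 ha2
          exact ⟨hane, hEa, hEb, by omega, hdba⟩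
        · rw [hp_other a ha1 ha2, hp_other b hb1 hb2] at hord
          exact ⟨hane, hEa, hEb, hord, hdba⟩
    calc _ ≤ _ := Finset.card_le_card hsub
      _ < _ := by
        rw [Finset.card_erase_of_mem hmemS]
        have := Finset.card_pos.mpr ⟨_, hmemS⟩
        omega
  refine ⟨σ'', by rw [hTeq], fun j => hCle (Sum.inr j) (by simp), ?_⟩
  unfold F
  rw [hPhi]
  omega


lemma exists_boundary (P : ℕ → Prop) :
    ∀ b a, a < b → P a → ¬P b → ∃ m, P m ∧ ¬P (m + 1) ∧ m + 1 ≤ b := by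
  intro b
  induction b with
  | zero => omega
  | succ b ih =>
    intro a hab hPa hPb
    rcases eq_or_lt_of_le (Nat.lt_succ_iff.mp hab) with rfl | hlt
    · exact ⟨a, hPa, hPb, le_refl _⟩
    · by_cases hb : P b
      · exact ⟨b, hb, hPb, le_refl _⟩
      · obtain ⟨m, h1, h2, h3⟩ := ih a hlt hPa hb
        exact ⟨m, h1, h2, h3.trans (Nat.le_succ b)⟩

lemma adj_inversion (σ : Sch) :
    ∀ g : ℕ, ∀ a b : Fin n,
      Cj p₁ p₂ σ (Sum.inl a) ≤ d₁ a → Cj p₁ p₂ σ (Sum.inl b) ≤ d₁ b →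
      σ (Sum.inl a) < σ (Sum.inl b) → d₁ b < d₁ a →
      (σ (Sum.inl b)).val - (σ (Sum.inl a)).val ≤ g →
      ∃ e e' : Fin n, Cj p₁ p₂ σ (Sum.inl e) ≤ d₁ e ∧ Cj p₁ p₂ σ (Sum.inl e') ≤ d₁ e' ∧
        d₁ e' < d₁ e ∧ σ (Sum.inl e) < σ (Sum.inl e') ∧
        (∀ c : Fin n, Cj p₁ p₂ σ (Sum.inl c) ≤ d₁ c →
          ¬(σ (Sum.inl e) < σ (Sum.inl c) ∧ σ (Sum.inl c) < σ (Sum.inl e'))) := by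
  intro g
  induction g with
  | zero =>
    intro a b _ _ hab _ hg
    have := Fin.lt_def.mp hab
    omega
  | succ g ih =>
    intro a b hEa hEb hab hdba hg
    by_cases hex : ∃ c : Fin n, Cj p₁ p₂ σ (Sum.inl c) ≤ d₁ c ∧
        σ (Sum.inl a) < σ (Sum.inl c) ∧ σ (Sum.inl c) < σ (Sum.inl b)
    · obtain ⟨c, hEc, hac, hcb⟩ := hex
      have h1 := Fin.lt_def.mp hac
      have h2 := Fin.lt_def.mp hcb
      by_cases hdc : d₁ c < d₁ a
      · exact ih a c hEa hEc hac hdc (by omega)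
      · exact ih c b hEc hEb hcb (by omega) (by omega)
    · push_neg at hex
      exact ⟨a, b, hEa, hEb, hdba, hab, fun c hc hcc => absurd (hex c hc hcc.1) (not_le.mpr hcc.2)⟩

end Main
end SL7

open SL7 Finset

/-- Structural content of Lemma 7 for
`1 | ∑ U_j^{(1)} ≤ A₁, ∑ w_j^{(2)} C_j^{(2)} ≤ A₂ |`:
if a schedule with at most `A₁` tardy agent-1 jobs and agent-2 weighted total
completion time at most `A₂` exists, then one exists in which additionally
(i) every tardy agent-1 job is scheduled after every early agent-1 job and
after every agent-2 job, and (ii) the early agent-1 jobs follow the EDD rule. -/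
theorem structural_lemma_sumU_weightedC
    (n k : ℕ) (p₁ d₁ : Fin n → ℕ) (p₂ w₂ : Fin k → ℕ) (A₁ A₂ : ℕ)
    (h : ∃ σ : (Fin n ⊕ Fin k) ≃ Fin (Fintype.card (Fin n ⊕ Fin k)),
      (Finset.univ.filter
        (fun i : Fin n => d₁ i < completionTime (Sum.elim p₁ p₂) σ (Sum.inl i))).card
          ≤ A₁ ∧
      (∑ j, w₂ j * completionTime (Sum.elim p₁ p₂) σ (Sum.inr j)) ≤ A₂) :
    ∃ σ' : (Fin n ⊕ Fin k) ≃ Fin (Fintype.card (Fin n ⊕ Fin k)),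
      (Finset.univ.filter
        (fun i : Fin n => d₁ i < completionTime (Sum.elim p₁ p₂) σ' (Sum.inl i))).card
          ≤ A₁ ∧
      (∑ j, w₂ j * completionTime (Sum.elim p₁ p₂) σ' (Sum.inr j)) ≤ A₂ ∧
      -- (i) tardy agent-1 jobs are scheduled last
      (∀ i : Fin n, d₁ i < completionTime (Sum.elim p₁ p₂) σ' (Sum.inl i) →
        (∀ i' : Fin n, completionTime (Sum.elim p₁ p₂) σ' (Sum.inl i') ≤ d₁ i' →
          σ' (Sum.inl i') < σ' (Sum.inl i)) ∧
        (∀ j : Fin k, σ' (Sum.inr j) < σ' (Sum.inl i))) ∧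
      -- (ii) early agent-1 jobs in EDD order
      (∀ i i' : Fin n,
        completionTime (Sum.elim p₁ p₂) σ' (Sum.inl i) ≤ d₁ i →
        completionTime (Sum.elim p₁ p₂) σ' (Sum.inl i') ≤ d₁ i' →
        σ' (Sum.inl i) < σ' (Sum.inl i') → d₁ i ≤ d₁ i') := by
  classical
  obtain ⟨σ₀, h₀1, h₀2⟩ := h
  set S : Set ℕ := {m | ∃ σ : (Fin n ⊕ Fin k) ≃ Fin (Fintype.card (Fin n ⊕ Fin k)),
    ((T p₁ d₁ p₂ σ).card ≤ A₁ ∧ (∑ j, w₂ j * Cj p₁ p₂ σ (Sum.inr j)) ≤ A₂) ∧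
    F p₁ d₁ p₂ σ = m} with hS
  have hne : S.Nonempty := ⟨F p₁ d₁ p₂ σ₀, σ₀, ⟨h₀1, h₀2⟩, rfl⟩
  obtain ⟨σ', hfeas, hFeq⟩ := Nat.sInf_mem hne
  have hmin : ∀ σ'' : (Fin n ⊕ Fin k) ≃ Fin (Fintype.card (Fin n ⊕ Fin k)),
      ((T p₁ d₁ p₂ σ'').card ≤ A₁ ∧ (∑ j, w₂ j * Cj p₁ p₂ σ'' (Sum.inr j)) ≤ A₂) →
      ¬ F p₁ d₁ p₂ σ'' < F p₁ d₁ p₂ σ' := by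
    intro σ'' hf hlt
    have : sInf S ≤ F p₁ d₁ p₂ σ'' := Nat.sInf_le ⟨σ'', hf, rfl⟩
    omega
  -- property (i): tardy jobs are after all non-tardy jobs
  have hprop1 : ∀ t : Fin n, d₁ t < Cj p₁ p₂ σ' (Sum.inl t) →
      ∀ y : Fin n ⊕ Fin k, (∀ a : Fin n, y = Sum.inl a → Cj p₁ p₂ σ' (Sum.inl a) ≤ d₁ a) →
      σ' y < σ' (Sum.inl t) := by
    by_contra hcon
    push_neg at hcon
    obtain ⟨t, ht, y, hNT, hyt⟩ := hcon
    have hne' : σ' (Sum.inl t) ≠ σ' y := by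
      intro hc
      have := σ'.injective hc
      subst this
      exact absurd (hNT t rfl) (by omega)
    have hlty : (σ' (Sum.inl t)).val < (σ' y).val :=
      Fin.lt_def.mp (lt_of_le_of_ne hyt hne')
    set P : ℕ → Prop := fun m => ∃ (hm : m < Fintype.card (Fin n ⊕ Fin k)) (t' : Fin n),
      σ'.symm ⟨m, hm⟩ = Sum.inl t' ∧ d₁ t' < Cj p₁ p₂ σ' (Sum.inl t') with hP
    have hPa : P (σ' (Sum.inl t)).val := by
      refine ⟨(σ' (Sum.inl t)).isLt, t, ?_, ht⟩
      rw [show (⟨(σ' (Sum.inl t)).val, _⟩ : Fin _) = σ' (Sum.inl t) from Fin.ext rfl,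
        Equiv.symm_apply_apply]
    have hPb : ¬ P (σ' y).val := by
      rintro ⟨hm, t', hsym, ht'⟩
      rw [show (⟨(σ' y).val, hm⟩ : Fin _) = σ' y from Fin.ext rfl,
        Equiv.symm_apply_apply] at hsym
      exact absurd (hNT t' hsym) (by omega)
    obtain ⟨m, hPm, hPm1, hmb⟩ := exists_boundary P _ _ hlty hPa hPb
    obtain ⟨hm, t0, hsym0, ht0⟩ := hPm
    have hm1 : m + 1 < Fintype.card (Fin n ⊕ Fin k) := by
      have := (σ' y).isLt
      omega
    have hposq : σ' (Sum.inl t0) = ⟨m, hm⟩ := by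
      rw [← hsym0, Equiv.apply_symm_apply]
    have hx : ∀ t' : Fin n, σ'.symm ⟨m + 1, hm1⟩ = Sum.inl t' →
        Cj p₁ p₂ σ' (Sum.inl t') ≤ d₁ t' := by
      intro t' hsym'
      by_contra hlate
      exact hPm1 ⟨hm1, t', hsym', by omega⟩
    obtain ⟨σ'', hc1, hc2, hc3⟩ := move1 p₁ d₁ p₂ σ' ⟨m, hm⟩ hm1 t0 hposq ht0 hx
    exact hmin σ'' ⟨hc1.trans hfeas.1,
      le_trans (Finset.sum_le_sum (fun j _ => Nat.mul_le_mul_left _ (hc2 j))) hfeas.2⟩ hc3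
  -- property (ii)
  have hprop2 : ∀ i i' : Fin n,
      Cj p₁ p₂ σ' (Sum.inl i) ≤ d₁ i → Cj p₁ p₂ σ' (Sum.inl i') ≤ d₁ i' →
      σ' (Sum.inl i) < σ' (Sum.inl i') → d₁ i ≤ d₁ i' := by
    by_contra hcon
    push_neg at hcon
    obtain ⟨a, b, hEa, hEb, hab, hdba⟩ := hcon
    obtain ⟨e, e', hEe, hEe', hde, hlt', hnb⟩ :=
      adj_inversion p₁ d₁ p₂ σ' ((σ' (Sum.inl b)).val - (σ' (Sum.inl a)).val)
        a b hEa hEb hab hdba (le_refl _)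
    have htl : ∀ t : Fin n, d₁ t < Cj p₁ p₂ σ' (Sum.inl t) →
        ∀ c : Fin n, Cj p₁ p₂ σ' (Sum.inl c) ≤ d₁ c →
        σ' (Sum.inl c) < σ' (Sum.inl t) := by
      intro t ht c hc
      exact hprop1 t ht (Sum.inl c) (fun a' ha' => by rwa [← Sum.inl.inj ha'])
    obtain ⟨σ'', hc1, hc2, hc3⟩ := move2 p₁ d₁ p₂ σ' htl e e' hEe hEe' hde hlt' hnb
    exact hmin σ'' ⟨hc1.trans hfeas.1,
      le_trans (Finset.sum_le_sum (fun j _ => Nat.mul_le_mul_left _ (hc2 j))) hfeas.2⟩ hc3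
  refine ⟨σ', hfeas.1, hfeas.2, ?_, hprop2⟩
  intro i hi
  refine ⟨fun i' hi' => hprop1 i hi (Sum.inl i') (fun a ha => by rwa [← Sum.inl.inj ha]),
    fun j => hprop1 i hi (Sum.inr j) (fun a ha => by simp at ha)⟩
end

section
/- Let the agent-1 jobs have processing times p₁ : Fin n → ℕ and due dates d₁ : Fin n → ℕ, and let the agent-2 jobs have processing times p₂ : Fin k → ℕ, due dates d₂ : Fin k → ℕ, and weights w₂ : Fin k → ℕ; let A₁, A₂ : ℕ. If there exists a schedule σ with at most A₁ tardy agent-1 jobs and ∑ over tardy agent-2 jobs j of w₂ j ≤ A₂, then there exists a schedule σ' with at most A₁ tardy agent-1 jobs and total weight of tardy agent-2 jobs at most A₂ in which additionally: (i) every early job (of either agent) is scheduled before every tardy job (of either agent); and (ii) for all early jobs i, i' (of either agent), if i is scheduled before i' under σ' then the due date of i is at most the due date of i'. -/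
section Key
variable {ι : Type*} [Fintype ι] [DecidableEq ι] (p d : ι → ℕ)

/-- One EDD-rearrangement step. -/
lemma edd_step (σ : ι ≃ Fin (Fintype.card ι)) :
    ∃ τ : ι ≃ Fin (Fintype.card ι),
      (Finset.univ.filter (fun i => d i < completionTime p τ i)) ⊆
        (Finset.univ.filter (fun i => d i < completionTime p σ i)) ∧
      ((Finset.univ.filter (fun i => d i < completionTime p τ i)) =
        (Finset.univ.filter (fun i => d i < completionTime p σ i)) →
        (∀ i i', completionTime p τ i ≤ d i → d i' < completionTime p τ i' → τ i < τ i') ∧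
        (∀ i i', completionTime p τ i ≤ d i → completionTime p τ i' ≤ d i' →
          τ i < τ i' → d i ≤ d i')) := by
  classical
  set T : Finset ι := Finset.univ.filter (fun i => d i < completionTime p σ i) with hT
  set f : ι → Lex (Bool × Lex (ℕ × Fin (Fintype.card ι))) :=
    fun i => toLex (decide (i ∈ T), toLex (d i, σ i)) with hf
  have hfinj : Function.Injective f := by
    intro a b hab
    have h1 := toLex.injective hab
    have h2 := toLex.injective (congrArg Prod.snd h1)
    exact σ.injective (congrArg Prod.snd h2)
  letI : LinearOrder ι := LinearOrder.lift' f hfinj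
  have hle : ∀ a b : ι, a ≤ b ↔ f a ≤ f b := fun a b => Iff.rfl
  have hlt : ∀ a b : ι, a < b ↔ f a < f b := by
    intro a b
    rw [lt_iff_le_not_ge, lt_iff_le_not_ge, hle, hle]
  let e : ι ≃o Fin (Fintype.card ι) := (Fintype.orderIsoFinOfCardEq ι rfl).symm
  set τ : ι ≃ Fin (Fintype.card ι) := e.toEquiv with hτ
  have hτle : ∀ a b : ι, τ a ≤ τ b ↔ f a ≤ f b := by
    intro a b; rw [show τ a ≤ τ b ↔ a ≤ b from e.le_iff_le]; exact hle a b
  have hτlt : ∀ a b : ι, τ a < τ b ↔ f a < f b := by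
    intro a b; rw [show τ a < τ b ↔ a < b from e.lt_iff_lt]; exact hlt a b
  -- facts about f
  have fact1 : ∀ i j : ι, i ∉ T → f j ≤ f i → j ∉ T ∧ d j ≤ d i := by
    intro i j hi hji
    simp only [hf] at hji
    rw [Prod.Lex.le_iff] at hji
    rcases hji with h1 | ⟨h1, h2⟩
    · exfalso
      rcases Bool.lt_iff.mp h1 with ⟨-, h3⟩
      exact hi (of_decide_eq_true h3)
    · constructor
      · intro hj
        simp [hj, hi] at h1
      · rw [Prod.Lex.le_iff] at h2
        rcases h2 with h2 | ⟨h2, -⟩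
        · exact le_of_lt h2
        · exact le_of_eq h2
  have fact2 : ∀ i i' : ι, i ∉ T → i' ∈ T → f i < f i' := by
    intro i i' hi hi'
    simp only [hf]
    rw [Prod.Lex.lt_iff]
    left
    simp [hi, hi', Bool.lt_iff]
  have fact3 : ∀ i i' : ι, i ∉ T → i' ∉ T → f i < f i' → d i ≤ d i' := by
    intro i i' hi hi' h
    simp only [hf] at h
    rw [Prod.Lex.lt_iff] at h
    rcases h with h | ⟨-, h⟩
    · simp [hi, hi'] at h
    · rw [Prod.Lex.lt_iff] at h
      rcases h with h | ⟨h, -⟩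
      · exact le_of_lt h
      · exact le_of_eq h
  -- early jobs of σ remain early under τ
  have early_pres : ∀ i : ι, i ∉ T → completionTime p τ i ≤ d i := by
    intro i hi
    set S : Finset ι := Finset.univ.filter (fun j => τ j ≤ τ i) with hS
    have hiS : i ∈ S := by simp [hS]
    obtain ⟨m, hmS, hmax⟩ := S.exists_max_image (fun j => σ j) ⟨i, hiS⟩
    have hmfi : f m ≤ f i := (hτle m i).mp (by simpa [hS] using hmS)
    obtain ⟨hmT, hmd⟩ := fact1 i m hi hmfi
    have hsub : S ⊆ Finset.univ.filter (fun j => σ j ≤ σ m) := by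
      intro j hj
      simp only [Finset.mem_filter, Finset.mem_univ, true_and]
      exact hmax j hj
    have h1 : completionTime p τ i ≤ completionTime p σ m :=
      Finset.sum_le_sum_of_subset hsub
    have h2 : completionTime p σ m ≤ d m := by
      by_contra h
      exact hmT (by simp [hT]; omega)
    omega
  have hsub : (Finset.univ.filter (fun i => d i < completionTime p τ i)) ⊆ T := by
    intro i hi
    simp only [Finset.mem_filter, Finset.mem_univ, true_and] at hi
    by_contra hiT
    exact absurd (early_pres i hiT) (by omega)
  refine ⟨τ, hsub, ?_⟩
  intro hfix
  have hearly : ∀ i : ι, completionTime p τ i ≤ d i ↔ i ∉ T := by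
    intro i
    rw [← hfix]
    simp only [Finset.mem_filter, Finset.mem_univ, true_and]
    omega
  constructor
  · intro i i' hi hi'
    rw [hτlt]
    exact fact2 i i' ((hearly i).mp hi) (hfix ▸ (by simp [hi'] : i' ∈ Finset.univ.filter (fun j => d j < completionTime p τ j)))
  · intro i i' hi hi' hlt'
    exact fact3 i i' ((hearly i).mp hi) ((hearly i').mp hi') ((hτlt i i').mp hlt')

lemma edd_full (σ : ι ≃ Fin (Fintype.card ι)) :
    ∃ σ' : ι ≃ Fin (Fintype.card ι),
      (Finset.univ.filter (fun i => d i < completionTime p σ' i)) ⊆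
        (Finset.univ.filter (fun i => d i < completionTime p σ i)) ∧
      (∀ i i', completionTime p σ' i ≤ d i → d i' < completionTime p σ' i' → σ' i < σ' i') ∧
      (∀ i i', completionTime p σ' i ≤ d i → completionTime p σ' i' ≤ d i' →
        σ' i < σ' i' → d i ≤ d i') := by
  classical
  suffices H : ∀ N (σ : ι ≃ Fin (Fintype.card ι)),
      (Finset.univ.filter (fun i => d i < completionTime p σ i)).card ≤ N →
      ∃ σ' : ι ≃ Fin (Fintype.card ι),
        (Finset.univ.filter (fun i => d i < completionTime p σ' i)) ⊆
          (Finset.univ.filter (fun i => d i < completionTime p σ i)) ∧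
        (∀ i i', completionTime p σ' i ≤ d i → d i' < completionTime p σ' i' → σ' i < σ' i') ∧
        (∀ i i', completionTime p σ' i ≤ d i → completionTime p σ' i' ≤ d i' →
          σ' i < σ' i' → d i ≤ d i') by
    exact H _ σ le_rfl
  intro N
  induction N with
  | zero =>
    intro σ hcard
    obtain ⟨τ, hsub, hfix⟩ := edd_step p d σ
    have hσ : (Finset.univ.filter (fun i => d i < completionTime p σ i)) = ∅ :=
      Finset.card_eq_zero.mp (Nat.le_zero.mp hcard)
    have heq : (Finset.univ.filter (fun i => d i < completionTime p τ i)) =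
        (Finset.univ.filter (fun i => d i < completionTime p σ i)) := by
      rw [hσ]; exact Finset.subset_empty.mp (hσ ▸ hsub)
    exact ⟨τ, hsub, hfix heq⟩
  | succ N ih =>
    intro σ hcard
    obtain ⟨τ, hsub, hfix⟩ := edd_step p d σ
    by_cases heq : (Finset.univ.filter (fun i => d i < completionTime p τ i)) =
        (Finset.univ.filter (fun i => d i < completionTime p σ i))
    · exact ⟨τ, hsub, hfix heq⟩
    · have hlt : (Finset.univ.filter (fun i => d i < completionTime p τ i)).card <
          (Finset.univ.filter (fun i => d i < completionTime p σ i)).card :=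
        Finset.card_lt_card (lt_of_le_of_ne hsub heq)
      obtain ⟨σ', hsub', hi, hii⟩ := ih τ (by omega)
      exact ⟨σ', hsub'.trans hsub, hi, hii⟩

end Key

/-- Lemma 8 (structural lemma) for
`1 | ∑ U_j^{(1)} ≤ A₁, ∑ w_j^{(2)} U_j^{(2)} ≤ A₂ |`:
if a schedule with at most `A₁` tardy agent-1 jobs and total weight of tardy
agent-2 jobs at most `A₂` exists, then one exists in which additionally
(i) every early job precedes every tardy job, and (ii) the early jobs of both
agents follow the EDD rule. -/
theorem structural_lemma_sumU_weightedU
    (n k : ℕ) (p₁ d₁ : Fin n → ℕ) (p₂ d₂ w₂ : Fin k → ℕ) (A₁ A₂ : ℕ)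
    (h : ∃ σ : (Fin n ⊕ Fin k) ≃ Fin (Fintype.card (Fin n ⊕ Fin k)),
      (Finset.univ.filter
        (fun i : Fin n => d₁ i < completionTime (Sum.elim p₁ p₂) σ (Sum.inl i))).card
          ≤ A₁ ∧
      (∑ j ∈ Finset.univ.filter
          (fun j : Fin k => d₂ j < completionTime (Sum.elim p₁ p₂) σ (Sum.inr j)),
        w₂ j) ≤ A₂) :
    ∃ σ' : (Fin n ⊕ Fin k) ≃ Fin (Fintype.card (Fin n ⊕ Fin k)),
      (Finset.univ.filter
        (fun i : Fin n => d₁ i < completionTime (Sum.elim p₁ p₂) σ' (Sum.inl i))).card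
          ≤ A₁ ∧
      ((∑ j ∈ Finset.univ.filter
          (fun j : Fin k => d₂ j < completionTime (Sum.elim p₁ p₂) σ' (Sum.inr j)),
        w₂ j) ≤ A₂) ∧
      -- (i) every early job precedes every tardy job
      (∀ i i' : Fin n ⊕ Fin k,
        completionTime (Sum.elim p₁ p₂) σ' i ≤ Sum.elim d₁ d₂ i →
        Sum.elim d₁ d₂ i' < completionTime (Sum.elim p₁ p₂) σ' i' →
        σ' i < σ' i') ∧
      -- (ii) early jobs follow the EDD rule
      (∀ i i' : Fin n ⊕ Fin k,
        completionTime (Sum.elim p₁ p₂) σ' i ≤ Sum.elim d₁ d₂ i →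
        completionTime (Sum.elim p₁ p₂) σ' i' ≤ Sum.elim d₁ d₂ i' →
        σ' i < σ' i' → Sum.elim d₁ d₂ i ≤ Sum.elim d₁ d₂ i') := by
  classical
  obtain ⟨σ, h1, h2⟩ := h
  obtain ⟨σ', hsub, hi, hii⟩ := edd_full (Sum.elim p₁ p₂) (Sum.elim d₁ d₂) σ
  have key : ∀ i : Fin n ⊕ Fin k,
      Sum.elim d₁ d₂ i < completionTime (Sum.elim p₁ p₂) σ' i →
      Sum.elim d₁ d₂ i < completionTime (Sum.elim p₁ p₂) σ i := by
    intro i hi'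
    have := hsub (by simp only [Finset.mem_filter, Finset.mem_univ, true_and]; exact hi')
    simpa using this
  refine ⟨σ', ?_, ?_, hi, hii⟩
  · refine le_trans (Finset.card_le_card ?_) h1
    intro i hi'
    simp only [Finset.mem_filter, Finset.mem_univ, true_and] at hi' ⊢
    exact key (Sum.inl i) hi'
  · refine le_trans (Finset.sum_le_sum_of_subset ?_) h2
    intro j hj
    simp only [Finset.mem_filter, Finset.mem_univ, true_and] at hj ⊢
    exact key (Sum.inr j) hj
end

section
/- Let the agent-1 jobs have positive processing times p₁ : Fin n → ℕ and due dates d₁ : Fin n → ℕ, and let the agent-2 jobs have positive processing times p₂ : Fin k → ℕ and weights w₂ : Fin k → ℕ; let A₁, A₂ : ℕ. Then: (i) in any timed schedule, if agent-1 jobs i and i' are both just-in-time and C (inl i) < C (inl i'), then d₁ i < d₁ i'; and (ii) if there exists a timed schedule with at least A₁ just-in-time agent-1 jobs and ∑ j, w₂ j · C (inr j) ≤ A₂, then there exists a timed schedule with exactly A₁ just-in-time agent-1 jobs and ∑ j, w₂ j · C (inr j) ≤ A₂ in which every agent-1 job that is not just-in-time starts after the completion time of every just-in-time agent-1 job and of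 every agent-2 job. -/
/-- A timed schedule: a start-time function whose half-open execution intervals
`(s i, s i + p i]` are pairwise disjoint. -/
def IsTimedSchedule {ι : Type*} (p : ι → ℕ) (s : ι → ℕ) : Prop :=
  ∀ i j, i ≠ j →
    Disjoint (Set.Ioc (s i) (s i + p i)) (Set.Ioc (s j) (s j + p j))

/-- Lemma 9 (auxiliary JIT lemma) for
`1 | ∑ E_j^{(1)} ≥ A₁, ∑ w_j^{(2)} C_j^{(2)} ≤ A₂ |`:
(i) in any timed schedule, just-in-time agent-1 jobs complete in increasing
due-date order; (ii) if a timed schedule with at least `A₁` just-in-time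
agent-1 jobs and agent-2 weighted total completion time at most `A₂` exists,
then one exists with exactly `A₁` just-in-time agent-1 jobs in which every
non-just-in-time agent-1 job starts after the completion of every just-in-time
agent-1 job and of every agent-2 job. -/
theorem jit_structural_lemma
    (n k : ℕ) (p₁ d₁ : Fin n → ℕ) (p₂ w₂ : Fin k → ℕ)
    (hp₁ : ∀ i, 0 < p₁ i) (hp₂ : ∀ j, 0 < p₂ j) (A₁ A₂ : ℕ) :
    -- (i)
    (∀ s : Fin n ⊕ Fin k → ℕ, IsTimedSchedule (Sum.elim p₁ p₂) s →
      ∀ i i' : Fin n,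
        s (Sum.inl i) + p₁ i = d₁ i → s (Sum.inl i') + p₁ i' = d₁ i' →
        s (Sum.inl i) + p₁ i < s (Sum.inl i') + p₁ i' → d₁ i < d₁ i') ∧
    -- (ii)
    ((∃ s : Fin n ⊕ Fin k → ℕ, IsTimedSchedule (Sum.elim p₁ p₂) s ∧
        A₁ ≤ (Finset.univ.filter
          (fun i : Fin n => s (Sum.inl i) + p₁ i = d₁ i)).card ∧
        (∑ j, w₂ j * (s (Sum.inr j) + p₂ j)) ≤ A₂) →
      ∃ s : Fin n ⊕ Fin k → ℕ, IsTimedSchedule (Sum.elim p₁ p₂) s ∧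
        (Finset.univ.filter
          (fun i : Fin n => s (Sum.inl i) + p₁ i = d₁ i)).card = A₁ ∧
        (∑ j, w₂ j * (s (Sum.inr j) + p₂ j)) ≤ A₂ ∧
        (∀ i : Fin n, s (Sum.inl i) + p₁ i ≠ d₁ i →
          (∀ i' : Fin n, s (Sum.inl i') + p₁ i' = d₁ i' →
            s (Sum.inl i') + p₁ i' ≤ s (Sum.inl i)) ∧
          (∀ j : Fin k, s (Sum.inr j) + p₂ j ≤ s (Sum.inl i)))) := by
  constructor
  · intro s hs i i' hi hi' hlt
    rw [hi, hi'] at hlt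
    exact hlt
  · rintro ⟨s, hs, hcard, hsum⟩
    obtain ⟨S, hSsub, hScard⟩ := Finset.exists_subset_card_eq hcard
    set T : ℕ := (Finset.univ.sup (fun x : Fin n ⊕ Fin k => s x + Sum.elim p₁ p₂ x)) ⊔
        (Finset.univ.sup d₁) with hT
    have hTC : ∀ x, s x + Sum.elim p₁ p₂ x ≤ T := by
      intro x
      have h1 : s x + Sum.elim p₁ p₂ x ≤
          Finset.univ.sup (fun x : Fin n ⊕ Fin k => s x + Sum.elim p₁ p₂ x) :=
        Finset.le_sup (f := fun x : Fin n ⊕ Fin k => s x + Sum.elim p₁ p₂ x)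
          (Finset.mem_univ x)
      exact h1.trans le_sup_left
    have hTd : ∀ i, d₁ i ≤ T := by
      intro i
      have h1 : d₁ i ≤ Finset.univ.sup d₁ := Finset.le_sup (Finset.mem_univ i)
      exact h1.trans le_sup_right
    set off : Fin n → ℕ :=
      fun i => ∑ i' ∈ Finset.univ.filter (fun i' => i' ∉ S ∧ i' < i), p₁ i' with hoff
    set s' : Fin n ⊕ Fin k → ℕ :=
      Sum.elim (fun i => if i ∈ S then s (Sum.inl i) else T + off i)
        (fun j => s (Sum.inr j)) with hs'
    have hmono : ∀ i i' : Fin n, i ∉ S → i' ∉ S → i < i' → off i + p₁ i ≤ off i' := by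
      intro i i' hiS hi'S hlt
      have hsub : insert i (Finset.univ.filter (fun x => x ∉ S ∧ x < i)) ⊆
          Finset.univ.filter (fun x => x ∉ S ∧ x < i') := by
        intro x hx
        simp only [Finset.mem_insert, Finset.mem_filter, Finset.mem_univ, true_and] at *
        rcases hx with rfl | ⟨h1, h2⟩
        · exact ⟨hiS, hlt⟩
        · exact ⟨h1, h2.trans hlt⟩
      have hnotmem : i ∉ Finset.univ.filter (fun x => x ∉ S ∧ x < i) := by simp
      calc off i + p₁ i
          = ∑ x ∈ insert i (Finset.univ.filter (fun x => x ∉ S ∧ x < i)), p₁ x := by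
            rw [Finset.sum_insert hnotmem, hoff, add_comm]
        _ ≤ off i' := Finset.sum_le_sum_of_subset hsub
    have hdisj : ∀ a b c d : ℕ, b ≤ c → Disjoint (Set.Ioc a b) (Set.Ioc c d) := by
      intro a b c d h
      rw [Set.disjoint_left]
      rintro x ⟨_, hx2⟩ ⟨hx3, _⟩
      omega
    have hsched : IsTimedSchedule (Sum.elim p₁ p₂) s' := by
      rintro (i | j) (i' | j') hne
      · by_cases hi : i ∈ S <;> by_cases hi' : i' ∈ S
        · simp only [hs', Sum.elim_inl, if_pos hi, if_pos hi']
          exact hs _ _ hne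
        · simp only [hs', Sum.elim_inl, if_pos hi, if_neg hi']
          exact hdisj _ _ _ _ (le_trans (hTC (Sum.inl i)) (Nat.le_add_right _ _))
        · simp only [hs', Sum.elim_inl, if_neg hi, if_pos hi']
          exact (hdisj _ _ _ _ (le_trans (hTC (Sum.inl i')) (Nat.le_add_right _ _))).symm
        · have hne' : i ≠ i' := fun h => hne (by rw [h])
          rcases lt_or_gt_of_ne hne' with h | h
          · simp only [hs', Sum.elim_inl, if_neg hi, if_neg hi']
            exact hdisj _ _ _ _ (by have := hmono i i' hi hi' h; omega)
          · simp only [hs', Sum.elim_inl, if_neg hi, if_neg hi']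
            exact (hdisj _ _ _ _ (by have := hmono i' i hi' hi h; omega)).symm
      · by_cases hi : i ∈ S
        · simp only [hs', Sum.elim_inl, Sum.elim_inr, if_pos hi]
          exact hs _ _ hne
        · simp only [hs', Sum.elim_inl, Sum.elim_inr, if_neg hi]
          exact (hdisj _ _ _ _ (le_trans (hTC (Sum.inr j')) (Nat.le_add_right _ _))).symm
      · by_cases hi : i' ∈ S
        · simp only [hs', Sum.elim_inl, Sum.elim_inr, if_pos hi]
          exact hs _ _ hne
        · simp only [hs', Sum.elim_inl, Sum.elim_inr, if_neg hi]
          exact hdisj _ _ _ _ (le_trans (hTC (Sum.inr j)) (Nat.le_add_right _ _))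
      · simp only [hs', Sum.elim_inr]
        exact hs _ _ hne
    have hfilter : Finset.univ.filter (fun i => s' (Sum.inl i) + p₁ i = d₁ i) = S := by
      ext i
      simp only [Finset.mem_filter, Finset.mem_univ, true_and, hs', Sum.elim_inl]
      by_cases hi : i ∈ S
      · have hjit := (Finset.mem_filter.mp (hSsub hi)).2
        simp [hi, hjit]
      · have h1 := hTd i
        have h2 := hp₁ i
        simp only [if_neg hi, iff_iff_implies_and_implies]
        constructor
        · intro h; omega
        · intro h; exact absurd h hi
    refine ⟨s', hsched, by rw [hfilter, hScard], ?_, ?_⟩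
    · simpa only [hs', Sum.elim_inr] using hsum
    · intro i hnotjit
      have hiS : i ∉ S := by
        intro hmem
        exact hnotjit (by rw [← hfilter] at hmem; exact (Finset.mem_filter.mp hmem).2)
      have hsi : s' (Sum.inl i) = T + off i := by
        simp [hs', hiS]
      constructor
      · intro i' hjit
        have hi'S : i' ∈ S := by
          rw [← hfilter]; exact Finset.mem_filter.mpr ⟨Finset.mem_univ _, hjit⟩
        have : s' (Sum.inl i') = s (Sum.inl i') := by simp [hs', hi'S]
        rw [this, hsi]
        exact le_trans (hTC (Sum.inl i')) (Nat.le_add_right _ _)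
      · intro j
        have : s' (Sum.inr j) = s (Sum.inr j) := by simp [hs']
        rw [this, hsi]
        exact le_trans (hTC (Sum.inr j)) (Nat.le_add_right _ _)
end

section
/- Let the agent-1 jobs have positive processing times p₁ : Fin n → ℕ and due dates d₁ : Fin n → ℕ, and let the agent-2 jobs have positive processing times p₂ : Fin k → ℕ and weights w₂ : Fin k → ℕ; let A₁, A₂, ℓ : ℕ with ℓ ≤ k, let a, b be agent-1 jobs with d₁ a ≤ d₁ b − p₁ b, and let K be the largest t ≤ k − ℓ such that ∑_{j=ℓ+1}^{ℓ+t} p₂ j ≤ d₁ b − p₁ b − d₁ a. Suppose there exists a timed schedule with at least A₁ just-in-time agent-1 jobs and ∑ j, w₂ j · C (inr j) ≤ A₂, in which the agent-2 jobs are executed in index order, jobs a and b are both just-in-time, no agent-1 job is executed during the interval (d₁ a, d₁ b − p₁ b], and exactly ℓ agent-2 jobs complete no later than the start time d₁ a − p₁ a of job a. Then there exists a timed schedule with all of these properties in which additionally agent-2 job j starts at time d₁ a + ∑_{i=ℓ+1}^{j−1} p₂ i for every j with ℓ+1 ≤ j ≤ ℓ+K, and no job is executed during the interval (d₁ a + ∑_{j=ℓ+1}^{ℓ+K}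 p₂ j, d₁ b − p₁ b]. -/
/-- `prefixSum k p₂ ℓ t` is the total processing time of the `t` agent-2 jobs
with (0-based) indices `ℓ, ℓ+1, …, ℓ+t-1`, i.e. the 1-indexed jobs
`ℓ+1, …, ℓ+t`. -/
def prefixSum (k : ℕ) (p₂ : Fin k → ℕ) (ℓ t : ℕ) : ℕ :=
  ∑ j ∈ Finset.univ.filter (fun j : Fin k => ℓ ≤ (j : ℕ) ∧ (j : ℕ) < ℓ + t), p₂ j

/-- The collection of properties assumed of the timed schedule in Lemma 10:
it is a feasible timed schedule (at least `A₁` just-in-time agent-1 jobs, and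
agent-2 weighted total completion time at most `A₂`), the agent-2 jobs are
executed in index order, the agent-1 jobs `a` and `b` are both just-in-time,
no agent-1 job is executed during the interval `(d₁ a, d₁ b - p₁ b]`, and
exactly `ℓ` agent-2 jobs complete no later than `d₁ a - p₁ a` (the start time
of job `a`). -/
def Lemma10Hyp (n k : ℕ) (p₁ d₁ : Fin n → ℕ) (p₂ w₂ : Fin k → ℕ)
    (A₁ A₂ ℓ : ℕ) (a b : Fin n) (s : Fin n ⊕ Fin k → ℕ) : Prop :=
  IsTimedSchedule (Sum.elim p₁ p₂) s ∧
  A₁ ≤ (Finset.univ.filter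
    (fun i : Fin n => s (Sum.inl i) + p₁ i = d₁ i)).card ∧
  (∑ j, w₂ j * (s (Sum.inr j) + p₂ j)) ≤ A₂ ∧
  (∀ j j' : Fin k, j < j' → s (Sum.inr j) + p₂ j ≤ s (Sum.inr j')) ∧
  s (Sum.inl a) + p₁ a = d₁ a ∧
  s (Sum.inl b) + p₁ b = d₁ b ∧
  (∀ i : Fin n,
    Disjoint (Set.Ioc (s (Sum.inl i)) (s (Sum.inl i) + p₁ i))
      (Set.Ioc (d₁ a) (d₁ b - p₁ b))) ∧
  (Finset.univ.filter
    (fun j : Fin k => s (Sum.inr j) + p₂ j ≤ d₁ a - p₁ a)).card = ℓ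

/-- Two `Ioc` intervals in `ℕ` with the first ending no later than the second
starts are disjoint. -/
lemma ioc_disj_of_le {a b c d : ℕ} (h : b ≤ c) :
    Disjoint (Set.Ioc a b) (Set.Ioc c d) := by
  rw [Set.disjoint_left]
  intro x hx hx'
  simp only [Set.mem_Ioc] at hx hx'
  omega

/-- Disjoint intervals inside `(L, R]` have total length at most `R - L`. -/
lemma sum_card_intervals {α : Type*} [DecidableEq α] (B : Finset α)
    (st pr : α → ℕ) (L R : ℕ)
    (hdis : ∀ i ∈ B, ∀ j ∈ B, i ≠ j →
      Disjoint (Set.Ioc (st i) (st i + pr i)) (Set.Ioc (st j) (st j + pr j)))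
    (hsub : ∀ i ∈ B, L ≤ st i ∧ st i + pr i ≤ R) :
    ∑ i ∈ B, pr i ≤ R - L := by
  have key : ∑ i ∈ B, pr i
      = (B.biUnion (fun i => Finset.Ioc (st i) (st i + pr i))).card := by
    rw [Finset.card_biUnion]
    · refine Finset.sum_congr rfl fun i _ => ?_
      rw [Nat.card_Ioc]; omega
    · intro i hi j hj hij
      have hd := hdis i hi j hj hij
      simp only [Function.onFun]; rw [Finset.disjoint_left]
      intro x hx hx'
      rw [Set.disjoint_left] at hd
      exact hd (by simpa [Set.mem_Ioc] using Finset.mem_Ioc.mp hx)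
        (by simpa [Set.mem_Ioc] using Finset.mem_Ioc.mp hx')
  rw [key]
  calc (B.biUnion (fun i => Finset.Ioc (st i) (st i + pr i))).card
      ≤ (Finset.Ioc L R).card := by
        apply Finset.card_le_card
        intro x hx
        rw [Finset.mem_biUnion] at hx
        obtain ⟨i, hi, hxi⟩ := hx
        rw [Finset.mem_Ioc] at hxi ⊢
        have := hsub i hi
        omega
    _ = R - L := Nat.card_Ioc L R

lemma prefixSum_mono (k : ℕ) (p₂ : Fin k → ℕ) (ℓ : ℕ) {t t' : ℕ} (h : t ≤ t') :
    prefixSum k p₂ ℓ t ≤ prefixSum k p₂ ℓ t' := by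
  apply Finset.sum_le_sum_of_subset
  intro j hj
  simp only [Finset.mem_filter, Finset.mem_univ, true_and] at hj ⊢
  omega

lemma prefixSum_succ (k : ℕ) (p₂ : Fin k → ℕ) (ℓ t : ℕ) (j : Fin k)
    (hj : (j : ℕ) = ℓ + t) :
    prefixSum k p₂ ℓ (t + 1) = prefixSum k p₂ ℓ t + p₂ j := by
  unfold prefixSum
  have hset : Finset.univ.filter (fun i : Fin k => ℓ ≤ (i : ℕ) ∧ (i : ℕ) < ℓ + (t + 1))
      = insert j (Finset.univ.filter (fun i : Fin k => ℓ ≤ (i : ℕ) ∧ (i : ℕ) < ℓ + t)) := by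
    ext i
    simp only [Finset.mem_filter, Finset.mem_univ, true_and, Finset.mem_insert]
    constructor
    · rintro ⟨h1, h2⟩
      by_cases hc : (i : ℕ) < ℓ + t
      · exact Or.inr ⟨h1, hc⟩
      · exact Or.inl (Fin.ext (by omega))
    · rintro (rfl | ⟨h1, h2⟩) <;> omega
  rw [hset, Finset.sum_insert (by
    simp only [Finset.mem_filter, Finset.mem_univ, true_and, not_and, not_lt]
    omega), add_comm]

/-- Lemma 10 for `1 | ∑ E_j^{(1)} ≥ A₁, ∑ w_j^{(2)} C_j^{(2)} ≤ A₂ |`: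
if a feasible timed schedule exists in which `a` and `b` are two just-in-time
agent-1 jobs with no agent-1 job executed between them and exactly `ℓ` agent-2
jobs completing before `a` starts, then there is such a schedule in which the
maximal fitting consecutive subsequence `J^{(2)}_{ℓ+1}, …, J^{(2)}_{ℓ+K}` of
agent-2 jobs is executed back-to-back right after the completion of `a`, and no
job is executed between its end and the start of `b`. (Indices of `Fin k` are
0-based, so 1-indexed jobs `ℓ+1, …, ℓ+K` are those `j` with `ℓ ≤ j < ℓ + K`.) -/
theorem jit_consecutive_block_lemma
    (n k : ℕ) (p₁ d₁ : Fin n → ℕ) (p₂ w₂ : Fin k → ℕ)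
    (hp₁ : ∀ i, 0 < p₁ i) (hp₂ : ∀ j, 0 < p₂ j)
    (A₁ A₂ ℓ : ℕ) (hℓ : ℓ ≤ k) (a b : Fin n)
    (hab : d₁ a ≤ d₁ b - p₁ b)
    (K : ℕ) (hK1 : K ≤ k - ℓ)
    (hK2 : prefixSum k p₂ ℓ K ≤ d₁ b - p₁ b - d₁ a)
    (hK3 : ∀ t, t ≤ k - ℓ → prefixSum k p₂ ℓ t ≤ d₁ b - p₁ b - d₁ a → t ≤ K)
    (h : ∃ s : Fin n ⊕ Fin k → ℕ,
      Lemma10Hyp n k p₁ d₁ p₂ w₂ A₁ A₂ ℓ a b s) :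
    ∃ s : Fin n ⊕ Fin k → ℕ,
      Lemma10Hyp n k p₁ d₁ p₂ w₂ A₁ A₂ ℓ a b s ∧
      (∀ j : Fin k, ℓ ≤ (j : ℕ) → (j : ℕ) < ℓ + K →
        s (Sum.inr j) = d₁ a + prefixSum k p₂ ℓ ((j : ℕ) - ℓ)) ∧
      (∀ i : Fin n ⊕ Fin k,
        Disjoint (Set.Ioc (s i) (s i + Sum.elim p₁ p₂ i))
          (Set.Ioc (d₁ a + prefixSum k p₂ ℓ K) (d₁ b - p₁ b))) := by
  classical
  obtain ⟨s, hsch, hA1, hA2, hord, hja, hjb, hgap, hcard⟩ := h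
  have hpa := hp₁ a
  have hpb := hp₁ b
  -- the agent-2 jobs completing by the start of `a` are exactly those of index `< ℓ`
  have hcardlt : (Finset.univ.filter (fun j : Fin k => (j : ℕ) < ℓ)).card = ℓ := by
    apply Finset.card_eq_of_bijective (fun m hm => (⟨m, lt_of_lt_of_le hm hℓ⟩ : Fin k))
    · intro j hj
      simp only [Finset.mem_filter, Finset.mem_univ, true_and] at hj
      exact ⟨(j : ℕ), hj, Fin.ext rfl⟩
    · intro m hm
      simp only [Finset.mem_filter, Finset.mem_univ, true_and]
      exact hm
    · intro m m' hm hm' heq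
      exact congrArg Fin.val heq
  have hFiff : ∀ j : Fin k, (s (Sum.inr j) + p₂ j ≤ d₁ a - p₁ a ↔ (j : ℕ) < ℓ) := by
    have hsubF : (Finset.univ.filter
        (fun j : Fin k => s (Sum.inr j) + p₂ j ≤ d₁ a - p₁ a))
        ⊆ Finset.univ.filter (fun j : Fin k => (j : ℕ) < ℓ) := by
      intro j hj
      simp only [Finset.mem_filter, Finset.mem_univ, true_and] at hj ⊢
      by_contra hge
      push_neg at hge
      have hIic : Finset.Iic j ⊆ Finset.univ.filter
          (fun j' : Fin k => s (Sum.inr j') + p₂ j' ≤ d₁ a - p₁ a) := by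
        intro i hi
        simp only [Finset.mem_Iic] at hi
        simp only [Finset.mem_filter, Finset.mem_univ, true_and]
        rcases eq_or_lt_of_le hi with rfl | hlt
        · exact hj
        · have h1 := hord i j hlt
          have h2 := hp₂ j
          omega
      have hle := Finset.card_le_card hIic
      rw [Fin.card_Iic, hcard] at hle
      omega
    have heqF := Finset.eq_of_subset_of_card_le hsubF (by rw [hcard, hcardlt])
    intro j
    have hj := Finset.ext_iff.mp heqF j
    simpa only [Finset.mem_filter, Finset.mem_univ, true_and] using hj
  -- every agent-2 job of index `≥ ℓ` starts no earlier than `d₁ a`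
  have hge_a : ∀ j : Fin k, ℓ ≤ (j : ℕ) → d₁ a ≤ s (Sum.inr j) := by
    intro j hj
    by_contra hlt
    push_neg at hlt
    have h1 : ¬ (s (Sum.inr j) + p₂ j ≤ d₁ a - p₁ a) := by
      rw [hFiff]; omega
    have hd := hsch (Sum.inr j) (Sum.inl a) (by simp)
    rw [Set.disjoint_left] at hd
    have hpj := hp₂ j
    refine hd (a := max (s (Sum.inr j)) (s (Sum.inl a)) + 1) ?_ ?_ <;>
      simp only [Set.mem_Ioc, Sum.elim_inr, Sum.elim_inl] <;> omega
  -- every agent-2 job either completes by `d₁ b - p₁ b` or starts at `d₁ b` or later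
  have hafter : ∀ j : Fin k, ¬ (s (Sum.inr j) + p₂ j ≤ d₁ b - p₁ b) →
      d₁ b ≤ s (Sum.inr j) := by
    intro j hC
    by_contra hlt
    push_neg at hlt
    have hd := hsch (Sum.inr j) (Sum.inl b) (by simp)
    rw [Set.disjoint_left] at hd
    have hpj := hp₂ j
    refine hd (a := max (s (Sum.inr j)) (s (Sum.inl b)) + 1) ?_ ?_ <;>
      simp only [Set.mem_Ioc, Sum.elim_inr, Sum.elim_inl] <;> omega
  -- packing bound: jobs `ℓ, …, j` all fit after `d₁ a` and before `C j`
  have hfit : ∀ (j : Fin k) (R : ℕ), ℓ ≤ (j : ℕ) → s (Sum.inr j) + p₂ j ≤ R →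
      prefixSum k p₂ ℓ ((j : ℕ) - ℓ + 1) ≤ R - d₁ a := by
    intro j R hj hR
    unfold prefixSum
    apply sum_card_intervals _ (fun i => s (Sum.inr i)) p₂ (d₁ a) R
    · intro i hi i' hi' hne
      exact hsch (Sum.inr i) (Sum.inr i') (fun hh => hne (Sum.inr.inj hh))
    · intro i hi
      simp only [Finset.mem_filter, Finset.mem_univ, true_and] at hi
      obtain ⟨h1, h2⟩ := hi
      refine ⟨hge_a i h1, ?_⟩
      rcases lt_or_eq_of_le (show (i : ℕ) ≤ (j : ℕ) by omega) with hlt | heq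
      · have h3 := hord i j (Fin.lt_def.mpr hlt)
        have h4 := hp₂ j
        omega
      · have hij : i = j := Fin.ext heq
        rw [hij]
        exact hR
  -- every agent-2 job of index `≥ ℓ + K` starts at `d₁ b` or later
  have hstart_after : ∀ j : Fin k, ℓ + K ≤ (j : ℕ) → d₁ b ≤ s (Sum.inr j) := by
    intro j hj
    apply hafter
    intro hC
    have hfit' := hfit j _ (by omega) hC
    have hjk := j.isLt
    have ht := hK3 ((j : ℕ) - ℓ + 1) (by omega) hfit'
    omega
  -- new completion of a block job is no later than its old completion
  have hCblock : ∀ j : Fin k, ℓ ≤ (j : ℕ) →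
      d₁ a + prefixSum k p₂ ℓ ((j : ℕ) - ℓ + 1) ≤ s (Sum.inr j) + p₂ j := by
    intro j hj
    have h1 := hfit j (s (Sum.inr j) + p₂ j) hj le_rfl
    have h2 := hge_a j hj
    have h3 := hp₂ j
    omega
  -- the new schedule
  set s' : Fin n ⊕ Fin k → ℕ := Sum.elim (fun i => s (Sum.inl i))
    (fun j : Fin k => if ℓ ≤ (j : ℕ) ∧ (j : ℕ) < ℓ + K
      then d₁ a + prefixSum k p₂ ℓ ((j : ℕ) - ℓ) else s (Sum.inr j)) with hs'def
  have hs'l : ∀ i : Fin n, s' (Sum.inl i) = s (Sum.inl i) := fun i => rfl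
  have hs'in : ∀ j : Fin k, ℓ ≤ (j : ℕ) → (j : ℕ) < ℓ + K →
      s' (Sum.inr j) = d₁ a + prefixSum k p₂ ℓ ((j : ℕ) - ℓ) := by
    intro j h1 h2
    simp only [hs'def, Sum.elim_inr, if_pos (⟨h1, h2⟩ : ℓ ≤ (j : ℕ) ∧ (j : ℕ) < ℓ + K)]
  have hs'out : ∀ j : Fin k, ¬ (ℓ ≤ (j : ℕ) ∧ (j : ℕ) < ℓ + K) →
      s' (Sum.inr j) = s (Sum.inr j) := by
    intro j hj
    simp only [hs'def, Sum.elim_inr, if_neg hj]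
  have hblock_le_D : d₁ a + prefixSum k p₂ ℓ K ≤ d₁ b - p₁ b := by omega
  -- new completion bounds
  have hCle : ∀ j : Fin k, s' (Sum.inr j) + p₂ j ≤ s (Sum.inr j) + p₂ j := by
    intro j
    by_cases hb' : ℓ ≤ (j : ℕ) ∧ (j : ℕ) < ℓ + K
    · rw [hs'in j hb'.1 hb'.2]
      have h1 := hCblock j hb'.1
      rw [prefixSum_succ k p₂ ℓ ((j : ℕ) - ℓ) j (by omega)] at h1
      omega
    · rw [hs'out j hb']
  have hC'D : ∀ j : Fin k, ℓ ≤ (j : ℕ) → (j : ℕ) < ℓ + K →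
      s' (Sum.inr j) + p₂ j ≤ d₁ a + prefixSum k p₂ ℓ K := by
    intro j h1 h2
    rw [hs'in j h1 h2]
    have hmono := prefixSum_mono k p₂ ℓ (show (j : ℕ) - ℓ + 1 ≤ K by omega)
    rw [prefixSum_succ k p₂ ℓ ((j : ℕ) - ℓ) j (by omega)] at hmono
    omega
  -- new schedule keeps agent-2 jobs in order
  have hord' : ∀ j j' : Fin k, j < j' →
      s' (Sum.inr j) + p₂ j ≤ s' (Sum.inr j') := by
    intro j j' hlt
    have hltv : (j : ℕ) < (j' : ℕ) := hlt
    by_cases hb1 : ℓ ≤ (j : ℕ) ∧ (j : ℕ) < ℓ + K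
    · by_cases hb2 : ℓ ≤ (j' : ℕ) ∧ (j' : ℕ) < ℓ + K
      · rw [hs'in j hb1.1 hb1.2, hs'in j' hb2.1 hb2.2]
        have hmono := prefixSum_mono k p₂ ℓ
          (show (j : ℕ) - ℓ + 1 ≤ (j' : ℕ) - ℓ by omega)
        rw [prefixSum_succ k p₂ ℓ ((j : ℕ) - ℓ) j (by omega)] at hmono
        omega
      · rw [hs'out j' hb2]
        have h1 := hstart_after j' (by omega)
        have h2 := hC'D j hb1.1 hb1.2
        omega
    · by_cases hb2 : ℓ ≤ (j' : ℕ) ∧ (j' : ℕ) < ℓ + K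
      · have hjlt : (j : ℕ) < ℓ := by omega
        rw [hs'out j (by omega), hs'in j' hb2.1 hb2.2]
        have h1 := (hFiff j).mpr hjlt
        omega
      · rw [hs'out j hb1, hs'out j' hb2]
        exact hord j j' hlt
  -- mixed disjointness
  have hmix : ∀ (i : Fin n) (j : Fin k),
      Disjoint (Set.Ioc (s' (Sum.inl i)) (s' (Sum.inl i) + p₁ i))
        (Set.Ioc (s' (Sum.inr j)) (s' (Sum.inr j) + p₂ j)) := by
    intro i j
    rw [hs'l i]
    by_cases hb' : ℓ ≤ (j : ℕ) ∧ (j : ℕ) < ℓ + K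
    · refine Disjoint.mono_right ?_ (hgap i)
      apply Set.Ioc_subset_Ioc
      · rw [hs'in j hb'.1 hb'.2]; omega
      · exact le_trans (hC'D j hb'.1 hb'.2) hblock_le_D
    · rw [hs'out j hb']
      exact hsch (Sum.inl i) (Sum.inr j) (by simp)
  have hsch' : IsTimedSchedule (Sum.elim p₁ p₂) s' := by
    rintro (i | j) (i' | j') hne
    · rw [show s' (Sum.inl i) = s (Sum.inl i) from rfl,
        show s' (Sum.inl i') = s (Sum.inl i') from rfl]
      exact hsch (Sum.inl i) (Sum.inl i') hne
    · exact hmix i j'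
    · exact (hmix i' j).symm
    · have hne' : j ≠ j' := fun hh => hne (by rw [hh])
      rcases hne'.lt_or_gt with hlt | hlt
      · exact ioc_disj_of_le (hord' j j' hlt)
      · exact (ioc_disj_of_le (hord' j' j hlt)).symm
  -- new membership characterization for the count of early agent-2 jobs
  have hFiff' : ∀ j : Fin k,
      (s' (Sum.inr j) + p₂ j ≤ d₁ a - p₁ a ↔ (j : ℕ) < ℓ) := by
    intro j
    by_cases hb' : ℓ ≤ (j : ℕ) ∧ (j : ℕ) < ℓ + K
    · rw [hs'in j hb'.1 hb'.2]
      have h1 := hp₂ j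
      constructor
      · intro hc; omega
      · intro hc; omega
    · rw [hs'out j hb']
      exact hFiff j
  have hcard' : (Finset.univ.filter
      (fun j : Fin k => s' (Sum.inr j) + p₂ j ≤ d₁ a - p₁ a)).card = ℓ := by
    have hfeq : (Finset.univ.filter
        (fun j : Fin k => s' (Sum.inr j) + p₂ j ≤ d₁ a - p₁ a))
        = Finset.univ.filter (fun j : Fin k => (j : ℕ) < ℓ) := by
      ext j
      simp only [Finset.mem_filter, Finset.mem_univ, true_and]
      exact hFiff' j
    rw [hfeq, hcardlt]
  refine ⟨s', ⟨hsch', ?_, ?_, hord', hja, hjb, ?_, hcard'⟩, ?_, ?_⟩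
  · exact hA1
  · refine le_trans (Finset.sum_le_sum fun j _ => ?_) hA2
    exact Nat.mul_le_mul_left _ (hCle j)
  · intro i
    rw [hs'l i]
    exact hgap i
  · intro j h1 h2
    exact hs'in j h1 h2
  · rintro (i | j)
    · refine Disjoint.mono_right ?_ (hgap i)
      exact Set.Ioc_subset_Ioc (by omega) le_rfl
    · by_cases hb' : ℓ ≤ (j : ℕ) ∧ (j : ℕ) < ℓ + K
      · exact ioc_disj_of_le (hC'D j hb'.1 hb'.2)
      · by_cases hj : (j : ℕ) < ℓ
        · apply ioc_disj_of_le
          have h1 := (hFiff' j).mpr hj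
          simp only [Sum.elim_inr]
          omega
        · refine (ioc_disj_of_le ?_).symm
          rw [hs'out j hb']
          have h1 := hstart_after j (by omega)
          omega
end

section
/- Let m ≥ 1, let x : Fin m → ℕ satisfy x j ≥ 1 for all j, and let z : ℕ satisfy ∑ j, x j = 2·z. Consider 2m unit-processing-time jobs indexed by Fin m ⊕ Fin m, where for each j both inl j (agent 1) and inr j (agent 2) have due date j+1 and weight x j. Then there exists a bijection σ : Fin m ⊕ Fin m ≃ Fin (2m) (so that the job placed in position t completes at time t+1) such that ∑ over j with σ (inl j) = j of x j ≥ z and ∑ over j with σ (inr j) = j of x j ≥ z, if and only if there exists a subset S ⊆ Fin m with ∑_{j ∈ S} x j = z. -/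
/-- Correctness of the Partition reduction in Theorem 13 for
`1 | p_j^{(1)} = p_j^{(2)} = 1, ∑ w_j^{(1)} E_j^{(1)} ≥ A₁, ∑ w_j^{(2)} E_j^{(2)} ≥ A₂ |`:
the `2m` unit-time jobs are indexed by `Fin m ⊕ Fin m`, both copies of index
`j` have due date `j + 1` and weight `x j`, a schedule is a bijection
`σ : Fin m ⊕ Fin m ≃ Fin (2m)` (the job in position `t` completes at time
`t + 1`), and a job with index `j` is just-in-time iff its position equals
`j`. Such a schedule with each agent's just-in-time weight at least `z` exists
iff the `x j` admit a partition into two halves of sum `z`. -/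
theorem partition_reduction_jit_jit
    (m : ℕ) (hm : 1 ≤ m) (x : Fin m → ℕ) (hx : ∀ j, 1 ≤ x j)
    (z : ℕ) (hsum : ∑ j, x j = 2 * z) :
    (∃ σ : (Fin m ⊕ Fin m) ≃ Fin (2 * m),
      z ≤ (∑ j ∈ Finset.univ.filter
        (fun j : Fin m => (σ (Sum.inl j) : ℕ) = (j : ℕ)), x j) ∧
      z ≤ (∑ j ∈ Finset.univ.filter
        (fun j : Fin m => (σ (Sum.inr j) : ℕ) = (j : ℕ)), x j)) ↔
    (∃ S : Finset (Fin m), ∑ j ∈ S, x j = z) := by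
  constructor
  · rintro ⟨σ, h1, h2⟩
    set A := Finset.univ.filter (fun j : Fin m => (σ (Sum.inl j) : ℕ) = (j : ℕ)) with hA
    set B := Finset.univ.filter (fun j : Fin m => (σ (Sum.inr j) : ℕ) = (j : ℕ)) with hB
    have hdisj : Disjoint A B := by
      rw [Finset.disjoint_left]
      intro j hj1 hj2
      rw [hA, Finset.mem_filter] at hj1
      rw [hB, Finset.mem_filter] at hj2
      have : σ (Sum.inl j) = σ (Sum.inr j) := Fin.ext (hj1.2.trans hj2.2.symm)
      exact absurd (σ.injective this) (by simp)
    have hle : (∑ j ∈ A, x j) + (∑ j ∈ B, x j) ≤ 2 * z := by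
      rw [← Finset.sum_union hdisj, ← hsum]
      exact Finset.sum_le_sum_of_subset (Finset.subset_univ _)
    exact ⟨A, by omega⟩
  · rintro ⟨S, hS⟩
    have hf : Function.Involutive (fun s : Fin m ⊕ Fin m => match s with
      | Sum.inl j => if j ∈ S then Sum.inl j else Sum.inr j
      | Sum.inr j => if j ∈ S then Sum.inr j else Sum.inl j) := by
      rintro (j | j) <;> by_cases h : j ∈ S <;> simp [h]
    set σ : (Fin m ⊕ Fin m) ≃ Fin (2 * m) :=
      (hf.toPerm _).trans (finSumFinEquiv.trans (finCongr (two_mul m).symm)) with hσ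
    have hvl : ∀ j : Fin m, (σ (Sum.inl j) : ℕ) = if j ∈ S then (j : ℕ) else m + j := by
      intro j
      by_cases h : j ∈ S <;>
        simp [hσ, Equiv.trans_apply, Function.Involutive.toPerm, h, finSumFinEquiv] <;> omega
    have hvr : ∀ j : Fin m, (σ (Sum.inr j) : ℕ) = if j ∈ S then m + j else (j : ℕ) := by
      intro j
      by_cases h : j ∈ S <;>
        simp [hσ, Equiv.trans_apply, Function.Involutive.toPerm, h, finSumFinEquiv] <;> omega
    have hA : Finset.univ.filter (fun j : Fin m => (σ (Sum.inl j) : ℕ) = (j : ℕ)) = S := by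
      ext j
      simp only [Finset.mem_filter, Finset.mem_univ, true_and, hvl]
      by_cases h : j ∈ S <;> simp [h] <;> omega
    have hB : Finset.univ.filter (fun j : Fin m => (σ (Sum.inr j) : ℕ) = (j : ℕ)) = Sᶜ := by
      ext j
      simp only [Finset.mem_filter, Finset.mem_univ, true_and, hvr, Finset.mem_compl]
      by_cases h : j ∈ S <;> simp [h] <;> omega
    refine ⟨σ, ?_, ?_⟩
    · rw [hA, hS]
    · rw [hB]
      have := Finset.sum_add_sum_compl S x
      omega
end

section
/- Let the agent-1 jobs have positive processing times p₁ : Fin n → ℕ, due dates d₁ : Fin n → ℕ with p₁ j ≤ d₁ j for all j, and weights w₁ : Fin n → ℕ, and let the agent-2 jobs have positive processing times p₂ : Fin k → ℕ, due dates d₂ : Fin k → ℕ with p₂ j ≤ d₂ j for all j, and weights w₂ : Fin k → ℕ; let A₁, A₂ : ℕ. Then there exists a timed schedule of all n + k jobs with ∑ over just-in-time agent-1 jobs i of w₁ i ≥ A₁ and ∑ over just-in-time agent-2 jobs j of w₂ j ≥ A₂, if and only if there exist subsets S₁ ⊆ Fin n and S₂ ⊆ Fin k such that the family of time intervals consisting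 of (d₁ j − p₁ j, d₁ j] for j ∈ S₁ together with (d₂ j − p₂ j, d₂ j] for j ∈ S₂ is pairwise disjoint, ∑_{j ∈ S₁} w₁ j ≥ A₁, and ∑_{j ∈ S₂} w₂ j ≥ A₂. -/
lemma sched_aux {ι : Type*} [DecidableEq ι] (p d : ι → ℕ) (idx : ι → ℕ)
    (hidx : Function.Injective idx) (S : Finset ι)
    (hpd : ∀ i, p i ≤ d i) (B P : ℕ) (hdB : ∀ i, d i ≤ B) (hpP : ∀ i, p i ≤ P)
    (hS : (↑S : Set ι).PairwiseDisjoint (fun i => Set.Ioc (d i - p i) (d i))) :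
    ∃ s : ι → ℕ, IsTimedSchedule p s ∧ ∀ i ∈ S, s i + p i = d i := by
  refine ⟨fun x => if x ∈ S then d x - p x else B + idx x * P, ?_, ?_⟩
  · -- key: if out, its interval starts at B + idx i * P
    have key : ∀ i j, idx i < idx j → i ∉ S → j ∉ S →
        Disjoint (Set.Ioc ((if i ∈ S then d i - p i else B + idx i * P))
            ((if i ∈ S then d i - p i else B + idx i * P) + p i))
          (Set.Ioc ((if j ∈ S then d j - p j else B + idx j * P))
            ((if j ∈ S then d j - p j else B + idx j * P) + p j)) := by
      intro i j hlt hi hj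
      simp only [if_neg hi, if_neg hj]
      apply ioc_disj_of_le
      have h1 : B + idx i * P + p i ≤ B + (idx i + 1) * P := by
        have := hpP i
        nlinarith
      have h2 : (idx i + 1) * P ≤ idx j * P :=
        Nat.mul_le_mul_right _ hlt
      omega
    intro i j hij
    by_cases hi : i ∈ S <;> by_cases hj : j ∈ S
    · have e1 : (if i ∈ S then d i - p i else B + idx i * P) + p i = d i := by
        simp [hi, Nat.sub_add_cancel (hpd i)]
      have e2 : (if j ∈ S then d j - p j else B + idx j * P) + p j = d j := by
        simp [hj, Nat.sub_add_cancel (hpd j)]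
      rw [e1, e2]
      simp only [if_pos hi, if_pos hj]
      exact hS hi hj hij
    · -- i in, j out: d i ≤ B ≤ B + idx j * P
      simp only [if_pos hi, if_neg hj]
      apply ioc_disj_of_le
      rw [Nat.sub_add_cancel (hpd i)]
      exact le_trans (hdB i) (Nat.le_add_right _ _)
    · simp only [if_neg hi, if_pos hj]
      refine (ioc_disj_of_le ?_).symm
      rw [Nat.sub_add_cancel (hpd j)]
      exact le_trans (hdB j) (Nat.le_add_right _ _)
    · rcases lt_or_gt_of_ne (fun h => hij (hidx h)) with h | h
      · exact key i j h hi hj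
      · exact (key j i h hj hi).symm
  · intro i hi
    simp [hi, Nat.sub_add_cancel (hpd i)]

/-- Feasibility of the two-agent just-in-time problem
`1 | ∑ w_j^{(1)} E_j^{(1)} ≥ A₁, ∑ w_j^{(2)} E_j^{(2)} ≥ A₂ |` is equivalent to
the existence of two sets `S₁`, `S₂` of jobs whose time intervals
`(d j - p j, d j]` are pairwise disjoint and whose weights meet the bounds of
the respective agents (Theorem 14). -/
theorem jit_jit_interval_characterization
    (n k : ℕ) (p₁ d₁ w₁ : Fin n → ℕ) (p₂ d₂ w₂ : Fin k → ℕ)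
    (hp₁ : ∀ i, 0 < p₁ i) (hp₂ : ∀ j, 0 < p₂ j)
    (hd₁ : ∀ i, p₁ i ≤ d₁ i) (hd₂ : ∀ j, p₂ j ≤ d₂ j) (A₁ A₂ : ℕ) :
    (∃ s : Fin n ⊕ Fin k → ℕ, IsTimedSchedule (Sum.elim p₁ p₂) s ∧
      A₁ ≤ (∑ i ∈ Finset.univ.filter
        (fun i : Fin n => s (Sum.inl i) + p₁ i = d₁ i), w₁ i) ∧
      A₂ ≤ (∑ j ∈ Finset.univ.filter
        (fun j : Fin k => s (Sum.inr j) + p₂ j = d₂ j), w₂ j)) ↔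
    (∃ (S₁ : Finset (Fin n)) (S₂ : Finset (Fin k)),
      ((↑(S₁.image Sum.inl ∪ S₂.image Sum.inr) : Set (Fin n ⊕ Fin k)).PairwiseDisjoint
        (Sum.elim (fun i => Set.Ioc (d₁ i - p₁ i) (d₁ i))
          (fun j => Set.Ioc (d₂ j - p₂ j) (d₂ j)))) ∧
      A₁ ≤ (∑ j ∈ S₁, w₁ j) ∧ A₂ ≤ (∑ j ∈ S₂, w₂ j)) := by
  constructor
  · rintro ⟨s, hs, h1, h2⟩
    refine ⟨Finset.univ.filter (fun i : Fin n => s (Sum.inl i) + p₁ i = d₁ i),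
      Finset.univ.filter (fun j : Fin k => s (Sum.inr j) + p₂ j = d₂ j), ?_, h1, h2⟩
    intro x hx y hy hxy
    -- rewrite each interval as the schedule interval
    have key : ∀ z ∈ (↑((Finset.univ.filter
        (fun i : Fin n => s (Sum.inl i) + p₁ i = d₁ i)).image Sum.inl ∪
        (Finset.univ.filter (fun j : Fin k => s (Sum.inr j) + p₂ j = d₂ j)).image Sum.inr) :
        Set (Fin n ⊕ Fin k)),
        (Sum.elim (fun i => Set.Ioc (d₁ i - p₁ i) (d₁ i))
          (fun j => Set.Ioc (d₂ j - p₂ j) (d₂ j))) z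
        = Set.Ioc (s z) (s z + Sum.elim p₁ p₂ z) := by
      rintro (i | j) hz
      · simp only [Finset.coe_union, Finset.coe_image, Set.mem_union, Set.mem_image] at hz
        have hjit : s (Sum.inl i) + p₁ i = d₁ i := by
          rcases hz with ⟨a, ha, hae⟩ | ⟨a, ha, hae⟩
          · cases Sum.inl.inj hae; simpa using ha
          · exact absurd hae (by simp)
        simp only [Sum.elim_inl]
        rw [← hjit, Nat.add_sub_cancel]
      · simp only [Finset.coe_union, Finset.coe_image, Set.mem_union, Set.mem_image] at hz
        have hjit : s (Sum.inr j) + p₂ j = d₂ j := by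
          rcases hz with ⟨a, ha, hae⟩ | ⟨a, ha, hae⟩
          · exact absurd hae (by simp)
          · cases Sum.inr.inj hae; simpa using ha
        simp only [Sum.elim_inr]
        rw [← hjit, Nat.add_sub_cancel]
    rw [Function.onFun, key x hx, key y hy]
    exact hs x y hxy
  · rintro ⟨S₁, S₂, hdisj, h1, h2⟩
    set S : Finset (Fin n ⊕ Fin k) := S₁.image Sum.inl ∪ S₂.image Sum.inr with hS
    have hpd : ∀ i : Fin n ⊕ Fin k, Sum.elim p₁ p₂ i ≤ Sum.elim d₁ d₂ i := by
      rintro (i | j) <;> simp [hd₁, hd₂]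
    obtain ⟨s, hsched, hjit⟩ := sched_aux (Sum.elim p₁ p₂) (Sum.elim d₁ d₂)
      (Sum.elim (fun i : Fin n => (i : ℕ)) (fun j : Fin k => n + (j : ℕ)))
      (by
        rintro (a | a) (b | b) h <;> simp only [Sum.elim_inl, Sum.elim_inr] at h
        · exact congrArg Sum.inl (Fin.ext h)
        · exact absurd h (by omega)
        · exact absurd h (by omega)
        · exact congrArg Sum.inr (Fin.ext (by omega)))
      S hpd
      ((∑ i, d₁ i) + (∑ j, d₂ j)) ((∑ i, p₁ i) + (∑ j, p₂ j))
      (by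
        rintro (i | j) <;> simp only [Sum.elim_inl, Sum.elim_inr]
        · exact le_trans (Finset.single_le_sum (fun _ _ => Nat.zero_le _) (Finset.mem_univ i))
            (Nat.le_add_right _ _)
        · exact le_trans (Finset.single_le_sum (fun _ _ => Nat.zero_le _) (Finset.mem_univ j))
            (Nat.le_add_left _ _))
      (by
        rintro (i | j) <;> simp only [Sum.elim_inl, Sum.elim_inr]
        · exact le_trans (Finset.single_le_sum (fun _ _ => Nat.zero_le _) (Finset.mem_univ i))
            (Nat.le_add_right _ _)
        · exact le_trans (Finset.single_le_sum (fun _ _ => Nat.zero_le _) (Finset.mem_univ j))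
            (Nat.le_add_left _ _))
      (by
        intro x hx y hy hxy
        have := hdisj hx hy hxy
        rw [Function.onFun] at this ⊢
        convert this using 2 <;> rcases x with i | i <;> rcases y with j | j <;> simp)
    refine ⟨s, hsched, ?_, ?_⟩
    · refine le_trans h1 (Finset.sum_le_sum_of_subset ?_)
      intro i hi
      simp only [Finset.mem_filter, Finset.mem_univ, true_and]
      have : Sum.inl i ∈ S := by simp [hS, hi]
      simpa using hjit _ this
    · refine le_trans h2 (Finset.sum_le_sum_of_subset ?_)
      intro j hj
      simp only [Finset.mem_filter, Finset.mem_univ, true_and]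
      have : Sum.inr j ∈ S := by simp [hS, hj]
      simpa using hjit _ this
end
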